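/- arXiv:1901.02870 — 7 statements merged into one kernel-verified Lean document; each statement's English description precedes it below -/
import Mathlib

section
/- Let Γ be an acyclic simple graph on a finite vertex set S, let σ be a graph automorphism of Γ, and let r_1, …, r_a ∈ S be vertices lying in pairwise distinct σ-orbits such that r_j is adjacent to r_{j+1} for every 1 ≤ j ≤ a−1. Then for every i with 3 ≤ i ≤ a, every m ∈ ℤ, every l with 1 ≤ l ≤ i−2 and every j with i ≤ j ≤ a, the vertex σ^m(r_l) is not adjacent to r_j (i.e., the sets {σ^m(r_{i−2}), …, σ^m(r_1)} and {r_a, …, r_i} are disconnected from each other). -/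
namespace Stmt0Aux

open SimpleGraph

/-- A walk along a sequence of pairwise-adjacent vertices. -/
def seqWalk {S : Type*} (Γ : SimpleGraph S) (w : ℕ → S)
    (h : ∀ t, Γ.Adj (w t) (w (t + 1))) (s : ℕ) : (k : ℕ) → Γ.Walk (w s) (w (s + k))
  | 0 => SimpleGraph.Walk.nil
  | (k + 1) => (seqWalk Γ w h s k).concat (h (s + k))

lemma seqWalk_length {S : Type*} (Γ : SimpleGraph S) (w : ℕ → S)
    (h : ∀ t, Γ.Adj (w t) (w (t + 1))) (s : ℕ) : ∀ k, (seqWalk Γ w h s k).length = k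
  | 0 => rfl
  | (k + 1) => by
      rw [seqWalk, SimpleGraph.Walk.length_concat, seqWalk_length Γ w h s k]

lemma seqWalk_support {S : Type*} (Γ : SimpleGraph S) (w : ℕ → S)
    (h : ∀ t, Γ.Adj (w t) (w (t + 1))) (s : ℕ) :
    ∀ k, (seqWalk Γ w h s k).support = (List.range (k + 1)).map (fun i => w (s + i))
  | 0 => by
      show [w s] = List.map (fun i => w (s + i)) (List.range 1)
      rw [show List.range 1 = [0] from rfl]
      rfl
  | (k + 1) => by
      rw [seqWalk, SimpleGraph.Walk.support_concat, seqWalk_support Γ w h s k,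
        List.range_succ (n := k + 1), List.map_append]
      simp

end Stmt0Aux

/-- Let `Γ` be an acyclic simple graph on a finite vertex set `S`,
`σ` a graph automorphism of `Γ`, and `r 1, …, r a` vertices lying in pairwise distinct
`σ`-orbits such that `r j` is adjacent to `r (j+1)` for `1 ≤ j ≤ a-1`.  Then for
`3 ≤ i ≤ a`, any `m : ℤ`, any `1 ≤ l ≤ i-2` and any `i ≤ j ≤ a`, the vertex
`σ^m (r l)` is not adjacent to `r j`. -/
theorem stmt0 {S : Type*} [Fintype S] (Γ : SimpleGraph S) (hacyc : Γ.IsAcyclic)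
    (σ : Equiv.Perm S) (hσ : ∀ x y : S, Γ.Adj (σ x) (σ y) ↔ Γ.Adj x y)
    (a : ℕ) (r : ℕ → S)
    (horb : ∀ j l : ℕ, 1 ≤ j → j ≤ a → 1 ≤ l → l ≤ a → j ≠ l →
      ∀ m : ℤ, (σ ^ m) (r j) ≠ r l)
    (hadj : ∀ j : ℕ, 1 ≤ j → j < a → Γ.Adj (r j) (r (j + 1))) :
    ∀ i : ℕ, 3 ≤ i → i ≤ a → ∀ m : ℤ, ∀ l : ℕ, 1 ≤ l → l ≤ i - 2 →
      ∀ j : ℕ, i ≤ j → j ≤ a → ¬ Γ.Adj ((σ ^ m) (r l)) (r j) := by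
  classical
  intro i hi3 hia m l hl1 hli2 j hij hja hA
  -- basic index arithmetic
  have hlj : l + 2 ≤ j := by omega
  set d : ℕ := j - l with hd
  have hd2 : 2 ≤ d := by omega
  have hld : l + d = j := by omega
  set D : ℕ := d + 1 with hDdef
  have hD : 0 < D := by omega
  -- powers of σ preserve adjacency
  have hpowN : ∀ (n : ℕ) (x y : S), Γ.Adj ((σ ^ n) x) ((σ ^ n) y) ↔ Γ.Adj x y := by
    intro n
    induction n with
    | zero => intro x y; simp
    | succ n ih =>
        intro x y
        have h1 : (σ ^ (n + 1)) x = (σ ^ n) (σ x) := by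
          rw [pow_succ]; rfl
        have h2 : (σ ^ (n + 1)) y = (σ ^ n) (σ y) := by
          rw [pow_succ]; rfl
        rw [h1, h2, ih, hσ]
  have hpow : ∀ (k : ℤ) (x y : S), Γ.Adj ((σ ^ k) x) ((σ ^ k) y) ↔ Γ.Adj x y := by
    intro k x y
    obtain ⟨n, hn | hn⟩ := k.eq_nat_or_neg
    · rw [hn, zpow_natCast]; exact hpowN n x y
    · subst hn
      have hx : (σ ^ n) ((σ ^ (-(n : ℤ))) x) = x := by
        rw [zpow_neg, zpow_natCast]
        exact Equiv.apply_symm_apply _ x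
      have hy : (σ ^ n) ((σ ^ (-(n : ℤ))) y) = y := by
        rw [zpow_neg, zpow_natCast]
        exact Equiv.apply_symm_apply _ y
      conv_rhs => rw [← hx, ← hy]
      exact (hpowN n _ _).symm
  -- vertices in distinct orbits stay distinct under any powers
  have horbZ : ∀ (k k' : ℤ) (s s' : ℕ), 1 ≤ s → s ≤ a → 1 ≤ s' → s' ≤ a → s ≠ s' →
      (σ ^ k) (r s) ≠ (σ ^ k') (r s') := by
    intro k k' s s' h1 h2 h3 h4 hne heq
    apply horb s s' h1 h2 h3 h4 hne (k - k')
    have := congrArg (σ ^ (-k')) heq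
    rwa [← Equiv.Perm.mul_apply, ← Equiv.Perm.mul_apply, ← zpow_add, ← zpow_add,
      neg_add_cancel, zpow_zero, Equiv.Perm.one_apply, add_comm, ← sub_eq_add_neg] at this
  -- the periodic walk
  set w : ℕ → S := fun t => (σ ^ (m * ((t / D : ℕ) : ℤ))) (r (l + t % D)) with hwdef
  have hidx : ∀ t : ℕ, 1 ≤ l + t % D ∧ l + t % D ≤ a := by
    intro t
    have := Nat.mod_lt t hD
    omega
  have hstep : ∀ t, Γ.Adj (w t) (w (t + 1)) := by
    intro t
    have hmlt : t % D < D := Nat.mod_lt t hD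
    have h0 : D * (t / D) + t % D = t := Nat.div_add_mod t D
    by_cases hc : t % D = d
    · -- end of a block: from σ^{mq}(r j) to σ^{m(q+1)}(r l)
      have ht1 : t + 1 = D * (t / D + 1) := by
        rw [Nat.mul_add, Nat.mul_one]
        omega
      have hdiv : (t + 1) / D = t / D + 1 := by
        rw [ht1, Nat.mul_div_cancel_left _ hD]
      have hmod : (t + 1) % D = 0 := by
        rw [ht1, Nat.mul_mod_right]
      have hwt : w t = (σ ^ (m * ((t / D : ℕ) : ℤ))) (r j) := by
        rw [hwdef]; simp only []
        rw [hc, hld]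
      have hwt1 : w (t + 1) = (σ ^ (m * ((t / D : ℕ) : ℤ))) ((σ ^ m) (r l)) := by
        rw [hwdef]; simp only []
        rw [hdiv, hmod, Nat.add_zero, ← Equiv.Perm.mul_apply, ← zpow_add]
        congr 2
        push_cast
        ring
      rw [hwt, hwt1, hpow]
      exact hA.symm
    · -- inside a block
      have hlt : t % D + 1 < D := by omega
      have ht1 : t + 1 = (t % D + 1) + D * (t / D) := by omega
      have hdiv : (t + 1) / D = t / D := by
        rw [ht1, Nat.add_mul_div_left _ _ hD, Nat.div_eq_of_lt hlt, Nat.zero_add]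
      have hmod : (t + 1) % D = t % D + 1 := by
        rw [ht1, Nat.add_mul_mod_self_left, Nat.mod_eq_of_lt hlt]
      have hwt1 : w (t + 1) = (σ ^ (m * ((t / D : ℕ) : ℤ))) (r ((l + t % D) + 1)) := by
        rw [hwdef]; simp only []
        rw [hdiv, hmod, ← Nat.add_assoc]
      rw [hwt1, hwdef]; simp only []
      rw [hpow]
      refine hadj (l + t % D) (by omega) (by omega)
  -- equal values force equal residues
  have hres : ∀ t t' : ℕ, w t = w t' → t % D = t' % D := by
    intro t t' heq
    by_contra hne
    exact horbZ (m * ((t / D : ℕ) : ℤ)) (m * ((t' / D : ℕ) : ℤ)) (l + t % D) (l + t' % D)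
      (hidx t).1 (hidx t).2 (hidx t').1 (hidx t').2 (by omega) heq
  -- periodicity gives a repetition
  set N : ℕ := orderOf σ with hNdef
  have hN : 0 < N := orderOf_pos σ
  have hone : σ ^ (m * (N : ℤ)) = 1 := by
    rw [mul_comm, zpow_mul, zpow_natCast, pow_orderOf_eq_one, one_zpow]
  have hper : w (N * D) = w 0 := by
    rw [hwdef]; simp only []
    rw [Nat.mul_div_cancel _ hD, Nat.mul_mod_left, Nat.zero_div, Nat.zero_mod,
      hone, Nat.cast_zero, mul_zero, zpow_zero]
  -- minimal repetition
  set P : ℕ → Prop := fun t' => ∃ t, t < t' ∧ w t = w t' with hPdef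
  have hPex : P (N * D) := ⟨0, by positivity, hper.symm⟩
  set t2 : ℕ := Nat.find ⟨N * D, hPex⟩ with ht2def
  obtain ⟨t1, ht12, heq⟩ : P t2 := Nat.find_spec ⟨N * D, hPex⟩
  have hmin : ∀ s, s < t2 → ¬ P s := fun s hs => Nat.find_min ⟨N * D, hPex⟩ hs
  have hdist : ∀ s s', t1 < s → s < s' → s' ≤ t2 → w s ≠ w s' := by
    intro s s' h1 h2 h3 he
    rcases lt_or_eq_of_le h3 with h | h
    · exact hmin s' h ⟨s, h2, he⟩
    · subst h
      exact hmin s h2 ⟨t1, h1, heq.trans he.symm⟩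
  -- the gap is a positive multiple of D, hence ≥ 3
  have hdvd : D ∣ t2 - t1 := (Nat.modEq_iff_dvd' ht12.le).mp (hres t1 t2 heq)
  have hgap : 3 ≤ t2 - t1 := le_trans (by omega) (Nat.le_of_dvd (by omega) hdvd)
  -- two distinct paths from w (t1+1) to w t1
  set K : ℕ := t2 - t1 - 1 with hKdef
  have hK2 : 2 ≤ K := by omega
  have hKeq : t1 + 1 + K = t2 := by omega
  have hend : w (t1 + 1 + K) = w t1 := by rw [hKeq]; exact heq.symm
  set p2 : Γ.Walk (w (t1 + 1)) (w t1) :=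
    (Stmt0Aux.seqWalk Γ w hstep (t1 + 1) K).copy rfl hend with hp2def
  have hp2len : p2.length = K := by
    rw [hp2def, SimpleGraph.Walk.length_copy, Stmt0Aux.seqWalk_length]
  have hp2path : p2.IsPath := by
    rw [SimpleGraph.Walk.isPath_def, hp2def, SimpleGraph.Walk.support_copy,
      Stmt0Aux.seqWalk_support]
    refine List.Nodup.map_on ?_ List.nodup_range
    intro x hx y hy hxy
    rw [List.mem_range] at hx hy
    by_contra hne
    rcases Nat.lt_or_ge x y with h | h
    · exact hdist (t1 + 1 + x) (t1 + 1 + y) (by omega) (by omega) (by omega) hxy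
    · have h' : y < x := by omega
      exact hdist (t1 + 1 + y) (t1 + 1 + x) (by omega) (by omega) (by omega) hxy.symm
  have hadj10 : Γ.Adj (w (t1 + 1)) (w t1) := (hstep t1).symm
  have huniq := SimpleGraph.isAcyclic_iff_path_unique.mp hacyc
    (SimpleGraph.Path.singleton hadj10) ⟨p2, hp2path⟩
  have hlen := congrArg (fun p : Γ.Path (w (t1 + 1)) (w t1) => p.1.length) huniq
  simp only [SimpleGraph.Path.singleton] at hlen
  rw [SimpleGraph.Walk.length_cons, SimpleGraph.Walk.length_nil] at hlen
  rw [hp2len] at hlen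
  omega
end

section
/- Let Γ be an acyclic simple graph on a finite vertex set S, let σ be a graph automorphism of Γ, and let r_1, …, r_a ∈ S be vertices such that r_j is adjacent to r_{j+1} for 1 ≤ j ≤ a−1 and such that every σ-orbit in S contains exactly one of r_1, …, r_a. For 1 ≤ i ≤ a+1 define Σ_i^♭ to be the union of the σ-orbits of r_i, …, r_a, define Σ_i to be the σ-orbit of r_{i−1} (and Σ_1 := ∅), and define Σ_i^♯ := S − (Σ_i^♭ ∪ Σ_i). Then S is the disjoint union of Σ_i^♭, Σ_i and Σ_i^♯; each of these three sets is stable under σ; and no vertex of Σ_i^♭ is adjacent to a vertex of Σ_i^♯. -/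
lemma stmt1_aux {S : Type*} [Fintype S] (Γ : SimpleGraph S) (hacyc : Γ.IsAcyclic)
    (σ : Equiv.Perm S)
    (hAdjZ : ∀ (m : ℤ) (x y : S), Γ.Adj ((σ ^ m) x) ((σ ^ m) y) ↔ Γ.Adj x y)
    (a : ℕ) (r : ℕ → S)
    (hadj : ∀ j : ℕ, 1 ≤ j → j < a → Γ.Adj (r j) (r (j + 1)))
    (uniq : ∀ j k : ℕ, 1 ≤ j → j ≤ a → 1 ≤ k → k ≤ a →
      ∀ m n : ℤ, (σ ^ m) (r j) = (σ ^ n) (r k) → j = k)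
    (j k : ℕ) (hj1 : 1 ≤ j) (hk : k ≤ a) (hjk : j + 2 ≤ k)
    (p : ℤ) (hadj0 : Γ.Adj (r j) ((σ ^ p) (r k))) : False := by
  set π : Equiv.Perm S := σ ^ p with hπ
  have hpow : ∀ (t : ℕ) (x : S), (π ^ t) x = (σ ^ (p * t)) x := by
    intro t x
    rw [hπ, ← zpow_natCast (σ ^ p) t, ← zpow_mul]
  -- existence of a positive "return time"
  have hex : ∃ n : ℕ, 0 < n ∧ (π ^ n) (r j) = r j ∧ (π ^ n) (r k) = r k := by
    refine ⟨orderOf π, orderOf_pos π, ?_, ?_⟩ <;>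
      rw [pow_orderOf_eq_one] <;> rfl
  classical
  set q : ℕ := Nat.find hex with hqdef
  obtain ⟨hq0, hqj, hqk⟩ := Nat.find_spec hex
  have hqmin : ∀ t : ℕ, 0 < t → t < q → ¬((π ^ t) (r j) = r j ∧ (π ^ t) (r k) = r k) := by
    intro t ht0 htq h
    exact Nat.find_min hex htq ⟨ht0, h⟩
  set e : Sym2 S := s(r j, π (r k)) with he
  set G' : SimpleGraph S := Γ.deleteEdges {e} with hG'
  have hbj : 1 ≤ j ∧ j ≤ a := ⟨hj1, by omega⟩
  have hbk : 1 ≤ k ∧ k ≤ a := ⟨by omega, hk⟩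
  -- path edges are never the deleted edge
  have pathSafe : ∀ (t : ℕ) (l : ℕ), j ≤ l → l + 1 ≤ k →
      s((π ^ t) (r l), (π ^ t) (r (l + 1))) ≠ e := by
    intro t l hl1 hl2 hcon
    rw [he, Sym2.eq_iff] at hcon
    have hbl : 1 ≤ l ∧ l ≤ a := ⟨by omega, by omega⟩
    have hbl1 : 1 ≤ l + 1 ∧ l + 1 ≤ a := ⟨by omega, by omega⟩
    rcases hcon with ⟨h1, h2⟩ | ⟨h1, h2⟩
    · have e1 : (σ ^ (p * t)) (r l) = (σ ^ (0 : ℤ)) (r j) := by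
        rw [← hpow, h1]; rfl
      have e2 : (σ ^ (p * t)) (r (l + 1)) = (σ ^ p) (r k) := by
        rw [← hpow, h2]
      have := uniq l j hbl.1 hbl.2 hbj.1 hbj.2 _ _ e1
      have := uniq (l + 1) k hbl1.1 hbl1.2 hbk.1 hbk.2 _ _ e2
      omega
    · have e1 : (σ ^ (p * t)) (r l) = (σ ^ p) (r k) := by
        rw [← hpow, h1]
      have := uniq l k hbl.1 hbl.2 hbk.1 hbk.2 _ _ e1
      omega
  -- jump edges are never the deleted edge (for 1 ≤ t < q)
  have jumpSafe : ∀ t : ℕ, 1 ≤ t → t < q →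
      s((π ^ t) (r j), (π ^ (t + 1)) (r k)) ≠ e := by
    intro t ht1 htq hcon
    rw [he, Sym2.eq_iff] at hcon
    rcases hcon with ⟨h1, h2⟩ | ⟨h1, h2⟩
    · have h2' : (π ^ t) (r k) = r k := by
        have : π ((π ^ t) (r k)) = π (r k) := by
          rw [← Equiv.Perm.mul_apply, ← pow_succ']
          exact h2
        exact π.injective this
      exact hqmin t (by omega) htq ⟨h1, h2'⟩
    · have e1 : (σ ^ (p * t)) (r j) = (σ ^ p) (r k) := by
        rw [← hpow, h1]
      have := uniq j k hbj.1 hbj.2 hbk.1 hbk.2 _ _ e1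
      omega
  -- adjacency of transported path edges
  have hA1 : ∀ (t : ℕ) (l : ℕ), 1 ≤ l → l < a →
      Γ.Adj ((π ^ t) (r l)) ((π ^ t) (r (l + 1))) := by
    intro t l h1 h2
    rw [hpow, hpow, hAdjZ]
    exact hadj l h1 h2
  have hA2 : ∀ t : ℕ, Γ.Adj ((π ^ t) (r j)) ((π ^ (t + 1)) (r k)) := by
    intro t
    have : (π ^ (t + 1)) (r k) = (π ^ t) (π (r k)) := by
      rw [pow_succ, Equiv.Perm.mul_apply]
    rw [this, hpow, hpow, hAdjZ]
    exact hadj0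
  -- transported path gives reachability in G'
  have hPath : ∀ t : ℕ, G'.Reachable ((π ^ t) (r k)) ((π ^ t) (r j)) := by
    intro t
    have key : ∀ c : ℕ, j + c ≤ k → G'.Reachable ((π ^ t) (r (j + c))) ((π ^ t) (r j)) := by
      intro c
      induction c with
      | zero => intro _; exact SimpleGraph.Reachable.refl _
      | succ c ih =>
        intro hc
        have hadj' : G'.Adj ((π ^ t) (r (j + c))) ((π ^ t) (r (j + c + 1))) := by
          rw [hG', SimpleGraph.deleteEdges_adj]
          refine ⟨hA1 t (j + c) (by omega) (by omega), ?_⟩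
          simp only [Set.mem_singleton_iff]
          exact pathSafe t (j + c) (by omega) (by omega)
        have : j + (c + 1) = j + c + 1 := by omega
        rw [this]
        exact (hadj'.symm.reachable).trans (ih (by omega))
    have := key (k - j) (by omega)
    rwa [show j + (k - j) = k by omega] at this
  -- main downward chain
  have main : ∀ d t : ℕ, t + d = q → 1 ≤ t → G'.Reachable ((π ^ t) (r k)) (r j) := by
    intro d
    induction d with
    | zero =>
      intro t ht _
      have hqj' : (π ^ q) (r j) = r j := hqj
      rw [show t = q from by omega]
      have h2 := hPath q
      rwa [hqj'] at h2
    | succ d ih =>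
      intro t ht h1
      have hjump : G'.Adj ((π ^ t) (r j)) ((π ^ (t + 1)) (r k)) := by
        rw [hG', SimpleGraph.deleteEdges_adj]
        exact ⟨hA2 t, by
          simp only [Set.mem_singleton_iff]
          exact jumpSafe t h1 (by omega)⟩
      exact (hPath t).trans (hjump.reachable.trans (ih (t + 1) (by omega) (by omega)))
  have hreach : G'.Reachable (r j) (π (r k)) := by
    have := main (q - 1) 1 (by omega) le_rfl
    rw [pow_one] at this
    exact this.symm
  have hbridge := (SimpleGraph.isAcyclic_iff_forall_adj_isBridge.mp hacyc) hadj0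
  rw [SimpleGraph.isBridge_iff] at hbridge
  exact hbridge hreach

/-- Let `Γ` be an acyclic simple graph on a finite vertex set `S`,
`σ` a graph automorphism, and `r 1, …, r a` a path in `Γ` forming a complete set
of representatives of the `σ`-orbits in `S`.  For `1 ≤ i ≤ a+1` let `Sb` be the
union of the `σ`-orbits of `r i, …, r a`, let `Sm` be the `σ`-orbit of `r (i-1)`
(empty if `i = 1`), and `Ss := S \ (Sb ∪ Sm)`.  Then `S` is the disjoint union of
`Sb`, `Sm`, `Ss`; each of the three sets is `σ`-stable; and no vertex of `Sb` is
adjacent to a vertex of `Ss`. -/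
theorem stmt1 {S : Type*} [Fintype S] (Γ : SimpleGraph S) (hacyc : Γ.IsAcyclic)
    (σ : Equiv.Perm S) (hσ : ∀ x y : S, Γ.Adj (σ x) (σ y) ↔ Γ.Adj x y)
    (a : ℕ) (r : ℕ → S)
    (hadj : ∀ j : ℕ, 1 ≤ j → j < a → Γ.Adj (r j) (r (j + 1)))
    (horb : ∀ s : S, ∃! j : ℕ, 1 ≤ j ∧ j ≤ a ∧ ∃ m : ℤ, (σ ^ m) (r j) = s)
    (i : ℕ) (hi1 : 1 ≤ i) (hi2 : i ≤ a + 1)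
    (Sb Sm Ss : Set S)
    (hSb : Sb = {s | ∃ j : ℕ, i ≤ j ∧ j ≤ a ∧ ∃ m : ℤ, (σ ^ m) (r j) = s})
    (hSm : Sm = {s | 2 ≤ i ∧ ∃ m : ℤ, (σ ^ m) (r (i - 1)) = s})
    (hSs : Ss = Set.univ \ (Sb ∪ Sm)) :
    (Set.univ = Sb ∪ Sm ∪ Ss ∧ Disjoint Sb Sm ∧ Disjoint Sb Ss ∧ Disjoint Sm Ss) ∧
    (σ '' Sb = Sb ∧ σ '' Sm = Sm ∧ σ '' Ss = Ss) ∧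
    (∀ x ∈ Sb, ∀ y ∈ Ss, ¬ Γ.Adj x y) := by
  -- adjacency is preserved by all integer powers of σ
  have hσ' : ∀ x y : S, Γ.Adj (σ⁻¹ x) (σ⁻¹ y) ↔ Γ.Adj x y := by
    intro x y
    rw [← hσ (σ⁻¹ x) (σ⁻¹ y)]
    simp
  have hN : ∀ (n : ℕ) (x y : S), Γ.Adj ((σ ^ n) x) ((σ ^ n) y) ↔ Γ.Adj x y := by
    intro n
    induction n with
    | zero => intro x y; simp
    | succ n ih =>
      intro x y
      rw [pow_succ, Equiv.Perm.mul_apply, Equiv.Perm.mul_apply, ih (σ x) (σ y)]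
      exact hσ x y
  have hNi : ∀ (n : ℕ) (x y : S), Γ.Adj ((σ⁻¹ ^ n) x) ((σ⁻¹ ^ n) y) ↔ Γ.Adj x y := by
    intro n
    induction n with
    | zero => intro x y; simp
    | succ n ih =>
      intro x y
      rw [pow_succ, Equiv.Perm.mul_apply, Equiv.Perm.mul_apply, ih (σ⁻¹ x) (σ⁻¹ y)]
      exact hσ' x y
  have hAdjZ : ∀ (m : ℤ) (x y : S), Γ.Adj ((σ ^ m) x) ((σ ^ m) y) ↔ Γ.Adj x y := by
    intro m x y
    cases m with
    | ofNat n => rw [Int.ofNat_eq_coe, zpow_natCast]; exact hN n x y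
    | negSucc n => rw [zpow_negSucc, ← inv_pow]; exact hNi (n + 1) x y
  -- uniqueness of orbit representatives
  have uniq : ∀ j k : ℕ, 1 ≤ j → j ≤ a → 1 ≤ k → k ≤ a →
      ∀ m n : ℤ, (σ ^ m) (r j) = (σ ^ n) (r k) → j = k := by
    intro j k hj1 hj2 hk1 hk2 m n hmn
    obtain ⟨l, _, hul⟩ := horb ((σ ^ n) (r k))
    have h1 := hul j ⟨hj1, hj2, m, hmn⟩
    have h2 := hul k ⟨hk1, hk2, n, rfl⟩
    omega
  -- composition helper
  have comp : ∀ (m n : ℤ) (x : S), (σ ^ m) ((σ ^ n) x) = (σ ^ (m + n)) x := by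
    intro m n x
    rw [zpow_add, Equiv.Perm.mul_apply]
  -- closure properties
  have clB1 : ∀ s ∈ Sb, σ s ∈ Sb := by
    rw [hSb]; rintro s ⟨j, h1, h2, m, hm⟩
    exact ⟨j, h1, h2, 1 + m, by rw [← hm, ← comp, zpow_one]⟩
  have clB2 : ∀ s ∈ Sb, σ⁻¹ s ∈ Sb := by
    rw [hSb]; rintro s ⟨j, h1, h2, m, hm⟩
    exact ⟨j, h1, h2, -1 + m, by rw [← hm, ← comp, zpow_neg_one]⟩
  have clM1 : ∀ s ∈ Sm, σ s ∈ Sm := by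
    rw [hSm]; rintro s ⟨h2i, m, hm⟩
    exact ⟨h2i, 1 + m, by rw [← hm, ← comp, zpow_one]⟩
  have clM2 : ∀ s ∈ Sm, σ⁻¹ s ∈ Sm := by
    rw [hSm]; rintro s ⟨h2i, m, hm⟩
    exact ⟨h2i, -1 + m, by rw [← hm, ← comp, zpow_neg_one]⟩
  have stab : ∀ T : Set S, (∀ s ∈ T, σ s ∈ T) → (∀ s ∈ T, σ⁻¹ s ∈ T) → σ '' T = T := by
    intro T h1 h2
    ext x
    constructor
    · rintro ⟨y, hy, rfl⟩; exact h1 y hy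
    · intro hx; exact ⟨σ⁻¹ x, h2 x hx, by simp⟩
  refine ⟨⟨?_, ?_, ?_, ?_⟩, ⟨stab _ clB1 clB2, stab _ clM1 clM2, ?_⟩, ?_⟩
  · rw [hSs]
    ext x
    simp only [Set.mem_univ, Set.mem_union, Set.mem_diff, true_iff]
    tauto
  · rw [Set.disjoint_left, hSb, hSm]
    rintro s ⟨j, hij, hja, m, hm⟩ ⟨h2i, n, hn⟩
    have := uniq j (i - 1) (by omega) hja (by omega) (by omega) m n (by rw [hm, hn])
    omega
  · rw [Set.disjoint_left, hSs]
    rintro s hs ⟨-, hns⟩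
    exact hns (Or.inl hs)
  · rw [Set.disjoint_left, hSs]
    rintro s hs ⟨-, hns⟩
    exact hns (Or.inr hs)
  · -- σ '' Ss = Ss
    apply stab
    · intro s hs
      rw [hSs] at hs ⊢
      obtain ⟨-, hns⟩ := hs
      refine ⟨trivial, ?_⟩
      rintro (h | h)
      · have := clB2 _ h; simp only [← Equiv.Perm.mul_apply, inv_mul_cancel, Equiv.Perm.one_apply] at this
        exact hns (Or.inl this)
      · have := clM2 _ h; simp only [← Equiv.Perm.mul_apply, inv_mul_cancel, Equiv.Perm.one_apply] at this
        exact hns (Or.inr this)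
    · intro s hs
      rw [hSs] at hs ⊢
      obtain ⟨-, hns⟩ := hs
      refine ⟨trivial, ?_⟩
      rintro (h | h)
      · have := clB1 _ h; simp only [← Equiv.Perm.mul_apply, mul_inv_cancel, Equiv.Perm.one_apply] at this
        exact hns (Or.inl this)
      · have := clM1 _ h; simp only [← Equiv.Perm.mul_apply, mul_inv_cancel, Equiv.Perm.one_apply] at this
        exact hns (Or.inr this)
  · -- no adjacency between Sb and Ss
    intro x hx y hys hA
    rw [hSb] at hx
    rw [hSs] at hys
    obtain ⟨k, hik, hka, m, hm⟩ := hx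
    obtain ⟨-, hy⟩ := hys
    obtain ⟨j, ⟨hj1, hja, n, hn⟩, -⟩ := horb y
    have hnotb : ¬ (i ≤ j) := by
      intro h
      exact hy (Or.inl (by rw [hSb]; exact ⟨j, h, hja, n, hn⟩))
    have h2i : 2 ≤ i := by omega
    have hne : j ≠ i - 1 := by
      intro h
      exact hy (Or.inr (by rw [hSm]; exact ⟨h2i, n, by rw [← h]; exact hn⟩))
    have hjk : j + 2 ≤ k := by omega
    have hA' : Γ.Adj ((σ ^ (-n : ℤ)) x) ((σ ^ (-n : ℤ)) y) := (hAdjZ (-n) x y).mpr hA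
    rw [← hm, ← hn, comp, comp] at hA'
    have hA'' : Γ.Adj (r j) ((σ ^ (-n + m)) (r k)) := by
      have h0 : (-n : ℤ) + n = 0 := by ring
      rw [h0, zpow_zero, Equiv.Perm.one_apply] at hA'
      exact hA'.symm
    exact stmt1_aux Γ hacyc σ hAdjZ a r hadj uniq j k hj1 hka hjk (-n + m) hA''
end

section
/- Let k be an algebraically closed field of characteristic different from 2, let V be a finite-dimensional k-vector space equipped with a nondegenerate symmetric bilinear form B, and let g be a linear automorphism of V preserving B (B(gx, gy) = B(x, y) for all x, y). Assume that for every c ∈ k the eigenspace ker(g − c·id) has dimension at most one. Then for j = 1 and for j = −1, the dimension of the generalized eigenspace V(g, j) := ker((g − j·id)^{dim V}) is either zero or odd. -/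
/-- Auxiliary: the kernel of `N ^ m` has dimension at most `m` times the dimension of
the kernel of `N`. -/
private lemma aux_finrank_ker_pow_le {k W : Type*} [Field k] [AddCommGroup W] [Module k W]
    [FiniteDimensional k W] (N : Module.End k W) (m : ℕ) :
    Module.finrank k (LinearMap.ker (N ^ m)) ≤ m * Module.finrank k (LinearMap.ker N) := by
  induction m with
  | zero =>
    rw [pow_zero]
    simp [Module.End.one_eq_id]
    exact finrank_bot k W
  | succ m ih =>
    have hmap : ∀ x ∈ LinearMap.ker (N ^ (m + 1)), N x ∈ LinearMap.ker (N ^ m) := by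
      intro x hx
      rw [LinearMap.mem_ker] at hx ⊢
      rw [← Module.End.mul_apply, ← pow_succ, hx]
    set φ := N.restrict hmap with hφ
    have h1 := LinearMap.finrank_range_add_finrank_ker φ
    have h2 : Module.finrank k (LinearMap.range φ) ≤ m * Module.finrank k (LinearMap.ker N) :=
      le_trans (Submodule.finrank_le _) ih
    have h3 : Module.finrank k (LinearMap.ker φ) ≤ Module.finrank k (LinearMap.ker N) := by
      have hker : ∀ x : LinearMap.ker φ, ((x : LinearMap.ker (N ^ (m + 1))) : W)
          ∈ LinearMap.ker N := by
        intro x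
        have hx : φ (x : LinearMap.ker (N ^ (m + 1))) = 0 := LinearMap.mem_ker.mp x.2
        have hx' := congrArg Subtype.val hx
        rw [LinearMap.mem_ker]
        exact hx'
      let ψ : LinearMap.ker φ →ₗ[k] LinearMap.ker N :=
        LinearMap.codRestrict _ ((LinearMap.ker (N ^ (m + 1))).subtype.comp
          (LinearMap.ker φ).subtype) hker
      have hinj : Function.Injective ψ := by
        intro a b hab
        have h := congrArg Subtype.val hab
        exact Subtype.ext (Subtype.ext h)
      exact LinearMap.finrank_le_finrank_of_injective hinj
    calc Module.finrank k (LinearMap.ker (N ^ (m + 1)))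
        = Module.finrank k (LinearMap.range φ) + Module.finrank k (LinearMap.ker φ) := h1.symm
      _ ≤ m * Module.finrank k (LinearMap.ker N) + Module.finrank k (LinearMap.ker N) :=
          Nat.add_le_add h2 h3
      _ = (m + 1) * Module.finrank k (LinearMap.ker N) := by ring

/-- Let `k` be an algebraically closed field of characteristic ≠ 2,
`V` a finite-dimensional `k`-vector space with a nondegenerate symmetric bilinear
form `B`, and `g` a linear automorphism of `V` preserving `B` all of whose
eigenspaces have dimension at most one.  Then for `j = 1` and `j = -1`, the
dimension of the generalized eigenspace `ker ((g - j·id)^(dim V))` is zero or odd. -/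
theorem stmt3 {k V : Type*} [Field k] [IsAlgClosed k] (h2 : (2 : k) ≠ 0)
    [AddCommGroup V] [Module k V] [FiniteDimensional k V]
    (B : LinearMap.BilinForm k V) (hsymm : ∀ x y : V, B x y = B y x)
    (hnd : B.Nondegenerate)
    (g : V ≃ₗ[k] V) (hg : ∀ x y : V, B (g x) (g y) = B x y)
    (hreg : ∀ c : k, Module.finrank k
      (LinearMap.ker ((g : Module.End k V) - c • (1 : Module.End k V))) ≤ 1) :
    ∀ j : k, j = 1 ∨ j = -1 →
      Module.finrank k (LinearMap.ker
          (((g : Module.End k V) - j • (1 : Module.End k V)) ^ Module.finrank k V)) = 0 ∨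
      Odd (Module.finrank k (LinearMap.ker
          (((g : Module.End k V) - j • (1 : Module.End k V)) ^ Module.finrank k V))) := by
  intro j hj
  have hj2 : j * j = 1 := by rcases hj with h | h <;> subst h <;> ring
  classical
  set f : Module.End k V := (g : Module.End k V) - j • (1 : Module.End k V) with hf
  set d := Module.finrank k V with hd
  set W : Submodule k V := LinearMap.ker (f ^ d) with hWdef
  set gs : Module.End k V := (g.symm : Module.End k V) with hgs
  -- basic identities
  have hgsg : gs * (g : Module.End k V) = 1 := by
    ext x; simp [hgs, Module.End.mul_apply]
  have hggs : (g : Module.End k V) * gs = 1 := by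
    ext x; simp [hgs, Module.End.mul_apply]
  set f' : Module.End k V := gs - j • (1 : Module.End k V) with hf'def
  -- one-step adjoint identity
  have hstep : ∀ x y : V, B x (f y) = B (f' x) y := by
    intro x y
    have h1 : B (gs x) y = B x ((g : Module.End k V) y) := by
      have h := hg (g.symm x) y
      rw [LinearEquiv.apply_symm_apply] at h
      exact h.symm
    have lhs' : B x (f y) = B x ((g : Module.End k V) y) - j * B x y := by
      rw [hf]
      simp only [LinearMap.sub_apply, LinearMap.smul_apply, Module.End.one_apply, map_sub,
        map_smul, smul_eq_mul]
    have rhs' : B (f' x) y = B (gs x) y - j * B x y := by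
      rw [hf'def]
      simp only [LinearMap.sub_apply, LinearMap.smul_apply, Module.End.one_apply, map_sub,
        map_smul, LinearMap.sub_apply, LinearMap.smul_apply, smul_eq_mul]
    rw [lhs', rhs', h1]
  have hgsf : gs * f = 1 - j • gs := by
    rw [hf, mul_sub, hgsg, mul_smul_comm, mul_one]
  have hcomm : gs * f = f * gs := by
    have hh : f * gs = 1 - j • gs := by
      rw [hf, sub_mul, hggs, smul_mul_assoc, one_mul]
    rw [hgsf, hh]
  have hf'eq : f' = (-j) • (gs * f) := by
    rw [hf'def, hgsf, smul_sub, smul_smul, neg_mul, hj2, neg_smul, neg_smul, one_smul,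
      sub_neg_eq_add]
    abel
  have hf'pow : ∀ m : ℕ, f' ^ m = ((-j) ^ m) • (gs ^ m * f ^ m) := by
    intro m
    have hc' : Commute gs f := hcomm
    rw [hf'eq, smul_pow, hc'.mul_pow m]
  have hstepm : ∀ (m : ℕ) (x y : V), B x ((f ^ m) y) = B ((f' ^ m) x) y := by
    intro m
    induction m with
    | zero => intro x y; simp
    | succ m ih =>
      intro x y
      have h1 : (f ^ (m + 1)) y = (f ^ m) (f y) := by
        rw [pow_succ, Module.End.mul_apply]
      have h2 : (f' ^ (m + 1)) x = f' ((f' ^ m) x) := by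
        rw [pow_succ', Module.End.mul_apply]
      rw [h1, ih x (f y), hstep ((f' ^ m) x) y, h2]
  -- W pairs to zero with the range of f ^ d
  have hWU : ∀ w ∈ W, ∀ u : V, B w ((f ^ d) u) = 0 := by
    intro w hw u
    rw [hstepm d w u]
    have hw0 : (f ^ d) w = 0 := LinearMap.mem_ker.mp hw
    have hz : (f' ^ d) w = 0 := by
      rw [hf'pow]
      simp [Module.End.mul_apply, hw0]
    rw [hz]
    simp
  set U : Submodule k V := LinearMap.range (f ^ d) with hUdef
  have hdisj : W ⊓ U = ⊥ := by
    rw [eq_bot_iff]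
    intro x hx
    obtain ⟨hxW, hxU⟩ := Submodule.mem_inf.mp hx
    obtain ⟨u, rfl⟩ := hxU
    have hxW' : (f ^ (d + d)) u = 0 := by
      have h := LinearMap.mem_ker.mp hxW
      rw [pow_add, Module.End.mul_apply]
      exact h
    have hu : u ∈ LinearMap.ker (f ^ (d + d)) := LinearMap.mem_ker.mpr hxW'
    rw [Module.End.ker_pow_eq_ker_pow_finrank_of_le (Nat.le_add_left d d)] at hu
    have hu0 : (f ^ d) u = 0 := LinearMap.mem_ker.mp hu
    rw [hu0]
    exact Submodule.zero_mem ⊥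
  have hsup : W ⊔ U = ⊤ := by
    apply Submodule.eq_top_of_finrank_eq
    have h1 := Submodule.finrank_sup_add_finrank_inf_eq W U
    rw [hdisj, finrank_bot] at h1
    have hrr := LinearMap.finrank_range_add_finrank_ker (f ^ d)
    have hU' : Module.finrank k U = Module.finrank k (LinearMap.range (f ^ d)) := by rw [hUdef]
    have hW' : Module.finrank k W = Module.finrank k (LinearMap.ker (f ^ d)) := by rw [hWdef]
    have hdd : d = Module.finrank k V := hd
    omega
  -- B is nondegenerate on W
  have hWnd : ∀ w ∈ W, (∀ w' ∈ W, B w w' = 0) → w = 0 := by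
    intro w hw h0
    apply hnd.1
    intro v
    have hv : v ∈ W ⊔ U := by rw [hsup]; trivial
    obtain ⟨a, ha, b, hb, rfl⟩ := Submodule.mem_sup.mp hv
    obtain ⟨u, rfl⟩ := hb
    rw [map_add, h0 a ha, hWU w hw u, add_zero]
  -- restrict f to W
  have hstabW : ∀ x ∈ W, f x ∈ W := by
    intro x hx
    have hx0 : (f ^ d) x = 0 := LinearMap.mem_ker.mp hx
    have : (f ^ d) (f x) = 0 := by
      rw [← Module.End.mul_apply, ← pow_succ, pow_succ', Module.End.mul_apply, hx0, map_zero]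
    exact LinearMap.mem_ker.mpr this
  set N : Module.End k ↥W := f.restrict hstabW with hN
  set n := Module.finrank k ↥W with hn
  by_cases hn0 : n = 0
  · left; exact hn0
  right
  by_contra hodd
  have heven : Even n := Nat.not_odd_iff_even.mp hodd
  have hnpos : 0 < n := Nat.pos_of_ne_zero hn0
  have hNpow : ∀ (m : ℕ) (w : ↥W), (((N ^ m) w : ↥W) : V) = (f ^ m) (w : V) := by
    intro m w
    rw [hN, Module.End.pow_restrict m hstabW]
    rfl
  have hnd' : n ≤ d := Submodule.finrank_le W
  have hNd : N ^ d = 0 := by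
    ext w
    have h1 := hNpow d w
    have hw0 : (f ^ d) (w : V) = 0 := LinearMap.mem_ker.mp w.2
    have h3 : (((N ^ d) w : ↥W) : V) = 0 := h1.trans hw0
    have h4 : ((N ^ d) w : ↥W) = 0 := Submodule.coe_eq_zero.mp h3
    simpa using h4
  have hNn : N ^ n = 0 := by
    have hker := Module.End.ker_pow_eq_ker_pow_finrank_of_le (f := N) (m := d) hnd'
    have hkd : LinearMap.ker (N ^ d) = ⊤ := by rw [hNd]; exact LinearMap.ker_zero
    have : LinearMap.ker (N ^ Module.finrank k ↥W) = ⊤ := by rw [← hker]; exact hkd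
    rw [← LinearMap.ker_eq_top]
    rw [← hn] at this
    exact this
  have hfn : ∀ x : V, x ∈ W → (f ^ n) x = 0 := by
    intro x hx
    have h1 := hNpow n ⟨x, hx⟩
    rw [hNn] at h1
    simpa using h1.symm
  have hkerN : Module.finrank k (LinearMap.ker N) ≤ 1 := by
    have hle : Submodule.map W.subtype (LinearMap.ker N) ≤ LinearMap.ker f := by
      rintro x ⟨w, hw, rfl⟩
      have hw0 : N w = 0 := LinearMap.mem_ker.mp hw
      have hw1 : (N w : V) = f (w : V) := rfl
      rw [hw0] at hw1
      have hfw : f (w : V) = 0 := hw1.symm.trans (ZeroMemClass.coe_zero W)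
      exact LinearMap.mem_ker.mpr hfw
    calc Module.finrank k (LinearMap.ker N)
        = Module.finrank k (Submodule.map W.subtype (LinearMap.ker N)) :=
          (Submodule.finrank_map_subtype_eq W _).symm
      _ ≤ Module.finrank k (LinearMap.ker f) := Submodule.finrank_mono hle
      _ ≤ 1 := hreg j
  set m := n - 1 with hm
  have hmn : m + 1 = n := Nat.succ_pred_eq_of_pos hnpos
  -- N ^ m ≠ 0
  have hNm_ne : N ^ m ≠ 0 := by
    intro hcon
    have h1 : LinearMap.ker (N ^ m) = ⊤ := by rw [hcon]; exact LinearMap.ker_zero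
    have h2 : Module.finrank k (LinearMap.ker (N ^ m)) = n := by
      rw [h1, finrank_top]
    have h3 := aux_finrank_ker_pow_le N m
    rw [h2] at h3
    have h4 : n ≤ m * 1 := le_trans h3 (Nat.mul_le_mul_left m hkerN)
    omega
  obtain ⟨e, he⟩ : ∃ e : ↥W, (N ^ m) e ≠ 0 := by
    by_contra hcon
    push_neg at hcon
    exact hNm_ne (LinearMap.ext fun x => hcon x)
  set z : ↥W := (N ^ m) e with hz
  have hNz : ∀ w : ↥W, N ((N ^ m) w) = 0 := by
    intro w
    rw [← Module.End.mul_apply, ← pow_succ', hmn]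
    rw [hNn]
    rfl
  have hzker : z ∈ LinearMap.ker N := LinearMap.mem_ker.mpr (hNz e)
  have hker_span : LinearMap.ker N = Submodule.span k {z} := by
    symm
    apply Submodule.eq_of_le_of_finrank_le
    · rw [Submodule.span_le, Set.singleton_subset_iff]; exact hzker
    · rw [finrank_span_singleton he]; exact hkerN
  have hcw : ∀ w : ↥W, ∃ c : k, (N ^ m) w = c • z := by
    intro w
    have hmem : (N ^ m) w ∈ LinearMap.ker N := LinearMap.mem_ker.mpr (hNz w)
    rw [hker_span, Submodule.mem_span_singleton] at hmem
    obtain ⟨c, hc'⟩ := hmem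
    exact ⟨c, hc'.symm⟩
  have hmodd : Odd m := Nat.Even.sub_odd hnpos heven odd_one
  -- the key adjoint identity on W
  have hgsk : ∀ x : V, f x = 0 → gs x = j • x := by
    intro x hx
    have h1 : (g : Module.End k V) x = j • x := by
      rw [hf] at hx
      simp only [LinearMap.sub_apply, LinearMap.smul_apply, Module.End.one_apply,
        sub_eq_zero] at hx
      exact hx
    have h2 : gs ((g : Module.End k V) x) = x := by
      rw [← Module.End.mul_apply, hgsg, Module.End.one_apply]
    rw [h1, map_smul] at h2
    have h3 := congrArg (fun y => j • y) h2
    simpa [smul_smul, hj2] using h3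
  have hgspow : ∀ x : V, f x = 0 → ∀ i : ℕ, (gs ^ i) x = (j ^ i) • x := by
    intro x hx i
    induction i with
    | zero => simp
    | succ i ih =>
      rw [pow_succ, Module.End.mul_apply]
      have hgx : gs x = j • x := hgsk x hx
      calc (gs ^ i) (gs x) = (gs ^ i) (j • x) := by rw [hgx]
        _ = j • ((gs ^ i) x) := map_smul _ _ _
        _ = j • ((j ^ i) • x) := by rw [ih]
        _ = (j ^ (i + 1)) • x := by rw [smul_smul, pow_succ']
  have hkey : ∀ x : V, x ∈ W → ∀ y : V, B x ((f ^ m) y) = - B ((f ^ m) x) y := by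
    intro x hx y
    rw [hstepm m x y]
    have hfx : f ((f ^ m) x) = 0 := by
      rw [← Module.End.mul_apply, ← pow_succ', hmn]
      exact hfn x hx
    have h1 : (f' ^ m) x = (-1 : k) • ((f ^ m) x) := by
      rw [hf'pow]
      simp only [LinearMap.smul_apply, Module.End.mul_apply]
      rw [hgspow ((f ^ m) x) hfx m, smul_smul]
      congr 1
      rw [← mul_pow]
      have hjj : -j * j = -1 := by rw [neg_mul, hj2]
      rw [hjj]
      exact hmodd.neg_one_pow
    rw [h1]
    simp
  -- assemble the contradiction
  set E : V := (e : V) with hE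
  have hEW : E ∈ W := e.2
  set Z : V := (f ^ m) E with hZ
  have hzZ : ((z : ↥W) : V) = Z := by rw [hz, hZ]; exact hNpow m e
  have hZ0 : Z ≠ 0 := by
    rw [← hzZ]
    simpa using he
  have hZW : Z ∈ W := by rw [← hzZ]; exact (z : ↥W).2
  have hZE : B Z E = 0 := by
    have h1 := hkey E hEW E
    rw [← hZ] at h1
    have hsy : B E Z = B Z E := hsymm E Z
    rw [hsy] at h1
    have hsum : (2 : k) * B Z E = 0 := by linear_combination h1
    exact (mul_eq_zero.mp hsum).resolve_left h2
  have hZw : ∀ w' : V, w' ∈ W → B Z w' = 0 := by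
    intro w' hw'
    obtain ⟨c, hcc⟩ := hcw ⟨w', hw'⟩
    have hfw : (f ^ m) w' = c • Z := by
      have h1 := hNpow m ⟨w', hw'⟩
      rw [hcc] at h1
      have h5 : ((c • z : ↥W) : V) = c • Z := by rw [Submodule.coe_smul, hzZ]
      rw [h5] at h1
      exact h1.symm
    calc B Z w' = B w' Z := hsymm Z w'
      _ = B w' ((f ^ m) E) := by rw [hZ]
      _ = - B ((f ^ m) w') E := hkey w' hw' E
      _ = - B (c • Z) E := by rw [hfw]
      _ = - (c * B Z E) := by simp
      _ = 0 := by rw [hZE, mul_zero, neg_zero]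
  exact hZ0 (hWnd Z hZW hZw)
end

section
/- Fix an odd prime power q, let k be an algebraic closure of F_q, and let f ∈ F_q[λ] be monic irreducible, self-reciprocal, of even degree d. Call a tuple (λ_1, …, λ_{d/2}) ∈ (k^×)^{d/2} an admissible enumeration for f if the d elements λ_1, …, λ_{d/2}, λ_1^{-1}, …, λ_{d/2}^{-1} are pairwise distinct and are exactly the roots of f in k, and moreover λ_1^q = λ_2, λ_2^q = λ_3, …, λ_{d/2−1}^q = λ_{d/2}, and λ_{d/2}^q = λ_1^{-1}. Then the number of admissible enumerations for f is exactly d; in particular at least one exists. -/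
/-- The reciprocal polynomial `f*(λ) = f(0)⁻¹ · λ^(deg f) · f(1/λ)` of a
polynomial `f` over a field. -/
noncomputable def recip {F : Type*} [Field F] (f : Polynomial F) : Polynomial F :=
  Polynomial.C (f.coeff 0)⁻¹ * f.reverse

/-- An *admissible enumeration* for `f`: a tuple `Λ = (λ_1, …, λ_n)` of nonzero
elements of `k` (here `n = (deg f)/2`) such that the `2n` elements
`λ_1, …, λ_n, λ_1⁻¹, …, λ_n⁻¹` are pairwise distinct and are exactly the roots
of `f` in `k`, and `λ_1^q = λ_2, …, λ_{n-1}^q = λ_n, λ_n^q = λ_1⁻¹`. -/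
def AdmEnum {F k : Type*} [CommRing F] [Field k] [Algebra F k] (q : ℕ)
    (f : Polynomial F) (n : ℕ) (Λ : Fin n → k) : Prop :=
  (∀ i, Λ i ≠ 0) ∧
  Function.Injective (Sum.elim Λ fun i => (Λ i)⁻¹) ∧
  Set.range (Sum.elim Λ fun i => (Λ i)⁻¹) = f.rootSet k ∧
  (∀ i j : Fin n, (j : ℕ) = (i : ℕ) + 1 → Λ i ^ q = Λ j) ∧
  (∀ i j : Fin n, (i : ℕ) = n - 1 → (j : ℕ) = 0 → Λ i ^ q = (Λ j)⁻¹)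

section AuxStmt5
open Polynomial IntermediateField



-- helper: iterate of pow hom
lemma hompow {k : Type*} [Field k] {q : ℕ} {ψ : k →+* k} (hψ : ∀ x, ψ x = x ^ q)
    (s : ℕ) (y : k) : (ψ ^ s) y = y ^ q ^ s := by
  induction s generalizing y with
  | zero => simp
  | succ t ih =>
    rw [pow_succ, RingHom.mul_def, RingHom.comp_apply, hψ, ih, ← pow_mul, ← pow_succ']

-- Fermat iterated in F
lemma fermat_pow {F : Type*} [Field F] [Fintype F] {q : ℕ} (hcard : Fintype.card F = q)
    (s : ℕ) (a : F) : a ^ q ^ s = a := by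
  induction s with
  | zero => simp
  | succ t ih => rw [pow_succ, pow_mul, ih, ← hcard, FiniteField.pow_card]

-- roots stable under x ↦ x^q
lemma root_pow {F k : Type*} [Field F] [Fintype F] [Field k] [Algebra F k]
    {q : ℕ} (hcard : Fintype.card F = q) {ψ : k →+* k} (hψ : ∀ x, ψ x = x ^ q)
    {f : F[X]} {μ : k} (hμ : μ ∈ f.rootSet k) (s : ℕ) : μ ^ q ^ s ∈ f.rootSet k := by
  rw [mem_rootSet] at hμ ⊢
  refine ⟨hμ.1, ?_⟩
  have h : (ψ ^ s).comp (algebraMap F k) = algebraMap F k := by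
    ext a
    rw [RingHom.comp_apply, hompow hψ, ← map_pow, fermat_pow hcard]
  calc aeval (μ ^ q ^ s) f = (ψ ^ s) (aeval μ f) := by
        rw [aeval_def, aeval_def, hom_eval₂, h, hompow hψ]
      _ = 0 := by rw [hμ.2, map_zero]


-- fixed-field counting: if 0 < s < d and α^(q^s) = α where α has minpoly of degree d, contradiction
lemma fix_contra {F k : Type*} [Field F] [Fintype F] [Field k] [Algebra F k]
    {q : ℕ} (hq1 : 1 < q) (hcard : Fintype.card F = q)
    {ψ : k →+* k} (hψ : ∀ x, ψ x = x ^ q)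
    {f : F[X]} (hmonic : f.Monic) (hirr : Irreducible f)
    {α : k} (hroot : aeval α f = 0)
    {s : ℕ} (hs0 : 0 < s) (hsd : s < f.natDegree) (hfix : α ^ q ^ s = α) : False := by
  classical
  have hint : IsIntegral F α := ⟨f, hmonic, hroot⟩
  have hmin : minpoly F α = f := (minpoly.eq_of_irreducible_of_monic hirr hroot hmonic).symm
  haveI : FiniteDimensional F F⟮α⟯ := adjoin.finiteDimensional hint
  haveI : Finite F⟮α⟯ := Module.finite_of_finite F
  haveI : Fintype F⟮α⟯ := Fintype.ofFinite _
  have hcardE : Fintype.card F⟮α⟯ = q ^ f.natDegree := by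
    rw [Module.card_eq_pow_finrank (K := F), hcard, adjoin.finrank hint, hmin]
  -- every element of F⟮α⟯ is fixed by x ↦ x^(q^s)
  have hfixE : ∀ x : F⟮α⟯, (x : k) ^ q ^ s = (x : k) := by
    intro x
    have hx : (x : k) ∈ Algebra.adjoin F {α} := by
      rw [← adjoin_simple_toSubalgebra_of_isAlgebraic hint.isAlgebraic]
      exact x.2
    rw [Algebra.adjoin_singleton_eq_range_aeval] at hx
    obtain ⟨g, hg'⟩ := hx
    have hg : aeval α g = (x:k) := hg'
    have hcomp : (ψ ^ s).comp (algebraMap F k) = algebraMap F k := by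
      ext a; rw [RingHom.comp_apply, hompow hψ, ← map_pow, fermat_pow hcard]
    calc (x:k) ^ q ^ s = (ψ ^ s) (aeval α g) := by rw [hg, hompow hψ]
      _ = aeval ((ψ ^ s) α) g := by rw [aeval_def, aeval_def, hom_eval₂, hcomp]
      _ = (x:k) := by rw [hompow hψ, hfix, hg]
  -- all q^d elements of F⟮α⟯ are roots of X^(q^s) - X
  set P : k[X] := X ^ q ^ s - X with hP
  have h1 : (1:ℕ) < q ^ s := one_lt_pow₀ hq1 hs0.ne'
  have hPne : P ≠ 0 := by
    have hc : P.coeff (q ^ s) = 1 := by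
      rw [hP, coeff_sub, coeff_X_pow, if_pos rfl, coeff_X, if_neg h1.ne, sub_zero]
    intro h
    rw [h, coeff_zero] at hc
    exact zero_ne_one hc
  have hdegP : P.natDegree ≤ q ^ s := by
    refine le_trans (natDegree_sub_le _ _) ?_
    rw [natDegree_X_pow, natDegree_X]
    exact max_le le_rfl h1.le
  have hT : (Finset.univ.image (fun x : F⟮α⟯ => (x : k))) ⊆ P.roots.toFinset := by
    intro y hy
    simp only [Finset.mem_image] at hy
    obtain ⟨x, -, rfl⟩ := hy
    rw [Multiset.mem_toFinset, mem_roots hPne]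
    simp [hP, IsRoot, hfixE x]
  have hcardT : (Finset.univ.image (fun x : F⟮α⟯ => (x : k))).card = q ^ f.natDegree := by
    rw [Finset.card_image_of_injective _ Subtype.coe_injective, Finset.card_univ, hcardE]
  have : q ^ f.natDegree ≤ q ^ s := by
    calc q ^ f.natDegree = _ := hcardT.symm
      _ ≤ P.roots.toFinset.card := Finset.card_le_card hT
      _ ≤ Multiset.card P.roots := P.roots.toFinset_card_le
      _ ≤ P.natDegree := P.card_roots'
      _ ≤ q ^ s := hdegP
  exact absurd this (not_le.mpr (pow_lt_pow_right₀ hq1 hsd))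

-- α^(q^d) = α for a root α
lemma root_pow_card {F k : Type*} [Field F] [Fintype F] [Field k] [Algebra F k]
    {q : ℕ} (hcard : Fintype.card F = q)
    {f : F[X]} (hmonic : f.Monic) (hirr : Irreducible f)
    {α : k} (hroot : aeval α f = 0) : α ^ q ^ f.natDegree = α := by
  have hint : IsIntegral F α := ⟨f, hmonic, hroot⟩
  have hmin : minpoly F α = f := (minpoly.eq_of_irreducible_of_monic hirr hroot hmonic).symm
  haveI : FiniteDimensional F F⟮α⟯ := adjoin.finiteDimensional hint
  haveI : Finite F⟮α⟯ := Module.finite_of_finite F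
  haveI : Fintype F⟮α⟯ := Fintype.ofFinite _
  have hcardE : Fintype.card F⟮α⟯ = q ^ f.natDegree := by
    rw [Module.card_eq_pow_finrank (K := F), hcard, adjoin.finrank hint, hmin]
  have := FiniteField.pow_card (AdjoinSimple.gen F α)
  rw [hcardE] at this
  have h2 := congrArg (fun x : F⟮α⟯ => (x : k)) this
  simpa using h2

lemma orbit_inj {F k : Type*} [Field F] [Fintype F] [Field k] [Algebra F k]
    {q : ℕ} (hq1 : 1 < q) (hcard : Fintype.card F = q)
    {ψ : k →+* k} (hψ : ∀ x, ψ x = x ^ q)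
    {f : F[X]} (hmonic : f.Monic) (hirr : Irreducible f)
    {α : k} (hroot : aeval α f = 0) :
    Function.Injective (fun i : Fin f.natDegree => α ^ q ^ (i : ℕ)) := by
  have key : ∀ s : ℕ, s < f.natDegree → α ^ q ^ s = α → s = 0 := by
    intro s hsd hfix
    by_contra hs0
    exact fix_contra hq1 hcard hψ hmonic hirr hroot (Nat.pos_of_ne_zero hs0) hsd hfix
  have hd := root_pow_card hcard hmonic hirr hroot
  have main : ∀ i j : Fin f.natDegree, (i : ℕ) ≤ (j : ℕ) →
      α ^ q ^ (i : ℕ) = α ^ q ^ (j : ℕ) → (i : ℕ) = (j : ℕ) := by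
    intro i j hij h
    rcases Nat.eq_or_lt_of_le hij with heq | hlt
    · exact heq
    · exfalso
      have h2 := congrArg (fun x : k => x ^ q ^ (f.natDegree - (j : ℕ))) h
      simp only [← pow_mul, ← pow_add] at h2
      have e1 : (i : ℕ) + (f.natDegree - (j : ℕ)) < f.natDegree := by omega
      have e2 : (j : ℕ) + (f.natDegree - (j : ℕ)) = f.natDegree := by omega
      rw [e2, hd] at h2
      have := key _ e1 h2
      omega
  intro i j h
  rcases le_total (i : ℕ) (j : ℕ) with hle | hle
  · exact Fin.ext (main i j hle h)
  · exact Fin.ext (main j i hle h.symm).symm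

lemma orbit_range {F k : Type*} [Field F] [Fintype F] [Field k] [Algebra F k]
    {q : ℕ} (hq1 : 1 < q) (hcard : Fintype.card F = q)
    {ψ : k →+* k} (hψ : ∀ x, ψ x = x ^ q)
    {f : F[X]} (hmonic : f.Monic) (hirr : Irreducible f)
    {α : k} (hα : α ∈ f.rootSet k) :
    Set.range (fun i : Fin f.natDegree => α ^ q ^ (i : ℕ)) = f.rootSet k := by
  classical
  have hroot : aeval α f = 0 := (mem_rootSet.mp hα).2
  have hne : f ≠ 0 := (mem_rootSet.mp hα).1
  set G : Finset k := Finset.univ.image (fun i : Fin f.natDegree => α ^ q ^ (i : ℕ)) with hG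
  have hGcard : G.card = f.natDegree := by
    rw [hG, Finset.card_image_of_injective _ (orbit_inj hq1 hcard hψ hmonic hirr hroot),
      Finset.card_univ, Fintype.card_fin]
  have hsub : G ⊆ (f.aroots k).toFinset := by
    intro y hy
    rw [hG, Finset.mem_image] at hy
    obtain ⟨i, -, rfl⟩ := hy
    have := root_pow hcard hψ hα (i : ℕ)
    rw [mem_rootSet'] at this
    rw [Multiset.mem_toFinset, mem_roots this.1, IsRoot, eval_map_algebraMap]
    exact this.2
  have hle : (f.aroots k).toFinset.card ≤ f.natDegree := by
    calc (f.aroots k).toFinset.card ≤ Multiset.card (f.aroots k) :=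
          (f.aroots k).toFinset_card_le
      _ ≤ (f.map (algebraMap F k)).natDegree := (f.map (algebraMap F k)).card_roots'
      _ = f.natDegree := hmonic.natDegree_map _
  have heq : G = (f.aroots k).toFinset :=
    Finset.eq_of_subset_of_card_le hsub (by rw [hGcard]; exact hle)
  have : f.rootSet k = ↑G := by rw [rootSet_def, heq]
  rw [this, hG, Finset.coe_image, Finset.coe_univ, Set.image_univ]

lemma coeff_zero_ne {F : Type*} [Field F] {f : F[X]} (hmonic : f.Monic)
    (hsr : recip f = f) : f.coeff 0 ≠ 0 := by
  intro h
  rw [recip, h, inv_zero, map_zero, zero_mul] at hsr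
  exact hmonic.ne_zero hsr.symm

lemma root_ne_zero {F k : Type*} [Field F] [Field k] [Algebra F k] {f : F[X]}
    (hmonic : f.Monic) (hsr : recip f = f) {μ : k} (hμ : μ ∈ f.rootSet k) : μ ≠ 0 := by
  intro h
  have h2 := (mem_rootSet.mp hμ).2
  rw [h, ← coeff_zero_eq_aeval_zero'] at h2
  exact coeff_zero_ne hmonic hsr ((_root_.map_eq_zero _).mp h2)

lemma inv_root {F k : Type*} [Field F] [Field k] [Algebra F k] {f : F[X]}
    (hmonic : f.Monic) (hsr : recip f = f) {μ : k} (hμ : μ ∈ f.rootSet k) :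
    μ⁻¹ ∈ f.rootSet k := by
  have hμ0 : μ ≠ 0 := root_ne_zero hmonic hsr hμ
  haveI := invertibleOfNonzero hμ0
  have h2 : eval₂ (algebraMap F k) (⅟ μ) (reverse f) = 0 :=
    (eval₂_reverse_eq_zero_iff (algebraMap F k) μ f).mpr (mem_rootSet.mp hμ).2
  rw [invOf_eq_inv] at h2
  rw [mem_rootSet]
  refine ⟨hmonic.ne_zero, ?_⟩
  have h3 : aeval μ⁻¹ f.reverse = 0 := by rw [aeval_def]; exact h2
  conv_lhs => rw [← hsr]
  rw [recip, map_mul, h3, mul_zero]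

lemma half_step {F k : Type*} [Field F] [Fintype F] [Field k] [Algebra F k]
    {q : ℕ} (hq1 : 1 < q) (hcard : Fintype.card F = q)
    {ψ : k →+* k} (hψ : ∀ x, ψ x = x ^ q)
    {f : F[X]} (hmonic : f.Monic) (hirr : Irreducible f) (hsr : recip f = f)
    {n : ℕ} (hdn : f.natDegree = n + n) (hn : 0 < n)
    {μ : k} (hμ : μ ∈ f.rootSet k) : μ ^ q ^ n = μ⁻¹ := by
  have hroot : aeval μ f = 0 := (mem_rootSet.mp hμ).2
  have hμ0 : μ ≠ 0 := root_ne_zero hmonic hsr hμ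
  have hinj := orbit_inj hq1 hcard hψ hmonic hirr hroot
  have hrange := orbit_range hq1 hcard hψ hmonic hirr hμ
  have hd := root_pow_card hcard hmonic hirr hroot
  have hdpos : 0 < f.natDegree := by omega
  -- μ⁻¹ is in the orbit
  have hinv : μ⁻¹ ∈ Set.range (fun i : Fin f.natDegree => μ ^ q ^ (i : ℕ)) := by
    rw [hrange]; exact inv_root hmonic hsr hμ
  obtain ⟨j, hj⟩ := hinv
  simp only at hj
  -- j ≠ 0
  have hj0 : (j : ℕ) ≠ 0 := by
    intro h0
    rw [h0, pow_zero, pow_one] at hj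
    have hsq : μ * μ = 1 := by
      field_simp at hj
      rw [← sq, hj]
    rcases mul_self_eq_one_iff.mp hsq with h1 | h1
    · have : μ = algebraMap F k 1 := by rw [map_one, h1]
      have hm : minpoly F μ = f := (minpoly.eq_of_irreducible_of_monic hirr hroot hmonic).symm
      rw [this, minpoly.eq_X_sub_C] at hm
      have := congrArg natDegree hm
      rw [natDegree_X_sub_C] at this
      omega
    · have : μ = algebraMap F k (-1) := by rw [map_neg, map_one, h1]
      have hm : minpoly F μ = f := (minpoly.eq_of_irreducible_of_monic hirr hroot hmonic).symm
      rw [this, minpoly.eq_X_sub_C] at hm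
      have := congrArg natDegree hm
      rw [natDegree_X_sub_C] at this
      omega
  -- μ ^ q ^ (j + j) = μ
  have h2j : μ ^ q ^ ((j : ℕ) + (j : ℕ)) = μ := by
    have : μ ^ q ^ ((j : ℕ) + (j : ℕ)) = (μ ^ q ^ (j : ℕ)) ^ q ^ (j : ℕ) := by
      rw [← pow_mul, pow_add]
    rw [this, hj, inv_pow, hj, inv_inv]
  -- conclude j + j = natDegree, i.e. j = n
  have hjn : (j : ℕ) = n := by
    by_contra hne
    rcases lt_or_ge ((j : ℕ) + (j : ℕ)) f.natDegree with hlt | hge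
    · have : (⟨(j : ℕ) + (j : ℕ), hlt⟩ : Fin f.natDegree) = ⟨0, hdpos⟩ := by
        apply hinj
        simp only
        rw [h2j, pow_zero, pow_one]
      have := Fin.mk.injEq .. ▸ this
      simp at this
      omega
    · set s := (j : ℕ) + (j : ℕ) - f.natDegree with hs
      have hslt : s < f.natDegree := by have := j.2; omega
      have hss : μ ^ q ^ s = μ := by
        have e : (j : ℕ) + (j : ℕ) = f.natDegree + s := by omega
        have : μ ^ q ^ ((j : ℕ) + (j : ℕ)) = (μ ^ q ^ f.natDegree) ^ q ^ s := by
          rw [← pow_mul, ← pow_add, e]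
        rw [this, hd] at h2j
        exact h2j
      have : (⟨s, hslt⟩ : Fin f.natDegree) = ⟨0, hdpos⟩ := by
        apply hinj
        simp only
        rw [hss, pow_zero, pow_one]
      have hs0 : s = 0 := by
        have := Fin.mk.injEq .. ▸ this
        simpa using this
      have := j.2
      omega
  rw [← hjn, hj]

lemma admEnum_of_root {F k : Type*} [Field F] [Fintype F] [Field k] [Algebra F k]
    {q : ℕ} (hq1 : 1 < q) (hcard : Fintype.card F = q)
    {ψ : k →+* k} (hψ : ∀ x, ψ x = x ^ q)
    {f : F[X]} (hmonic : f.Monic) (hirr : Irreducible f) (hsr : recip f = f)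
    {n : ℕ} (hdn : f.natDegree = n + n) (hn : 0 < n)
    {μ : k} (hμ : μ ∈ f.rootSet k) :
    AdmEnum q f n (fun i : Fin n => μ ^ q ^ (i : ℕ)) := by
  have hroot : aeval μ f = 0 := (mem_rootSet.mp hμ).2
  have hμ0 : μ ≠ 0 := root_ne_zero hmonic hsr hμ
  have hinj := orbit_inj hq1 hcard hψ hmonic hirr hroot
  have hrange := orbit_range hq1 hcard hψ hmonic hirr hμ
  have hhalf : μ ^ q ^ n = μ⁻¹ := half_step hq1 hcard hψ hmonic hirr hsr hdn hn hμ
  -- inverse of orbit elements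
  have hinv : ∀ t : ℕ, (μ ^ q ^ t)⁻¹ = μ ^ q ^ (n + t) := by
    intro t
    rw [pow_add, pow_mul, hhalf, inv_pow]
  set Λ : Fin n → k := fun i : Fin n => μ ^ q ^ (i : ℕ) with hΛ
  -- index function
  have hidx : ∀ x : Fin n ⊕ Fin n,
      Sum.elim Λ (fun i => (Λ i)⁻¹) x = μ ^ q ^ (Sum.elim (fun i : Fin n => (i : ℕ))
        (fun i : Fin n => n + (i : ℕ)) x) := by
    rintro (i | i)
    · rfl
    · simp only [Sum.elim_inr, hΛ]
      exact hinv (i : ℕ)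
  have hidxlt : ∀ x : Fin n ⊕ Fin n, Sum.elim (fun i : Fin n => (i : ℕ))
      (fun i : Fin n => n + (i : ℕ)) x < f.natDegree := by
    rintro (i | i) <;> simp only [Sum.elim_inl, Sum.elim_inr] <;> (have := i.2; omega)
  refine ⟨?_, ?_, ?_, ?_, ?_⟩
  · intro i
    exact pow_ne_zero _ hμ0
  · intro x y hxy
    rw [hidx x, hidx y] at hxy
    have := hinj (a₁ := ⟨_, hidxlt x⟩) (a₂ := ⟨_, hidxlt y⟩) hxy
    have hval := congrArg Fin.val this
    simp only at hval
    rcases x with i | i <;> rcases y with j | j <;>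
      simp only [Sum.elim_inl, Sum.elim_inr] at hval
    · exact congrArg Sum.inl (Fin.ext hval)
    · exact absurd hval (by have := i.2; omega)
    · exact absurd hval (by have := j.2; omega)
    · exact congrArg Sum.inr (Fin.ext (by omega))
  · rw [← hrange]
    ext y
    constructor
    · rintro ⟨x, rfl⟩
      exact ⟨⟨_, hidxlt x⟩, (hidx x).symm⟩
    · rintro ⟨t, rfl⟩
      simp only
      rcases lt_or_ge (t : ℕ) n with hlt | hge
      · exact ⟨Sum.inl ⟨(t : ℕ), hlt⟩, by rw [hidx]; rfl⟩
      · refine ⟨Sum.inr ⟨(t : ℕ) - n, by have := t.2; omega⟩, ?_⟩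
        rw [hidx]
        simp only [Sum.elim_inr]
        congr 2
        have := t.2
        omega
  · intro i j hij
    simp only [hΛ]
    rw [← pow_mul, ← pow_succ, hij]
  · intro i j hi hj
    simp only [hΛ]
    rw [← pow_mul, ← pow_succ, hi, hj, pow_zero, pow_one, Nat.sub_add_cancel hn]
    exact hhalf

lemma admEnum_determined {F k : Type*} [Field F] [Field k] [Algebra F k]
    {q : ℕ} {f : F[X]} {n : ℕ} (hn : 0 < n) {Λ : Fin n → k}
    (h : AdmEnum q f n Λ) (i : Fin n) : Λ i = (Λ ⟨0, hn⟩) ^ q ^ (i : ℕ) := by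
  obtain ⟨-, -, -, h4, -⟩ := h
  obtain ⟨t, ht⟩ := i
  induction t with
  | zero => simp
  | succ s ih =>
    have hs : s < n := by omega
    have := h4 ⟨s, hs⟩ ⟨s + 1, ht⟩ rfl
    rw [← this, ih hs, ← pow_mul, ← pow_succ]

end AuxStmt5

open Polynomial IntermediateField in
/-- Fix an odd prime power `q`, let `k` be an algebraic closure
of `F_q`, and let `f ∈ F_q[λ]` be monic irreducible self-reciprocal of even
degree `d`.  Then the number of admissible enumerations of the roots of `f`
is exactly `d`; in particular at least one exists. -/
theorem stmt5 (q : ℕ) (hq : ∃ p m : ℕ, p.Prime ∧ 0 < m ∧ q = p ^ m) (hodd : Odd q)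
    {F : Type*} [Field F] [Fintype F] (hcard : Fintype.card F = q)
    (k : Type*) [Field k] [Algebra F k] [IsAlgClosure F k]
    (f : Polynomial F) (hmonic : f.Monic) (hirr : Irreducible f)
    (hsr : recip f = f)
    (d : ℕ) (hd : d = f.natDegree) (heven : Even d) :
    Nat.card {Λ : Fin (d / 2) → k | AdmEnum q f (d / 2) Λ} = d ∧
    ∃ Λ : Fin (d / 2) → k, AdmEnum q f (d / 2) Λ := by
  obtain ⟨p, m, hp, hm, hqpm⟩ := hq
  haveI : Fact p.Prime := ⟨hp⟩
  -- characteristic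
  have hcharF : CharP F p := by
    obtain ⟨p', hp'⟩ := CharP.exists F
    haveI := hp'
    obtain ⟨n', hprime', hcard'⟩ := FiniteField.card F p'
    have : p = p' := by
      have hdvd : p ∣ p' ^ (n' : ℕ) := by
        rw [← hcard', hcard, hqpm]
        exact dvd_pow_self p hm.ne'
      rcases (Nat.Prime.dvd_of_dvd_pow hp hdvd) with h
      exact ((Nat.prime_dvd_prime_iff_eq hp hprime').mp h)
    rw [this]; exact hp'
  haveI := hcharF
  haveI hcharK : CharP k p := charP_of_injective_algebraMap (algebraMap F k).injective p
  haveI : ExpChar k p := ExpChar.prime hp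
  set ψ : k →+* k := iterateFrobenius k p m with hψdef
  have hψ : ∀ x : k, ψ x = x ^ q := by
    intro x
    rw [hψdef, iterateFrobenius_def, hqpm]
  have hq1 : 1 < q := by
    rw [hqpm]
    exact Nat.one_lt_pow hm.ne' hp.one_lt
  -- degree bookkeeping
  have hdpos : 0 < f.natDegree := hirr.natDegree_pos
  obtain ⟨n, hn2⟩ := heven
  have hd2 : d / 2 = n := by omega
  have hdn : f.natDegree = n + n := by omega
  have hn : 0 < n := by omega
  rw [hd2]
  -- a root exists
  haveI : IsAlgClosed k := IsAlgClosure.isAlgClosed F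
  obtain ⟨α, hα0⟩ := IsAlgClosed.exists_aeval_eq_zero k f (by
    rw [degree_eq_natDegree hmonic.ne_zero]
    exact_mod_cast by omega)
  have hα : α ∈ f.rootSet k := by
    rw [mem_rootSet]
    exact ⟨hmonic.ne_zero, hα0⟩
  -- the equivalence between roots and admissible enumerations
  let E : (f.rootSet k) ≃ {Λ : Fin n → k | AdmEnum q f n Λ} :=
    { toFun := fun μ => ⟨fun i => (μ : k) ^ q ^ (i : ℕ),
        admEnum_of_root hq1 hcard hψ hmonic hirr hsr hdn hn μ.2⟩
      invFun := fun Λ => ⟨Λ.1 ⟨0, hn⟩, by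
        have h3 := Λ.2.2.2.1
        rw [← h3]
        exact ⟨Sum.inl ⟨0, hn⟩, rfl⟩⟩
      left_inv := fun μ => Subtype.ext (by simp)
      right_inv := fun Λ => Subtype.ext (funext fun i =>
        (admEnum_determined hn Λ.2 i).symm) }
  constructor
  · rw [← Nat.card_congr E]
    have h1 : Nat.card (f.rootSet k) = f.natDegree := by
      rw [← orbit_range hq1 hcard hψ hmonic hirr hα,
        Nat.card_range_of_injective (orbit_inj hq1 hcard hψ hmonic hirr hα0)]
      simp
    rw [h1, hd]
  · exact ⟨fun i => α ^ q ^ (i : ℕ),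
      admEnum_of_root hq1 hcard hψ hmonic hirr hsr hdn hn hα⟩
end

section
/- Fix an odd prime power q. Let f ∈ F_q[λ] be monic and self-reciprocal. Assume there is a unique monic irreducible self-reciprocal polynomial Q_0 ∈ F_q[λ] such that the multiplicity m_{Q_0}(f) of Q_0 in f is odd, and let m be an odd integer with 1 ≤ m ≤ m_{Q_0}(f). Then the square of the number of monic polynomials U ∈ F_q[λ] satisfying U·U* = f/Q_0^m equals the product of (1 + m_Q(f)) over all monic irreducible polynomials Q ∈ F_q[λ] with Q(0) ≠ 0, Q ≠ Q*, and Q dividing f. -/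
section Stmt8Aux

open Polynomial UniqueFactorizationMonoid

variable {F : Type*} [Field F]

theorem recip_C' {c : F} (hc : c ≠ 0) : recip (Polynomial.C c) = 1 := by
  have hrev : (Polynomial.C c).reverse = Polynomial.C c := by
    show Polynomial.reflect (Polynomial.C c).natDegree (Polynomial.C c) = Polynomial.C c
    rw [Polynomial.natDegree_C, Polynomial.reflect_C, pow_zero, mul_one]
  rw [recip, hrev, Polynomial.coeff_C_zero, ← Polynomial.C_mul, inv_mul_cancel₀ hc,
    Polynomial.C_1]

theorem recip_one' : recip (1 : Polynomial F) = 1 := by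
  have := recip_C' (one_ne_zero (α := F))
  rwa [Polynomial.C_1] at this

theorem recip_mul' (u v : Polynomial F) : recip (u * v) = recip u * recip v := by
  simp only [recip, Polynomial.mul_coeff_zero, mul_inv, Polynomial.reverse_mul_of_domain, map_mul]
  ring

/-- `recip` as a monoid hom. -/
noncomputable def recipHom : Polynomial F →* Polynomial F where
  toFun := recip
  map_one' := recip_one'
  map_mul' := recip_mul'

theorem recip_coeff_zero (p : Polynomial F) :
    (recip p).coeff 0 = (p.coeff 0)⁻¹ * p.leadingCoeff := by
  simp [recip, Polynomial.coeff_C_mul, Polynomial.coeff_zero_reverse]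

theorem natTrailingDegree_eq_zero' {p : Polynomial F} (h0 : p.coeff 0 ≠ 0) :
    p.natTrailingDegree = 0 :=
  Polynomial.natTrailingDegree_eq_zero.mpr (Or.inr h0)

theorem trailingCoeff_eq' {p : Polynomial F} (h0 : p.coeff 0 ≠ 0) :
    p.trailingCoeff = p.coeff 0 := by
  rw [Polynomial.trailingCoeff, natTrailingDegree_eq_zero' h0]

theorem natDegree_recip {p : Polynomial F} (h0 : p.coeff 0 ≠ 0) :
    (recip p).natDegree = p.natDegree := by
  rw [recip, Polynomial.natDegree_C_mul (inv_ne_zero h0), Polynomial.reverse_natDegree,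
    natTrailingDegree_eq_zero' h0, Nat.sub_zero]

theorem recip_monic {p : Polynomial F} (hm : p.Monic) (h0 : p.coeff 0 ≠ 0) :
    (recip p).Monic := by
  have : (recip p).leadingCoeff = 1 := by
    rw [recip, Polynomial.leadingCoeff_mul, Polynomial.leadingCoeff_C,
      Polynomial.reverse_leadingCoeff, trailingCoeff_eq' h0, inv_mul_cancel₀ h0]
  exact this

theorem reverse_reverse' {p : Polynomial F} (h0 : p.coeff 0 ≠ 0) :
    p.reverse.reverse = p := by
  have hd : p.reverse.natDegree = p.natDegree := by
    rw [Polynomial.reverse_natDegree, natTrailingDegree_eq_zero' h0, Nat.sub_zero]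
  show Polynomial.reflect p.reverse.natDegree p.reverse = p
  rw [hd]
  show Polynomial.reflect p.natDegree (Polynomial.reflect p.natDegree p) = p
  ext n
  rw [Polynomial.coeff_reflect, Polynomial.coeff_reflect, Polynomial.revAt_invol]

theorem recip_recip {p : Polynomial F} (hm : p.Monic) (h0 : p.coeff 0 ≠ 0) :
    recip (recip p) = p := by
  have h1 : recip p = Polynomial.C (p.coeff 0)⁻¹ * p.reverse := rfl
  rw [h1, recip_mul', recip_C' (inv_ne_zero h0), one_mul]
  have h2 : recip p.reverse = Polynomial.C (p.reverse.coeff 0)⁻¹ * p.reverse.reverse := rfl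
  rw [h2, Polynomial.coeff_zero_reverse, hm.leadingCoeff, inv_one, Polynomial.C_1, one_mul,
    reverse_reverse' h0]

theorem recip_coeff_zero_ne {p : Polynomial F} (hm : p.Monic) (h0 : p.coeff 0 ≠ 0) :
    (recip p).coeff 0 ≠ 0 := by
  rw [recip_coeff_zero, hm.leadingCoeff, mul_one]
  exact inv_ne_zero h0

theorem recip_irreducible {p : Polynomial F} (hm : p.Monic) (h0 : p.coeff 0 ≠ 0)
    (hirr : Irreducible p) : Irreducible (recip p) := by
  have isUnit_of_natDegree_zero : ∀ q : Polynomial F, q.coeff 0 ≠ 0 → q.natDegree = 0 →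
      IsUnit q := by
    intro q hq0 hq
    obtain ⟨c, hc⟩ := Polynomial.natDegree_eq_zero.mp hq
    have hc0 : c ≠ 0 := by
      intro h; rw [h, Polynomial.C_0] at hc
      exact hq0 (by rw [← hc]; simp)
    rw [← hc]
    exact Polynomial.isUnit_C.mpr (isUnit_iff_ne_zero.mpr hc0)
  constructor
  · intro hu
    apply hirr.not_isUnit
    apply isUnit_of_natDegree_zero p h0
    have := Polynomial.isUnit_iff_degree_eq_zero.mp hu
    have hnd : (recip p).natDegree = 0 :=
      Polynomial.natDegree_eq_zero_iff_degree_le_zero.mpr (le_of_eq this)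
    rw [natDegree_recip h0] at hnd
    exact hnd
  · intro a b hab
    have hne : (recip p).coeff 0 ≠ 0 := recip_coeff_zero_ne hm h0
    rw [hab, Polynomial.mul_coeff_zero] at hne
    have ha0 : a.coeff 0 ≠ 0 := fun h => hne (by rw [h, zero_mul])
    have hb0 : b.coeff 0 ≠ 0 := fun h => hne (by rw [h, mul_zero])
    have hp' : p = recip a * recip b := by
      rw [← recip_mul', ← hab, recip_recip hm h0]
    rcases hirr.isUnit_or_isUnit hp' with h | h
    · left
      apply isUnit_of_natDegree_zero a ha0
      have := Polynomial.isUnit_iff_degree_eq_zero.mp h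
      have hnd : (recip a).natDegree = 0 :=
        Polynomial.natDegree_eq_zero_iff_degree_le_zero.mpr (le_of_eq this)
      rwa [natDegree_recip ha0] at hnd
    · right
      apply isUnit_of_natDegree_zero b hb0
      have := Polynomial.isUnit_iff_degree_eq_zero.mp h
      have hnd : (recip b).natDegree = 0 :=
        Polynomial.natDegree_eq_zero_iff_degree_le_zero.mpr (le_of_eq this)
      rwa [natDegree_recip hb0] at hnd

theorem monic_msprod {s : Multiset (Polynomial F)} (h : ∀ z ∈ s, z.Monic) :
    s.prod.Monic := by
  have := Polynomial.monic_multiset_prod_of_monic s id (fun i hi => h i hi)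
  simpa using this

section NF

variable [DecidableEq F]

theorem nf_prod {s : Multiset (Polynomial F)}
    (h : ∀ z ∈ s, Irreducible z ∧ normalize z = z) :
    normalizedFactors s.prod = s := by
  induction s using Multiset.induction_on with
  | empty => simpa using UniqueFactorizationMonoid.normalizedFactors_one
  | cons a s ih =>
    have ha := h a (Multiset.mem_cons_self a s)
    have hs' : ∀ z ∈ s, Irreducible z ∧ normalize z = z :=
      fun z hz => h z (Multiset.mem_cons_of_mem hz)
    have hsne : s.prod ≠ 0 := by
      apply Multiset.prod_ne_zero
      intro h0
      exact (hs' 0 h0).1.ne_zero rfl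
    rw [Multiset.prod_cons, UniqueFactorizationMonoid.normalizedFactors_mul ha.1.ne_zero hsne,
      UniqueFactorizationMonoid.normalizedFactors_irreducible ha.1, ha.2, ih hs',
      Multiset.singleton_add]

theorem prod_nf_monic {b : Polynomial F} (hbm : b.Monic) :
    (normalizedFactors b).prod = b := by
  apply Polynomial.eq_of_monic_of_associated _ hbm
    (UniqueFactorizationMonoid.prod_normalizedFactors hbm.ne_zero)
  apply monic_msprod
  intro z hz
  have h1 := UniqueFactorizationMonoid.normalize_normalized_factor z hz
  have h2 : z ≠ 0 := (UniqueFactorizationMonoid.irreducible_of_normalized_factor z hz).ne_zero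
  have := Polynomial.monic_normalize (p := z) h2
  rwa [h1] at this

theorem mem_nf {b : Polynomial F} (hbm : b.Monic) (hb0 : b.coeff 0 ≠ 0)
    {z : Polynomial F} (hz : z ∈ normalizedFactors b) :
    z.Monic ∧ Irreducible z ∧ z.coeff 0 ≠ 0 := by
  have hirr := UniqueFactorizationMonoid.irreducible_of_normalized_factor z hz
  have hnorm := UniqueFactorizationMonoid.normalize_normalized_factor z hz
  have hzm : z.Monic := by
    have := Polynomial.monic_normalize (p := z) hirr.ne_zero
    rwa [hnorm] at this
  refine ⟨hzm, hirr, ?_⟩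
  intro h
  obtain ⟨c, hc⟩ := UniqueFactorizationMonoid.dvd_of_mem_normalizedFactors hz
  apply hb0
  rw [hc, Polynomial.mul_coeff_zero, h, zero_mul]

theorem nf_recip {U : Polynomial F} (hUm : U.Monic) (hU0 : U.coeff 0 ≠ 0) :
    normalizedFactors (recip U) = (normalizedFactors U).map recip := by
  have hprod : ((normalizedFactors U).map recip).prod = recip U := by
    have := Multiset.prod_hom (normalizedFactors U) (recipHom (F := F))
    simpa [recipHom, prod_nf_monic hUm] using this
  rw [← hprod]
  apply nf_prod
  intro z hz
  obtain ⟨w, hw, rfl⟩ := Multiset.mem_map.mp hz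
  obtain ⟨h1, h2, h3⟩ := mem_nf hUm hU0 hw
  exact ⟨recip_irreducible h1 h3 h2, (recip_monic h1 h3).normalize_eq_self⟩

theorem mult_count {p b : Polynomial F} (hp : Irreducible p) (hnorm : normalize p = p)
    (hb : b ≠ 0) : multiplicity p b = (normalizedFactors b).count p := by
  have fin : FiniteMultiplicity p b := FiniteMultiplicity.of_not_isUnit hp.not_isUnit hb
  have h := UniqueFactorizationMonoid.emultiplicity_eq_count_normalizedFactors hp hb
  rw [fin.emultiplicity_eq_multiplicity, hnorm] at h
  exact_mod_cast h

end NF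

/-- The key multiset-counting lemma: if `M` is invariant under an involution `r` and every
`r`-fixed element has even multiplicity, then the square of the number of "halves" of `M`
equals the product of `1 + count` over the non-fixed elements. -/
theorem count_lemma {α : Type*} [DecidableEq α] (M : Multiset α) :
    ∀ (r : α → α), Function.Involutive r → M.map r = M →
      (∀ x ∈ M, r x = x → Even (M.count x)) →
      (Nat.card {s : Multiset α | s + s.map r = M}) ^ 2 =
        ∏ x ∈ M.toFinset.filter (fun x => r x ≠ x), (1 + M.count x) := by
  induction M using Multiset.strongInductionOn with
  | _ M IH =>
  intro r hr hM heven
  have map_fix : ∀ s : Multiset α, (∀ z ∈ s, r z = z) → s.map r = s := by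
    intro s h
    calc s.map r = s.map id := Multiset.map_congr rfl h
    _ = s := Multiset.map_id s
  by_cases hex : ∃ x ∈ M, r x ≠ x
  · -- inductive step
    obtain ⟨x, hxM, hxr⟩ := hex
    set y := r x with hy
    have hyx : y ≠ x := hxr
    have hryx : r y = x := hr x
    set e := M.count x with he
    have he1 : 1 ≤ e := Multiset.count_pos.mpr hxM
    have hcy : M.count y = e := by
      conv_lhs => rw [← hM]
      rw [hy, Multiset.count_map_eq_count' r M hr.injective x]
    have hyM : y ∈ M := Multiset.count_pos.mp (by rw [hcy]; omega)
    set p : α → Prop := fun z => z ≠ x ∧ z ≠ y with hp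
    have hpr : ∀ z, p (r z) ↔ p z := by
      intro z
      constructor
      · rintro ⟨h1, h2⟩
        constructor
        · intro h; apply h2; rw [h, ← hryx, hr]
        · intro h; apply h1; rw [h, hy, hr]
      · rintro ⟨h1, h2⟩
        constructor
        · intro h; apply h2; rw [← hryx] at h; exact hr.injective h
        · intro h; apply h1; rw [hy] at h; exact hr.injective h
    have hfilter_map : ∀ s : Multiset α, (s.filter p).map r = (s.map r).filter p := by
      intro s
      rw [Multiset.filter_map]
      congr 1
      exact (Multiset.filter_congr (fun z _ => hpr z)).symm
    set M' := M.filter p with hM'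
    have hcx' : M'.count x = 0 := by
      rw [hM', Multiset.count_filter, if_neg (by simp [hp])]
    have hcy' : M'.count y = 0 := by
      rw [hM', Multiset.count_filter, if_neg (by simp [hp])]
    have hother : ∀ z, z ≠ x → z ≠ y → M'.count z = M.count z := by
      intro z h1 h2
      rw [hM', Multiset.count_filter, if_pos ⟨h1, h2⟩]
    have hM'lt : M' < M := by
      apply lt_of_le_of_ne (Multiset.filter_le p M)
      intro h
      have hx0 : Multiset.count x M = 0 := by
        rw [← h, ← hM']
        exact hcx'
      omega
    have hM'map : M'.map r = M' := by
      rw [hM', hfilter_map, hM]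
    have hM'even : ∀ z ∈ M', r z = z → Even (M'.count z) := by
      intro z hz hrz
      have hzM : z ∈ M := Multiset.mem_of_le (Multiset.filter_le p M) hz
      have hzx : z ≠ x := by rintro rfl; exact hxr hrz
      have hzy : z ≠ y := by
        rintro rfl; rw [hryx] at hrz; exact hyx hrz.symm
      rw [hother z hzx hzy]
      exact heven z hzM hrz
    have hMsplit : M = M' + Multiset.replicate e x + Multiset.replicate e y := by
      ext z
      simp only [Multiset.count_add, Multiset.count_replicate]
      by_cases hzx : x = z
      · subst hzx
        rw [hcx', if_pos rfl, if_neg hyx]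
        omega
      · by_cases hzy : y = z
        · subst hzy
          rw [hcy', if_neg hzx, if_pos rfl, hcy]
          omega
        · rw [hother z (fun h => hzx h.symm) (fun h => hzy h.symm), if_neg hzx, if_neg hzy]
          omega
    -- the equivalence
    have hcardA : Nat.card {s : Multiset α | s + s.map r = M} =
        (Nat.card {t : Multiset α | t + t.map r = M'}) * (e + 1) := by
      have E : {s : Multiset α | s + s.map r = M} ≃
          {t : Multiset α | t + t.map r = M'} × Fin (e + 1) := by
        refine
          { toFun := fun s =>
              ⟨⟨(s : Multiset α).filter p, ?_⟩,
                ⟨Multiset.count x (s : Multiset α), ?_⟩⟩,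
            invFun := fun ts =>
              ⟨(ts.1 : Multiset α) + Multiset.replicate (ts.2 : ℕ) x +
                 Multiset.replicate (e - (ts.2 : ℕ)) y, ?_⟩,
            left_inv := ?_, right_inv := ?_ }
        · obtain ⟨s, hs⟩ := s
          show (s.filter p) + (s.filter p).map r = M'
          rw [hfilter_map s, ← Multiset.filter_add, hs]
        · obtain ⟨s, hs⟩ := s
          have hsle : s ≤ M := hs ▸ Multiset.le_add_right s _
          exact Nat.lt_succ_of_le (he ▸ Multiset.count_le_of_le x hsle)
        · obtain ⟨⟨t, ht⟩, ⟨a, ha⟩⟩ := ts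
          show (t + Multiset.replicate a x + Multiset.replicate (e - a) y) +
              (t + Multiset.replicate a x + Multiset.replicate (e - a) y).map r = M
          have hale : a ≤ e := Nat.lt_succ_iff.mp ha
          simp only [Multiset.map_add, Multiset.map_replicate]
          rw [show r x = y from rfl, hryx]
          have : t + Multiset.replicate a x + Multiset.replicate (e - a) y +
              (t.map r + Multiset.replicate a y + Multiset.replicate (e - a) x) =
              (t + t.map r) + (Multiset.replicate a x + Multiset.replicate (e - a) x) +
                (Multiset.replicate a y + Multiset.replicate (e - a) y) := by
            abel
          rw [this, ht, ← Multiset.replicate_add, ← Multiset.replicate_add,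
            Nat.add_sub_cancel' hale, hMsplit]
        · rintro ⟨s, hs⟩
          simp only [Set.mem_setOf_eq] at hs
          have hsle : s ≤ M := hs ▸ Multiset.le_add_right s _
          have hcys : Multiset.count y s = e - Multiset.count x s := by
            have h1 : Multiset.count y s + Multiset.count y (s.map r) = e := by
              have := congrArg (Multiset.count y) hs
              rwa [Multiset.count_add, hcy] at this
            have h2 : Multiset.count y (s.map r) = Multiset.count x s := by
              rw [hy, Multiset.count_map_eq_count' r s hr.injective x]
            omega
          ext1
          show s.filter p + Multiset.replicate (Multiset.count x s) x +
              Multiset.replicate (e - Multiset.count x s) y = s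
          ext z
          simp only [Multiset.count_add, Multiset.count_filter,
            Multiset.count_replicate]
          by_cases hzx : x = z
          · subst hzx
            rw [if_neg (by simp [hp]), if_pos rfl, if_neg hyx]
            omega
          · by_cases hzy : y = z
            · subst hzy
              rw [if_neg (by simp [hp]), if_neg hzx, if_pos rfl, hcys]
              omega
            · rw [if_pos ⟨fun h => hzx h.symm, fun h => hzy h.symm⟩, if_neg hzx,
                if_neg hzy]
              omega
        · rintro ⟨⟨t, ht⟩, ⟨a, ha⟩⟩
          simp only [Set.mem_setOf_eq] at ht
          have htle : t ≤ M' := ht ▸ Multiset.le_add_right t _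
          have htp : ∀ z ∈ t, p z := by
            intro z hz
            exact Multiset.of_mem_filter (Multiset.mem_of_le htle hz)
          have hcxt : Multiset.count x t = 0 := by
            have := Multiset.count_le_of_le x htle
            omega
          ext1
          · ext1
            show (t + Multiset.replicate a x + Multiset.replicate (e - a) y).filter p = t
            rw [Multiset.filter_add, Multiset.filter_add, Multiset.filter_eq_self.mpr htp]
            have h1 : (Multiset.replicate a x).filter p = 0 := by
              rw [Multiset.eq_zero_iff_forall_notMem]
              intro z hz
              have := Multiset.of_mem_filter hz
              have hzx := Multiset.eq_of_mem_replicate (Multiset.mem_of_mem_filter hz)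
              exact this.1 hzx
            have h2 : (Multiset.replicate (e - a) y).filter p = 0 := by
              rw [Multiset.eq_zero_iff_forall_notMem]
              intro z hz
              have := Multiset.of_mem_filter hz
              have hzy := Multiset.eq_of_mem_replicate (Multiset.mem_of_mem_filter hz)
              exact this.2 hzy
            rw [h1, h2, add_zero, add_zero]
          · ext1
            show Multiset.count x (t + Multiset.replicate a x +
              Multiset.replicate (e - a) y) = a
            simp [Multiset.count_add, Multiset.count_replicate, hcxt, hyx]
      rw [Nat.card_congr E, Nat.card_prod]
      simp
    -- Finset manipulation
    have hxD : x ∈ M.toFinset.filter (fun z => r z ≠ z) := by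
      simp only [Finset.mem_filter, Multiset.mem_toFinset]
      exact ⟨hxM, hxr⟩
    have hyD : y ∈ M.toFinset.filter (fun z => r z ≠ z) := by
      simp only [Finset.mem_filter, Multiset.mem_toFinset]
      refine ⟨hyM, ?_⟩
      rw [hryx]
      exact hyx.symm
    have hDins : M.toFinset.filter (fun z => r z ≠ z) =
        insert x (insert y (M'.toFinset.filter (fun z => r z ≠ z))) := by
      ext z
      simp only [Finset.mem_insert, Finset.mem_filter, Multiset.mem_toFinset]
      constructor
      · rintro ⟨hzM, hzr⟩
        by_cases hzx : z = x
        · exact Or.inl hzx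
        · by_cases hzy : z = y
          · exact Or.inr (Or.inl hzy)
          · refine Or.inr (Or.inr ⟨?_, hzr⟩)
            rw [hM', Multiset.mem_filter]
            exact ⟨hzM, hzx, hzy⟩
      · rintro (rfl | rfl | ⟨hzM', hzr⟩)
        · exact ⟨hxM, hxr⟩
        · exact ⟨hyM, by rw [hryx]; exact hyx.symm⟩
        · exact ⟨Multiset.mem_of_le (Multiset.filter_le p M) hzM', hzr⟩
    have hxM'0 : x ∉ M' := by
      intro h
      have := Multiset.count_pos.mpr h
      omega
    have hyM'0 : y ∉ M' := by
      intro h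
      have := Multiset.count_pos.mpr h
      omega
    have hxnot : x ∉ insert y (M'.toFinset.filter (fun z => r z ≠ z)) := by
      simp only [Finset.mem_insert, Finset.mem_filter, Multiset.mem_toFinset]
      push_neg
      exact ⟨hyx.symm, fun h => absurd h hxM'0⟩
    have hynot : y ∉ M'.toFinset.filter (fun z => r z ≠ z) := by
      simp only [Finset.mem_filter, Multiset.mem_toFinset]
      exact fun h => hyM'0 h.1
    have hIH := IH M' hM'lt r hr hM'map hM'even
    rw [hcardA, hDins, Finset.prod_insert hxnot, Finset.prod_insert hynot]
    have hprodcongr : ∏ z ∈ M'.toFinset.filter (fun z => r z ≠ z), (1 + M.count z) =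
        ∏ z ∈ M'.toFinset.filter (fun z => r z ≠ z), (1 + M'.count z) := by
      apply Finset.prod_congr rfl
      intro z hz
      simp only [Finset.mem_filter, Multiset.mem_toFinset] at hz
      have hzM' : z ∈ M' := hz.1
      have hzp : p z := Multiset.of_mem_filter hzM'
      rw [hother z hzp.1 hzp.2]
    rw [← he, hcy, hprodcongr, ← hIH]
    ring
  · -- base case : every element of M is fixed by r
    push_neg at hex
    have hD : M.toFinset.filter (fun z => r z ≠ z) = ∅ := by
      rw [Finset.filter_eq_empty_iff]
      intro z hz
      simp only [ne_eq, not_not]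
      exact hex z (Multiset.mem_toFinset.mp hz)
    rw [hD, Finset.prod_empty]
    -- the solution set is a singleton
    set s₀ : Multiset α :=
      Finsupp.toMultiset (Finsupp.mapRange (· / 2) (by simp) M.toFinsupp) with hs₀
    have hs₀count : ∀ z, s₀.count z = M.count z / 2 := by
      intro z
      rw [hs₀, Finsupp.count_toMultiset, Finsupp.mapRange_apply, Multiset.toFinsupp_apply]
    have hmem : ∀ z, z ∈ s₀ → z ∈ M := by
      intro z hz
      have h1 : 0 < s₀.count z := Multiset.count_pos.mpr hz
      rw [hs₀count] at h1
      exact Multiset.count_pos.mp (by omega)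
    have hset : {s : Multiset α | s + s.map r = M} = {s₀} := by
      ext s
      simp only [Set.mem_setOf_eq, Set.mem_singleton_iff]
      constructor
      · intro hs
        have hsle : s ≤ M := hs ▸ Multiset.le_add_right s _
        have hmap : s.map r = s :=
          map_fix s (fun z hz => hex z (Multiset.mem_of_le hsle hz))
        rw [hmap] at hs
        ext z
        rw [hs₀count]
        have := congrArg (Multiset.count z) hs
        rw [Multiset.count_add] at this
        omega
      · rintro rfl
        have hmap : s₀.map r = s₀ := map_fix s₀ (fun z hz => hex z (hmem z hz))
        rw [hmap]
        ext z
        rw [Multiset.count_add, hs₀count]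
        by_cases hz : z ∈ M
        · obtain ⟨k, hk⟩ := heven z hz (hex z hz)
          omega
        · have : M.count z = 0 := Multiset.count_eq_zero.mpr hz
          omega
    rw [hset]
    simp

end Stmt8Aux

/-- Let `f ∈ F_q[λ]` (with `q` odd) be monic self-reciprocal.
Assume there is a unique monic irreducible self-reciprocal `Q₀` whose
multiplicity `m_{Q₀}(f)` in `f` is odd, and let `m` be odd with
`1 ≤ m ≤ m_{Q₀}(f)`.  Then the square of the number of monic `U` with
`U·U* = f/Q₀^m` equals `∏ (1 + m_Q(f))` over all monic irreducible `Q` with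
`Q(0) ≠ 0`, `Q ≠ Q*` and `Q ∣ f`. -/
theorem stmt8 {F : Type*} [Field F] [Fintype F] (hodd : Odd (Fintype.card F))
    (f : Polynomial F) (hmonic : f.Monic) (h0 : f.coeff 0 ≠ 0) (hsr : recip f = f)
    (Q0 : Polynomial F) (hQ0monic : Q0.Monic) (hQ0irr : Irreducible Q0)
    (hQ00 : Q0.coeff 0 ≠ 0) (hQ0sr : recip Q0 = Q0)
    (hQ0odd : Odd (multiplicity Q0 f))
    (huniq : ∀ Q : Polynomial F, Q.Monic → Irreducible Q → Q.coeff 0 ≠ 0 →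
      recip Q = Q → Odd (multiplicity Q f) → Q = Q0)
    (m : ℕ) (hmodd : Odd m) (hm1 : 1 ≤ m) (hm2 : m ≤ multiplicity Q0 f) :
    (Nat.card {U : Polynomial F | U.Monic ∧ U * recip U = f / Q0 ^ m}) ^ 2 =
      ∏ᶠ Q ∈ {Q : Polynomial F |
          Q.Monic ∧ Irreducible Q ∧ Q.coeff 0 ≠ 0 ∧ Q ≠ recip Q ∧ Q ∣ f},
        (1 + multiplicity Q f) := by
  classical
  have hf0 : f ≠ 0 := hmonic.ne_zero
  have hQ0ne : Q0 ≠ 0 := hQ0monic.ne_zero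
  have hQ0pow : (Q0 : Polynomial F) ^ m ≠ 0 := pow_ne_zero _ hQ0ne
  have hdvd : Q0 ^ m ∣ f := pow_dvd_of_le_multiplicity hm2
  obtain ⟨g, hfg⟩ := hdvd
  have hgdef : f / Q0 ^ m = g := by
    rw [hfg]
    apply mul_left_cancel₀ hQ0pow
    exact EuclideanDomain.mul_div_cancel' hQ0pow ⟨g, rfl⟩
  have hg0 : g ≠ 0 := fun h => hf0 (by rw [hfg, h, mul_zero])
  have hgmonic : g.Monic := (hQ0monic.pow m).of_mul_monic_left (hfg ▸ hmonic)
  have hgc0 : g.coeff 0 ≠ 0 := fun h =>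
    h0 (by rw [hfg, Polynomial.mul_coeff_zero, h, mul_zero])
  have hrecipg : recip g = g := by
    have h1 : recip f = recip (Q0 ^ m) * recip g := by rw [hfg, recip_mul']
    have h2 : recip (Q0 ^ m) = Q0 ^ m := by
      have h3 : recip (Q0 ^ m) = (recip Q0) ^ m := map_pow (recipHom (F := F)) Q0 m
      rw [h3, hQ0sr]
    rw [hsr, h2, hfg] at h1
    exact (mul_left_cancel₀ hQ0pow h1).symm
  set M := UniqueFactorizationMonoid.normalizedFactors g with hMdef
  have hmemM : ∀ z ∈ M, z.Monic ∧ Irreducible z ∧ z.coeff 0 ≠ 0 :=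
    fun z hz => mem_nf hgmonic hgc0 hz
  -- the involution
  set r : Polynomial F → Polynomial F :=
    fun p => if p.Monic ∧ p.coeff 0 ≠ 0 then recip p else p with hrdef
  have hrspec : ∀ p : Polynomial F, p.Monic → p.coeff 0 ≠ 0 → r p = recip p := by
    intro p h1 h2
    rw [hrdef]
    exact if_pos ⟨h1, h2⟩
  have hrinv : Function.Involutive r := by
    intro p
    by_cases h : p.Monic ∧ p.coeff 0 ≠ 0
    · rw [hrdef]
      simp only [if_pos h]
      rw [if_pos ⟨recip_monic h.1 h.2, recip_coeff_zero_ne h.1 h.2⟩]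
      exact recip_recip h.1 h.2
    · rw [hrdef]
      simp only [if_neg h, if_neg h]
  have hMmapr : M.map r = M := by
    have step1 : M.map r = M.map recip :=
      Multiset.map_congr rfl (fun z hz => hrspec z (hmemM z hz).1 (hmemM z hz).2.2)
    have step2 : M.prod = g := prod_nf_monic hgmonic
    have step3 : (M.map recip).prod = recip g := by
      have := Multiset.prod_hom M (recipHom (F := F))
      simpa [recipHom, step2] using this
    have step4 : UniqueFactorizationMonoid.normalizedFactors ((M.map recip).prod) =
        M.map recip := by
      apply nf_prod
      intro z hz
      obtain ⟨w, hw, rfl⟩ := Multiset.mem_map.mp hz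
      obtain ⟨h1, h2, h3⟩ := hmemM w hw
      exact ⟨recip_irreducible h1 h3 h2, (recip_monic h1 h3).normalize_eq_self⟩
    rw [step1, ← step4, step3, hrecipg]
  have hnf_f : UniqueFactorizationMonoid.normalizedFactors f =
      Multiset.replicate m Q0 + M := by
    rw [hfg, UniqueFactorizationMonoid.normalizedFactors_mul hQ0pow hg0]
    congr 1
    rw [show (Q0 : Polynomial F) ^ m = (Multiset.replicate m Q0).prod from
      (Multiset.prod_replicate m Q0).symm]
    apply nf_prod
    intro z hz
    rw [Multiset.eq_of_mem_replicate hz]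
    exact ⟨hQ0irr, hQ0monic.normalize_eq_self⟩
  have hcount : ∀ z : Polynomial F, z.Monic → Irreducible z →
      multiplicity z f = (if z = Q0 then m else 0) + M.count z := by
    intro z h1 h2
    rw [mult_count h2 h1.normalize_eq_self hf0, hnf_f, Multiset.count_add,
      Multiset.count_replicate]
    rcases eq_or_ne z Q0 with h | h
    · simp [h]
    · rw [if_neg h, if_neg (fun hh => h hh.symm)]
  have heven : ∀ z ∈ M, r z = z → Even (M.count z) := by
    intro z hz hrz
    obtain ⟨hzm, hzirr, hz0⟩ := hmemM z hz
    have hzrec : recip z = z := by rw [← hrspec z hzm hz0]; exact hrz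
    by_cases hzQ : z = Q0
    · subst hzQ
      have := hcount z hzm hzirr
      rw [if_pos rfl] at this
      rw [this] at hQ0odd
      exact (Nat.odd_add.mp hQ0odd).mp hmodd
    · have hnotodd : ¬ Odd (multiplicity z f) := fun ho =>
        hzQ (huniq z hzm hzirr hz0 hzrec ho)
      rw [Nat.not_odd_iff_even, hcount z hzm hzirr, if_neg hzQ, zero_add] at hnotodd
      exact hnotodd
  -- identify the index set of the RHS product
  have hS : {Q : Polynomial F |
      Q.Monic ∧ Irreducible Q ∧ Q.coeff 0 ≠ 0 ∧ Q ≠ recip Q ∧ Q ∣ f} =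
      ↑(M.toFinset.filter (fun z => r z ≠ z)) := by
    ext Q
    simp only [Set.mem_setOf_eq, Finset.coe_filter, Multiset.mem_toFinset]
    constructor
    · rintro ⟨h1, h2, h3, h4, h5⟩
      have hQne : Q ≠ Q0 := fun h => h4 (by rw [h, hQ0sr])
      have hQprime : Prime Q := (UniqueFactorizationMonoid.irreducible_iff_prime).mp h2
      have hQdvdg : Q ∣ g := by
        rcases hQprime.dvd_mul.mp (hfg ▸ h5) with h | h
        · exfalso
          have hQQ0 : Q ∣ Q0 := hQprime.dvd_of_dvd_pow h
          have := Polynomial.eq_of_monic_of_associated h1 hQ0monic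
            (h2.associated_of_dvd hQ0irr hQQ0)
          exact hQne this
        · exact h
      have hQM : Q ∈ M := by
        rw [← Multiset.count_pos]
        show 0 < Multiset.count Q (UniqueFactorizationMonoid.normalizedFactors g)
        have hne : multiplicity Q g ≠ 0 := fun h => (multiplicity_eq_zero.mp h) hQdvdg
        rw [mult_count h2 h1.normalize_eq_self hg0] at hne
        omega
      refine ⟨hQM, ?_⟩
      rw [hrspec Q h1 h3]
      exact fun h => h4 h.symm
    · rintro ⟨hQM, hrQ⟩
      obtain ⟨h1, h2, h3⟩ := hmemM Q hQM
      have h4 : Q ≠ recip Q := by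
        intro h
        apply hrQ
        rw [hrspec Q h1 h3, ← h]
      have h5 : Q ∣ f := by
        have := UniqueFactorizationMonoid.dvd_of_mem_normalizedFactors hQM
        exact this.trans ⟨Q0 ^ m, by rw [hfg]; ring⟩
      exact ⟨h1, h2, h3, h4, h5⟩
  rw [hS, finprod_mem_coe_finset]
  have hprodeq : ∏ Q ∈ M.toFinset.filter (fun z => r z ≠ z), (1 + multiplicity Q f) =
      ∏ Q ∈ M.toFinset.filter (fun z => r z ≠ z), (1 + M.count Q) := by
    apply Finset.prod_congr rfl
    intro Q hQ
    simp only [Finset.mem_filter, Multiset.mem_toFinset] at hQ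
    obtain ⟨h1, h2, h3⟩ := hmemM Q hQ.1
    have hQne : Q ≠ Q0 := by
      rintro rfl
      apply hQ.2
      rw [hrspec Q h1 h3, hQ0sr]
    rw [hcount Q h1 h2, if_neg hQne, zero_add]
  rw [hprodeq]
  -- bijection between solution sets
  have hsetU : {U : Polynomial F | U.Monic ∧ U * recip U = f / Q0 ^ m} =
      {U : Polynomial F | U.Monic ∧ U * recip U = g} := by
    rw [hgdef]
  rw [hsetU]
  have hcardeq : Nat.card {U : Polynomial F | U.Monic ∧ U * recip U = g} =
      Nat.card {s : Multiset (Polynomial F) | s + s.map r = M} := by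
    apply Nat.card_congr
    refine
      { toFun := fun U => ⟨UniqueFactorizationMonoid.normalizedFactors (U : Polynomial F), ?_⟩,
        invFun := fun s => ⟨(s : Multiset (Polynomial F)).prod, ?_⟩,
        left_inv := ?_, right_inv := ?_ }
    · obtain ⟨U, hUm, hUeq⟩ := U
      have hUne : U ≠ 0 := by
        intro h
        apply hg0
        rw [← hUeq, h, zero_mul]
      have hrUne : recip U ≠ 0 := by
        intro h
        apply hg0
        rw [← hUeq, h, mul_zero]
      have hU0 : U.coeff 0 ≠ 0 := by
        intro h
        apply hrUne
        rw [recip, h, inv_zero, Polynomial.C_0, zero_mul]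
      show UniqueFactorizationMonoid.normalizedFactors U +
        (UniqueFactorizationMonoid.normalizedFactors U).map r = M
      have hmapr : (UniqueFactorizationMonoid.normalizedFactors U).map r =
          (UniqueFactorizationMonoid.normalizedFactors U).map recip :=
        Multiset.map_congr rfl (fun z hz =>
          hrspec z (mem_nf hUm hU0 hz).1 (mem_nf hUm hU0 hz).2.2)
      rw [hmapr, ← nf_recip hUm hU0, hMdef, ← hUeq,
        UniqueFactorizationMonoid.normalizedFactors_mul hUne hrUne]
    · obtain ⟨s, hs⟩ := s
      simp only [Set.mem_setOf_eq] at hs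
      have hsle : s ≤ M := hs ▸ Multiset.le_add_right s _
      have hsmem : ∀ z ∈ s, z.Monic ∧ Irreducible z ∧ z.coeff 0 ≠ 0 :=
        fun z hz => hmemM z (Multiset.mem_of_le hsle hz)
      have hsm : s.prod.Monic := monic_msprod (fun z hz => (hsmem z hz).1)
      refine ⟨hsm, ?_⟩
      have hmapr : s.map r = s.map recip :=
        Multiset.map_congr rfl (fun z hz => hrspec z (hsmem z hz).1 (hsmem z hz).2.2)
      have hrecprod : recip s.prod = (s.map recip).prod := by
        have := Multiset.prod_hom s (recipHom (F := F))
        simpa [recipHom] using this.symm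
      rw [hrecprod, ← Multiset.prod_add, ← hmapr, hs]
      exact prod_nf_monic hgmonic
    · rintro ⟨U, hUm, hUeq⟩
      ext1
      exact prod_nf_monic hUm
    · rintro ⟨s, hs⟩
      simp only [Set.mem_setOf_eq] at hs
      have hsle : s ≤ M := hs ▸ Multiset.le_add_right s _
      have hsmem : ∀ z ∈ s, z.Monic ∧ Irreducible z ∧ z.coeff 0 ≠ 0 :=
        fun z hz => hmemM z (Multiset.mem_of_le hsle hz)
      ext1
      apply nf_prod
      intro z hz
      exact ⟨(hsmem z hz).2.1, (hsmem z hz).1.normalize_eq_self⟩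
  rw [hcardeq]
  exact count_lemma M r hrinv hMmapr heven
end

section
/- Fix an odd prime power q. Let f ∈ F_{q²}[λ] be monic and self-reciprocal. Assume there is a unique monic irreducible self-reciprocal polynomial Q_0 ∈ F_{q²}[λ] such that the multiplicity m_{Q_0}(f) of Q_0 in f is odd, and let m be an odd integer with 1 ≤ m ≤ m_{Q_0}(f). Then the square of the number of monic polynomials U ∈ F_{q²}[λ] satisfying U·U* = f/Q_0^m equals the product of (1 + m_Q(f)) over all monic irreducible polynomials Q ∈ F_{q²}[λ] with Q(0) ≠ 0, Q ≠ Q*, and Q dividing f. -/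
/-- The polynomial obtained by applying `x ↦ x^q` to the coefficients of `f`. -/
noncomputable def frobPoly {F : Type*} [Semiring F] (q : ℕ) (f : Polynomial F) :
    Polynomial F :=
  f.sum fun n a => Polynomial.C (a ^ q) * Polynomial.X ^ n

/-- The reciprocal polynomial `f*(λ) = (f(0)^σ)⁻¹ · λ^(deg f) · f^σ(1/λ)` of a
polynomial over `F_{q²}`, where `σ : x ↦ x^q` is the `q`-power Frobenius. -/
noncomputable def recip2 {F : Type*} [Field F] (q : ℕ) (f : Polynomial F) : Polynomial F :=
  Polynomial.C ((f.coeff 0 ^ q)⁻¹) * (frobPoly q f).reverse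

open Polynomial

section RecipAPI

variable {F : Type*} [Field F] {q : ℕ} {φ : F →+* F}

lemma frobPoly_eq_map (hφ : ∀ x, φ x = x ^ q) (f : F[X]) : frobPoly q f = f.map φ := by
  rw [frobPoly, Polynomial.map, eval₂_eq_sum, Polynomial.sum_def, Polynomial.sum_def]
  exact Finset.sum_congr rfl fun n _ => by rw [RingHom.comp_apply, hφ]

lemma recip2_eq (hφ : ∀ x, φ x = x ^ q) (f : F[X]) :
    recip2 q f = C ((f.coeff 0 ^ q)⁻¹) * (f.map φ).reverse := by
  rw [recip2, frobPoly_eq_map hφ]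

/-- reverse commutes with map along an injective ring hom -/
lemma reverse_map_comm (f : F[X]) : (f.map φ).reverse = f.reverse.map φ := by
  have hd : (f.map φ).natDegree = f.natDegree := natDegree_map_eq_of_injective φ.injective f
  ext n
  rw [coeff_reverse, hd, coeff_map, coeff_map, coeff_reverse]

lemma natTrailing_zero {f : F[X]} (h0 : f.coeff 0 ≠ 0) : f.natTrailingDegree = 0 :=
  natTrailingDegree_eq_zero.mpr (Or.inr h0)

lemma trailingCoeff_eq_coeff_zero {f : F[X]} (h0 : f.coeff 0 ≠ 0) : f.trailingCoeff = f.coeff 0 := by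
  rw [trailingCoeff, natTrailing_zero h0]

lemma reverse_natDegree_eq {f : F[X]} (h0 : f.coeff 0 ≠ 0) : f.reverse.natDegree = f.natDegree := by
  rw [reverse_natDegree, natTrailing_zero h0, Nat.sub_zero]

lemma reverse_reverse_of_coeff_zero {f : F[X]} (h0 : f.coeff 0 ≠ 0) : f.reverse.reverse = f := by
  ext n
  rw [coeff_reverse, reverse_natDegree_eq h0, coeff_reverse]
  by_cases hn : n ≤ f.natDegree
  · rw [revAt_le hn, revAt_le (Nat.sub_le _ _), Nat.sub_sub_self hn]
  · rw [revAt_eq_self_of_lt (Nat.lt_of_not_le hn), revAt_eq_self_of_lt (Nat.lt_of_not_le hn)]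

lemma recip2_monic (hφ : ∀ x, φ x = x ^ q) {f : F[X]} (hm : f.Monic) (h0 : f.coeff 0 ≠ 0) :
    (recip2 q f).Monic := by
  have h0q : f.coeff 0 ^ q ≠ 0 := pow_ne_zero _ h0
  have hmap0 : (f.map φ).coeff 0 ≠ 0 := by
    rw [coeff_map, hφ]; exact h0q
  rw [Monic, recip2_eq hφ, leadingCoeff_mul, leadingCoeff_C, reverse_leadingCoeff,
    _root_.trailingCoeff_eq_coeff_zero hmap0, coeff_map, hφ]
  exact inv_mul_cancel₀ h0q

lemma recip2_natDegree (hφ : ∀ x, φ x = x ^ q) {f : F[X]} (h0 : f.coeff 0 ≠ 0) :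
    (recip2 q f).natDegree = f.natDegree := by
  have h0q : (f.coeff 0 ^ q)⁻¹ ≠ 0 := inv_ne_zero (pow_ne_zero _ h0)
  have hmap0 : (f.map φ).coeff 0 ≠ 0 := by
    rw [coeff_map, hφ]; exact pow_ne_zero _ h0
  rw [recip2_eq hφ, natDegree_C_mul h0q, reverse_natDegree_eq hmap0,
    natDegree_map_eq_of_injective φ.injective]

lemma recip2_coeff_zero (hφ : ∀ x, φ x = x ^ q) {f : F[X]} (h0 : f.coeff 0 ≠ 0) :
    (recip2 q f).coeff 0 = (f.coeff 0 ^ q)⁻¹ * f.leadingCoeff ^ q := by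
  rw [recip2_eq hφ, coeff_C_mul, coeff_zero_reverse, leadingCoeff_map_of_injective φ.injective, hφ]

lemma recip2_coeff_zero_ne (hφ : ∀ x, φ x = x ^ q) {f : F[X]} (h0 : f.coeff 0 ≠ 0)
    (hf : f ≠ 0) : (recip2 q f).coeff 0 ≠ 0 := by
  rw [recip2_coeff_zero hφ h0]
  exact mul_ne_zero (inv_ne_zero (pow_ne_zero _ h0)) (pow_ne_zero _ (leadingCoeff_ne_zero.mpr hf))

lemma recip2_mul (hφ : ∀ x, φ x = x ^ q) {a b : F[X]} (ha : a.coeff 0 ≠ 0) (hb : b.coeff 0 ≠ 0) :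
    recip2 q (a * b) = recip2 q a * recip2 q b := by
  rw [recip2_eq hφ, recip2_eq hφ, recip2_eq hφ, Polynomial.map_mul, reverse_mul_of_domain,
    mul_coeff_zero, mul_pow, mul_inv, C_mul]
  ring

lemma reverse_C_mul {a : F} (ha : a ≠ 0) (f : F[X]) : (C a * f).reverse = C a * f.reverse := by
  rw [reverse, reverse, natDegree_C_mul ha, reflect_C_mul]

lemma recip2_one (hq0 : q ≠ 0) : recip2 (F := F) q 1 = 1 := by
  have h1 : frobPoly q (1 : F[X]) = 1 := by
    rw [frobPoly, ← C_1, sum_C_index]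
    · simp
    · simp [zero_pow hq0]
  rw [recip2, h1, coeff_one]
  have : reverse (1 : F[X]) = 1 := by rw [← C_1, reverse_C]
  simp [this]

lemma recip2_pow (hφ : ∀ x, φ x = x ^ q) (hq0 : q ≠ 0) {a : F[X]} (ha : a.coeff 0 ≠ 0) (k : ℕ) :
    recip2 q (a ^ k) = recip2 q a ^ k := by
  induction k with
  | zero => simpa using recip2_one hq0
  | succ k ih =>
    have hak : (a ^ k).coeff 0 ≠ 0 := by
      have : (a ^ k).coeff 0 = a.coeff 0 ^ k := by
        simpa using (Polynomial.constantCoeff (R := F)).map_pow a k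
      rw [this]; exact pow_ne_zero _ ha
    rw [pow_succ, recip2_mul hφ hak ha, ih, pow_succ]

lemma recip2_recip2 (hφ : ∀ x, φ x = x ^ q) (hq2 : ∀ x : F, (x ^ q) ^ q = x)
    {f : F[X]} (hm : f.Monic) (h0 : f.coeff 0 ≠ 0) : recip2 q (recip2 q f) = f := by
  have hφφ : ∀ x : F, φ (φ x) = x := fun x => by rw [hφ, hφ, hq2]
  have hc : (f.coeff 0 ^ q)⁻¹ ≠ 0 := inv_ne_zero (pow_ne_zero _ h0)
  have hmapf : ∀ g : F[X], (g.map φ).map φ = g := fun g => by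
    rw [Polynomial.map_map]
    have : φ.comp φ = RingHom.id F := RingHom.ext hφφ
    rw [this, Polynomial.map_id]
  have key : (recip2 q f).map φ = C ((f.coeff 0)⁻¹) * f.reverse := by
    rw [recip2_eq hφ, Polynomial.map_mul, map_C, reverse_map_comm, hmapf]
    congr 2
    rw [map_inv₀, hφ, hq2]
  have hcz : (recip2 q f).coeff 0 = (f.coeff 0 ^ q)⁻¹ := by
    rw [recip2_coeff_zero hφ h0, hm.leadingCoeff, one_pow, mul_one]
  have h0inv : (f.coeff 0)⁻¹ ≠ 0 := inv_ne_zero h0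
  rw [recip2_eq hφ, key, hcz, reverse_C_mul h0inv, reverse_reverse_of_coeff_zero h0,
    ← mul_assoc, ← C_mul, inv_pow, hq2, inv_inv, mul_inv_cancel₀ h0, C_1, one_mul]

end RecipAPI

section RecipAPI2

variable {F : Type*} [Field F] {q : ℕ} {φ : F →+* F}

lemma natDegree_pos_of_not_isUnit {a : F[X]} (ha : a ≠ 0) (hu : ¬IsUnit a) :
    0 < a.natDegree := by
  rcases Nat.eq_zero_or_pos a.natDegree with h | h
  · exact absurd (by
      rw [eq_C_of_natDegree_eq_zero h]
      exact isUnit_C.mpr (isUnit_iff_ne_zero.mpr (by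
        intro hc
        exact ha (by rw [eq_C_of_natDegree_eq_zero h, hc, C_0])))) hu
  · exact h

lemma not_isUnit_of_natDegree_pos' {a : F[X]} (h : 0 < a.natDegree) : ¬IsUnit a := fun hu =>
  by simp [natDegree_eq_zero_of_isUnit hu] at h

lemma recip2_irreducible (hφ : ∀ x, φ x = x ^ q) (hq2 : ∀ x : F, (x ^ q) ^ q = x)
    {Q : F[X]} (hm : Q.Monic) (h0 : Q.coeff 0 ≠ 0) (hi : Irreducible Q) :
    Irreducible (recip2 q Q) := by
  have hQne : Q ≠ 0 := hm.ne_zero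
  have hdeg : (recip2 q Q).natDegree = Q.natDegree := recip2_natDegree hφ h0
  have hQdeg : 0 < Q.natDegree := hi.natDegree_pos
  constructor
  · exact not_isUnit_of_natDegree_pos' (by rw [hdeg]; exact hQdeg)
  · intro a b hab
    by_contra hcon
    push_neg at hcon
    obtain ⟨hua, hub⟩ := hcon
    have hRne : recip2 q Q ≠ 0 := (recip2_monic hφ hm h0).ne_zero
    have hane : a ≠ 0 := fun h => hRne (by rw [hab, h, zero_mul])
    have hbne : b ≠ 0 := fun h => hRne (by rw [hab, h, mul_zero])
    have hR0 : (recip2 q Q).coeff 0 ≠ 0 := recip2_coeff_zero_ne hφ h0 hQne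
    have ha0 : a.coeff 0 ≠ 0 := fun h => hR0 (by rw [hab, mul_coeff_zero, h, zero_mul])
    have hb0 : b.coeff 0 ≠ 0 := fun h => hR0 (by rw [hab, mul_coeff_zero, h, mul_zero])
    have hQeq : Q = recip2 q a * recip2 q b := by
      rw [← recip2_mul hφ ha0 hb0, ← hab, recip2_recip2 hφ hq2 hm h0]
    have hadeg : 0 < a.natDegree := natDegree_pos_of_not_isUnit hane hua
    have hbdeg : 0 < b.natDegree := natDegree_pos_of_not_isUnit hbne hub
    rcases hi.isUnit_or_isUnit hQeq with h | h
    · exact not_isUnit_of_natDegree_pos' (by rw [recip2_natDegree hφ ha0]; exact hadeg) h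
    · exact not_isUnit_of_natDegree_pos' (by rw [recip2_natDegree hφ hb0]; exact hbdeg) h

lemma recip2_multiset_prod (hφ : ∀ x, φ x = x ^ q) (hq0 : q ≠ 0) (s : Multiset F[X])
    (h : ∀ x ∈ s, x.coeff 0 ≠ 0) : recip2 q s.prod = (s.map (recip2 q)).prod := by
  induction s using Multiset.induction with
  | empty => simpa using recip2_one hq0
  | cons a s ih =>
    have ha : a.coeff 0 ≠ 0 := h a (Multiset.mem_cons_self a s)
    have hs : ∀ x ∈ s, x.coeff 0 ≠ 0 := fun x hx => h x (Multiset.mem_cons_of_mem hx)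
    have hsp : s.prod.coeff 0 ≠ 0 := by
      rw [coeff_zero_multiset_prod]
      exact Multiset.prod_ne_zero (by
        intro h0
        obtain ⟨x, hx, hx0⟩ := Multiset.mem_map.mp h0
        exact hs x hx hx0)
    rw [Multiset.prod_cons, recip2_mul hφ ha hsp, ih hs, Multiset.map_cons, Multiset.prod_cons]

end RecipAPI2

section Core

variable {α : Type*}

/-- The set of "choice functions" for an involution-constrained counting problem. -/
def CSet (ι : α → α) (w : α → ℕ) (V : Finset α) : Type _ :=
  {c : α → ℕ // (∀ x, x ∉ V → c x = 0) ∧ ∀ x ∈ V, c x + c (ι x) = w x}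

lemma core_count [DecidableEq α] (ι : α → α) (w : α → ℕ) (V : Finset α)
    (hmap : ∀ x ∈ V, ι x ∈ V) (hinv : ∀ x ∈ V, ι (ι x) = x)
    (hw : ∀ x ∈ V, w (ι x) = w x) (heven : ∀ x ∈ V, ι x = x → Even (w x)) :
    (Nat.card (CSet ι w V)) ^ 2 = ∏ x ∈ V, (if ι x = x then 1 else 1 + w x) := by
  induction V using Finset.strongInduction with
  | _ V IH =>
  rcases V.eq_empty_or_nonempty with rfl | ⟨x, hx⟩
  · have e : CSet ι w ∅ ≃ PUnit.{1} :=
      { toFun := fun _ => PUnit.unit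
        invFun := fun _ => ⟨fun _ => 0, fun x _ => rfl, fun x hx => absurd hx (by simp)⟩
        left_inv := fun c => Subtype.ext (funext fun y => (c.2.1 y (by simp)).symm)
        right_inv := fun _ => rfl }
    rw [Nat.card_congr e]
    simp
  by_cases hfix : ι x = x
  · -- fixed point case
    obtain ⟨k, hk⟩ := heven x hx hfix
    set V' := V.erase x with hV'
    have hxV' : x ∉ V' := Finset.notMem_erase x V
    have hmem' : ∀ y ∈ V', y ∈ V := fun y hy => Finset.mem_of_mem_erase hy
    have hιne : ∀ y ∈ V', ι y ≠ x := by
      intro y hy hc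
      have : y = ι x := by rw [← hc, hinv y (hmem' y hy)]
      exact (Finset.ne_of_mem_erase hy) (by rw [this, hfix])
    have hmap' : ∀ y ∈ V', ι y ∈ V' :=
      fun y hy => Finset.mem_erase.mpr ⟨hιne y hy, hmap y (hmem' y hy)⟩
    have e : CSet ι w V ≃ CSet ι w V' :=
      { toFun := fun c => ⟨Function.update c.1 x 0, by
          constructor
          · intro y hy
            simp only [Function.update_apply]
            by_cases hyx : y = x
            · rw [if_pos hyx]
            · rw [if_neg hyx]
              exact c.2.1 y (fun hyV => hy (Finset.mem_erase.mpr ⟨hyx, hyV⟩))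
          · intro y hy
            simp only [Function.update_apply]
            rw [if_neg (Finset.ne_of_mem_erase hy), if_neg (hιne y hy)]
            exact c.2.2 y (hmem' y hy)⟩
        invFun := fun d => ⟨Function.update d.1 x k, by
          constructor
          · intro y hy
            simp only [Function.update_apply]
            rw [if_neg (fun h : y = x => hy (by rw [h]; exact hx))]
            exact d.2.1 y (fun hyV => hy (hmem' y hyV))
          · intro y hy
            simp only [Function.update_apply]
            by_cases hyx : y = x
            · rw [if_pos hyx, if_pos (show ι y = x by rw [hyx, hfix]), hyx]
              omega
            · rw [if_neg hyx, if_neg (fun hc : ι y = x =>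
                hyx (by rw [← hinv y hy, hc, hfix]))]
              exact d.2.2 y (Finset.mem_erase.mpr ⟨hyx, hy⟩)⟩
        left_inv := fun c => by
          apply Subtype.ext
          funext y
          simp only [Function.update_apply]
          by_cases hyx : y = x
          · rw [if_pos hyx, hyx]
            have := c.2.2 x hx
            rw [hfix] at this
            omega
          · rw [if_neg hyx, if_neg hyx]
        right_inv := fun d => by
          apply Subtype.ext
          funext y
          simp only [Function.update_apply]
          by_cases hyx : y = x
          · rw [if_pos hyx, hyx]
            exact (d.2.1 x hxV').symm
          · rw [if_neg hyx, if_neg hyx] }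
    rw [Nat.card_congr e]
    rw [IH V' (Finset.erase_ssubset hx) hmap'
      (fun y hy => hinv y (hmem' y hy)) (fun y hy => hw y (hmem' y hy))
      (fun y hy h => heven y (hmem' y hy) h)]
    rw [← Finset.mul_prod_erase V _ hx, if_pos hfix, one_mul]
  · -- non-fixed point case
    set y := ι x with hy_def
    have hyV : y ∈ V := hmap x hx
    have hyx : y ≠ x := fun h => hfix h
    have hιy : ι y = x := hinv x hx
    set V'' := (V.erase x).erase y with hV''
    have hxV'' : x ∉ V'' := fun h => (Finset.notMem_erase x V) (Finset.mem_of_mem_erase h)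
    have hyV'' : y ∉ V'' := Finset.notMem_erase y _
    have hmem'' : ∀ z ∈ V'', z ∈ V := fun z hz =>
      Finset.mem_of_mem_erase (Finset.mem_of_mem_erase hz)
    have hne_x : ∀ z ∈ V'', z ≠ x := fun z hz =>
      Finset.ne_of_mem_erase (Finset.mem_of_mem_erase hz)
    have hne_y : ∀ z ∈ V'', z ≠ y := fun z hz => Finset.ne_of_mem_erase hz
    have hιne_x : ∀ z ∈ V'', ι z ≠ x := by
      intro z hz hc
      exact hne_y z hz (by rw [← hinv z (hmem'' z hz), hc])
    have hιne_y : ∀ z ∈ V'', ι z ≠ y := by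
      intro z hz hc
      exact hne_x z hz (by rw [← hinv z (hmem'' z hz), hc, hιy])
    have hmap'' : ∀ z ∈ V'', ι z ∈ V'' := fun z hz =>
      Finset.mem_erase.mpr ⟨hιne_y z hz, Finset.mem_erase.mpr ⟨hιne_x z hz,
        hmap z (hmem'' z hz)⟩⟩
    have hwy : w y = w x := hw x hx
    have e : CSet ι w V ≃ Fin (w x + 1) × CSet ι w V'' :=
      { toFun := fun c =>
          (⟨c.1 x, by have := c.2.2 x hx; omega⟩,
           ⟨Function.update (Function.update c.1 x 0) y 0, by
            constructor
            · intro z hz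
              simp only [Function.update_apply]
              by_cases hzy : z = y
              · rw [if_pos hzy]
              · rw [if_neg hzy]
                by_cases hzx : z = x
                · rw [if_pos hzx]
                · rw [if_neg hzx]
                  exact c.2.1 z (fun hzV => hz (Finset.mem_erase.mpr ⟨hzy,
                    Finset.mem_erase.mpr ⟨hzx, hzV⟩⟩))
            · intro z hz
              simp only [Function.update_apply]
              rw [if_neg (hne_y z hz), if_neg (hne_x z hz),
                if_neg (hιne_y z hz), if_neg (hιne_x z hz)]
              exact c.2.2 z (hmem'' z hz)⟩)
        invFun := fun kd =>
          ⟨Function.update (Function.update kd.2.1 y (w x - kd.1.1)) x kd.1.1, by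
            constructor
            · intro z hz
              simp only [Function.update_apply]
              rw [if_neg (fun h : z = x => hz (by rw [h]; exact hx)),
                if_neg (fun h : z = y => hz (by rw [h]; exact hyV))]
              exact kd.2.2.1 z (fun hzV => hz (hmem'' z hzV))
            · intro z hz
              simp only [Function.update_apply]
              by_cases hzx : z = x
              · have hιz : ι z = y := by rw [hzx, ← hy_def]
                rw [if_pos hzx, if_neg (show ¬ι z = x by rw [hιz]; exact hyx),
                  if_pos hιz, hzx]
                have := kd.1.2
                omega
              · by_cases hzy : z = y
                · have hιz : ι z = x := by rw [hzy]; exact hιy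
                  rw [if_neg hzx, if_pos hzy, if_pos hιz, hzy, hwy]
                  have := kd.1.2
                  omega
                · have hιz_x : ι z ≠ x := fun hc => hzy (by rw [← hinv z hz, hc])
                  have hιz_y : ι z ≠ y := fun hc => hzx (by rw [← hinv z hz, hc, hιy])
                  rw [if_neg hzx, if_neg hzy, if_neg hιz_x, if_neg hιz_y]
                  exact kd.2.2.2 z (Finset.mem_erase.mpr ⟨hzy, Finset.mem_erase.mpr ⟨hzx, hz⟩⟩)⟩
        left_inv := fun c => by
          apply Subtype.ext
          funext z
          simp only [Function.update_apply]
          by_cases hzx : z = x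
          · rw [if_pos hzx, hzx]
          · rw [if_neg hzx]
            by_cases hzy : z = y
            · rw [if_pos hzy, hzy]
              have h1 := c.2.2 x hx
              rw [← hy_def] at h1
              omega
            · rw [if_neg hzy, if_neg hzy, if_neg hzx]
        right_inv := fun kd => by
          obtain ⟨k, d⟩ := kd
          refine Prod.ext ?_ ?_
          · apply Fin.ext
            simp [Function.update_apply]
          · apply Subtype.ext
            funext z
            simp only [Function.update_apply]
            by_cases hzy : z = y
            · rw [if_pos hzy, hzy]
              exact (d.2.1 y hyV'').symm
            · rw [if_neg hzy]
              by_cases hzx : z = x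
              · rw [if_pos hzx, hzx]
                exact (d.2.1 x hxV'').symm
              · rw [if_neg hzx, if_neg hzx, if_neg hzy] }
    rw [Nat.card_congr e, Nat.card_prod, Nat.card_eq_fintype_card, Fintype.card_fin]
    have hprod : ∏ z ∈ V, (if ι z = z then 1 else 1 + w z) =
        (1 + w x) * ((1 + w y) * ∏ z ∈ V'', (if ι z = z then 1 else 1 + w z)) := by
      rw [← Finset.mul_prod_erase V _ hx, if_neg hfix]
      congr 1
      rw [← Finset.mul_prod_erase (V.erase x) _ (Finset.mem_erase.mpr ⟨hyx, hyV⟩),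
        if_neg (by rw [hιy]; exact fun h => hyx h.symm)]
    rw [hprod, hwy, mul_pow, IH V'' (((Finset.erase_ssubset (Finset.mem_erase.mpr ⟨hyx, hyV⟩)).trans_subset
        (Finset.erase_subset x V))) hmap''
      (fun z hz => hinv z (hmem'' z hz)) (fun z hz => hw z (hmem'' z hz))
      (fun z hz h => heven z (hmem'' z hz) h)]
    ring

end Core

section MultisetHelpers

variable {α : Type*} [DecidableEq α]

lemma count_map_of_invol {s t : Multiset α} {r : α → α}
    (hs : ∀ a ∈ s, a ∈ t) (hinv : ∀ a ∈ t, r (r a) = a) {x : α} (hx : x ∈ t) :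
    (s.map r).count x = s.count (r x) := by
  rw [Multiset.count_map, Multiset.count_eq_card_filter_eq]
  congr 1
  apply Multiset.filter_congr
  intro a ha
  constructor
  · intro h
    rw [h, hinv a (hs a ha)]
  · intro h
    rw [← h, hinv x hx]

lemma count_finsetsum (A : Finset α) (c : α → ℕ) (y : α) :
    Multiset.count y (∑ x ∈ A, c x • ({x} : Multiset α)) = if y ∈ A then c y else 0 := by
  rw [show Multiset.count y (∑ x ∈ A, c x • ({x} : Multiset α)) =
      Multiset.countAddMonoidHom y (∑ x ∈ A, c x • ({x} : Multiset α)) from rfl,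
    map_sum (Multiset.countAddMonoidHom y) _ A]
  simp only [show ∀ s : Multiset α, Multiset.countAddMonoidHom y s = Multiset.count y s from
      fun s => congrFun (Multiset.coe_countAddMonoidHom y) s,
    Multiset.count_nsmul, Multiset.count_singleton]
  rw [Finset.sum_congr rfl (fun x _ => by rw [mul_ite, mul_one, mul_zero])]
  rw [Finset.sum_ite_eq A y c]

end MultisetHelpers

open UniqueFactorizationMonoid

/-- Let `f ∈ F_{q²}[λ]` (with `q` an odd prime power) be monic
self-reciprocal.  Assume there is a unique monic irreducible self-reciprocal
`Q₀ ∈ F_{q²}[λ]` whose multiplicity `m_{Q₀}(f)` in `f` is odd, and let `m` be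
odd with `1 ≤ m ≤ m_{Q₀}(f)`.  Then the square of the number of monic `U` with
`U·U* = f/Q₀^m` equals `∏ (1 + m_Q(f))` over all monic irreducible
`Q ∈ F_{q²}[λ]` with `Q(0) ≠ 0`, `Q ≠ Q*` and `Q ∣ f`. -/
theorem stmt9 (q : ℕ) (hq : ∃ p n : ℕ, p.Prime ∧ 0 < n ∧ q = p ^ n) (hodd : Odd q)
    {F : Type*} [Field F] [Fintype F] (hcard : Fintype.card F = q ^ 2)
    (f : Polynomial F) (hmonic : f.Monic) (h0 : f.coeff 0 ≠ 0) (hsr : recip2 q f = f)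
    (Q0 : Polynomial F) (hQ0monic : Q0.Monic) (hQ0irr : Irreducible Q0)
    (hQ00 : Q0.coeff 0 ≠ 0) (hQ0sr : recip2 q Q0 = Q0)
    (hQ0odd : Odd (multiplicity Q0 f))
    (huniq : ∀ Q : Polynomial F, Q.Monic → Irreducible Q → Q.coeff 0 ≠ 0 →
      recip2 q Q = Q → Odd (multiplicity Q f) → Q = Q0)
    (m : ℕ) (hmodd : Odd m) (hm1 : 1 ≤ m) (hm2 : m ≤ multiplicity Q0 f) :
    (Nat.card {U : Polynomial F | U.Monic ∧ U * recip2 q U = f / Q0 ^ m}) ^ 2 =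
      ∏ᶠ Q ∈ {Q : Polynomial F |
          Q.Monic ∧ Irreducible Q ∧ Q.coeff 0 ≠ 0 ∧ Q ≠ recip2 q Q ∧ Q ∣ f},
        (1 + multiplicity Q f) := by
  classical
  obtain ⟨p, n, hp, hn, hqpn⟩ := hq
  have hq1 : 1 < q := by
    rw [hqpn]
    calc 1 < p := hp.one_lt
    _ ≤ p ^ n := Nat.le_self_pow hn.ne' p
  have hq0 : q ≠ 0 := by omega
  -- characteristic and Frobenius
  haveI hring : CharP F (ringChar F) := ringChar.charP F
  obtain ⟨n', hp', hcard'⟩ := FiniteField.card F (ringChar F)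
  have hpr : p = ringChar F := by
    have h1 : Fintype.card F = p ^ (2 * n) := by
      rw [hcard, hqpn, ← pow_mul, mul_comm]
    have h2 : p ∣ ringChar F ^ (n' : ℕ) := by
      rw [← hcard', h1]
      exact dvd_pow_self p (by positivity)
    exact (Nat.prime_dvd_prime_iff_eq hp hp').mp (hp.dvd_of_dvd_pow h2)
  haveI hcharF : CharP F p := hpr ▸ hring
  haveI : ExpChar F p := ExpChar.prime hp
  set φ : F →+* F := iterateFrobenius F p n with hφdef
  have hφ : ∀ x : F, φ x = x ^ q := fun x => by
    rw [hφdef, iterateFrobenius_def, hqpn]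
  have hq2 : ∀ x : F, (x ^ q) ^ q = x := fun x => by
    rw [← pow_mul, ← sq, ← hcard]
    exact FiniteField.pow_card x
  -- basic data
  have hfne : f ≠ 0 := hmonic.ne_zero
  have hQ0ne : Q0 ≠ 0 := hQ0monic.ne_zero
  have multeq : ∀ Q : Polynomial F, Q.Monic → Irreducible Q → ∀ h : Polynomial F, h ≠ 0 →
      multiplicity Q h = (normalizedFactors h).count Q := by
    intro Q hQm hQi h hh
    exact multiplicity_eq_of_emultiplicity_eq_some (by
      rw [emultiplicity_eq_count_normalizedFactors hQi hh, hQm.normalize_eq_self])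
  have hdvd : Q0 ^ m ∣ f := by
    have hfin : FiniteMultiplicity Q0 f :=
      finiteMultiplicity_of_emultiplicity_eq_natCast (n := (normalizedFactors f).count Q0) (by
        rw [emultiplicity_eq_count_normalizedFactors hQ0irr hfne, hQ0monic.normalize_eq_self])
    exact pow_dvd_of_le_multiplicity hm2
  obtain ⟨g, hgf⟩ := hdvd
  have hQ0mmonic : (Q0 ^ m).Monic := hQ0monic.pow m
  have hgmonic : g.Monic := hQ0mmonic.of_mul_monic_left (hgf ▸ hmonic)
  have hgne : g ≠ 0 := hgmonic.ne_zero
  have hdivg : f / Q0 ^ m = g := by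
    rw [hgf, ← divByMonic_eq_div _ hQ0mmonic]
    exact mul_divByMonic_cancel_left g hQ0mmonic
  have hg0 : g.coeff 0 ≠ 0 := fun h => h0 (by rw [hgf, mul_coeff_zero, h, mul_zero])
  have hQ0m0 : (Q0 ^ m).coeff 0 ≠ 0 := fun h => h0 (by rw [hgf, mul_coeff_zero, h, zero_mul])
  have hrg : recip2 q g = g := by
    have h1 : recip2 q (Q0 ^ m * g) = recip2 q (Q0 ^ m) * recip2 q g :=
      recip2_mul hφ hQ0m0 hg0
    have h2 : recip2 q (Q0 ^ m) = Q0 ^ m := by rw [recip2_pow hφ hq0 hQ00, hQ0sr]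
    have h3 := hsr
    rw [hgf, h1, h2] at h3
    exact mul_left_cancel₀ (pow_ne_zero m hQ0ne) h3
  -- the multiset of prime factors of g
  have hmem_nf : ∀ h : Polynomial F, h.coeff 0 ≠ 0 →
      ∀ x ∈ normalizedFactors h, x.Monic ∧ Irreducible x ∧ x.coeff 0 ≠ 0 := by
    intro h hh0 x hx
    have hxirr := irreducible_of_normalized_factor x hx
    have hxnorm := normalize_normalized_factor x hx
    have hxmonic : x.Monic := by rw [← hxnorm]; exact monic_normalize hxirr.ne_zero
    obtain ⟨v, hv⟩ := dvd_of_mem_normalizedFactors hx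
    exact ⟨hxmonic, hxirr, fun hc => hh0 (by rw [hv, mul_coeff_zero, hc, zero_mul])⟩
  obtain ⟨t, htdef⟩ : ∃ t : Multiset (Polynomial F), t = normalizedFactors g := ⟨_, rfl⟩
  have hmem_t : ∀ x ∈ t, x.Monic ∧ Irreducible x ∧ x.coeff 0 ≠ 0 := by
    rw [htdef]; exact hmem_nf g hg0
  have hmonic_prod : ∀ s : Multiset (Polynomial F), (∀ x ∈ s, x.Monic) → s.prod.Monic := by
    intro s hs
    have := monic_multiset_prod_of_monic s id (fun x hx => hs x hx)
    rwa [Multiset.map_id] at this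
  have htprod : t.prod = g :=
    eq_of_monic_of_associated (hmonic_prod t (fun x hx => (hmem_t x hx).1)) hgmonic
      (by rw [htdef]; exact prod_normalizedFactors hgne)
  have hnf_prod : ∀ s : Multiset (Polynomial F), (∀ x ∈ s, x.Monic ∧ Irreducible x) →
      normalizedFactors s.prod = s := by
    intro s hs
    rw [normalizedFactors_prod_eq s (fun a ha => (hs a ha).2)]
    rw [Multiset.map_congr rfl (fun x hx => (hs x hx).1.normalize_eq_self), Multiset.map_id']
  have hrec_elt : ∀ x : Polynomial F, x.Monic → Irreducible x → x.coeff 0 ≠ 0 →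
      (recip2 q x).Monic ∧ Irreducible (recip2 q x) ∧ (recip2 q x).coeff 0 ≠ 0 := fun x hm hi hc =>
    ⟨recip2_monic hφ hm hc, recip2_irreducible hφ hq2 hm hc hi,
      recip2_coeff_zero_ne hφ hc hm.ne_zero⟩
  have hrt : t.map (recip2 q) = t := by
    have h1 : recip2 q g = (t.map (recip2 q)).prod := by
      have := recip2_multiset_prod hφ hq0 t (fun x hx => (hmem_t x hx).2.2)
      rwa [htprod] at this
    have h2 : normalizedFactors (recip2 q g) = t.map (recip2 q) := by
      rw [h1]
      apply hnf_prod
      intro x hx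
      obtain ⟨y, hy, rfl⟩ := Multiset.mem_map.mp hx
      obtain ⟨hm', hi', _⟩ :=
        hrec_elt y (hmem_t y hy).1 (hmem_t y hy).2.1 (hmem_t y hy).2.2
      exact ⟨hm', hi'⟩
    rw [← h2, hrg, htdef]
  have hinv_t : ∀ x ∈ t, recip2 q (recip2 q x) = x := fun x hx =>
    recip2_recip2 hφ hq2 (hmem_t x hx).1 (hmem_t x hx).2.2
  have hmap_t : ∀ x ∈ t, recip2 q x ∈ t := by
    intro x hx
    rw [← hrt]
    exact Multiset.mem_map_of_mem _ hx
  have hw_t : ∀ x ∈ t, t.count (recip2 q x) = t.count x := by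
    intro x hx
    conv_rhs => rw [← hrt]
    rw [count_map_of_invol (fun a ha => ha) hinv_t hx]
  -- multiplicities in f
  have hnff : normalizedFactors f = Multiset.replicate m Q0 + t := by
    rw [htdef, hgf, normalizedFactors_mul (pow_ne_zero m hQ0ne) hgne,
      hQ0irr.normalizedFactors_pow, hQ0monic.normalize_eq_self]
  have hmultf : ∀ x : Polynomial F, x.Monic → Irreducible x →
      multiplicity x f = (if x = Q0 then m else 0) + t.count x := by
    intro x hm hi
    rw [multeq x hm hi f hfne, hnff, Multiset.count_add, Multiset.count_replicate]
    congr 1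
    simp [eq_comm]
  have heven_t : ∀ x ∈ t.toFinset, recip2 q x = x → Even (t.count x) := by
    intro x hxf hfix
    have hx := Multiset.mem_toFinset.mp hxf
    obtain ⟨hm', hi', hc'⟩ := hmem_t x hx
    have hmf := hmultf x hm' hi'
    by_cases hxQ : x = Q0
    · rw [if_pos hxQ] at hmf
      rw [hxQ] at hmf
      rw [hmf] at hQ0odd
      obtain ⟨a, ha⟩ := hQ0odd
      obtain ⟨b, hb⟩ := hmodd
      rw [hxQ]
      exact ⟨a - b, by omega⟩
    · rw [if_neg hxQ, zero_add] at hmf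
      have hnotodd : ¬Odd (multiplicity x f) := fun hodd' =>
        hxQ (huniq x hm' hi' hc' hfix hodd')
      rw [Nat.not_odd_iff_even] at hnotodd
      rwa [hmf] at hnotodd
  -- the two equivalences
  have E0 : {U : Polynomial F | U.Monic ∧ U * recip2 q U = g} ≃
      {s : Multiset (Polynomial F) // s + s.map (recip2 q) = t} := by
    refine
      { toFun := fun U => ⟨normalizedFactors U.1, ?_⟩
        invFun := fun s => ⟨s.1.prod, ?_, ?_⟩
        left_inv := ?_
        right_inv := ?_ }
    · -- normalizedFactors U + map (recip2 q) = t
      obtain ⟨U, hUm, hUe⟩ := U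
      have hUne : U ≠ 0 := fun h => hgne (by rw [← hUe, h, zero_mul])
      have hU0 : U.coeff 0 ≠ 0 := fun h =>
        hg0 (by rw [← hUe, mul_coeff_zero, h, zero_mul])
      have hrUne : recip2 q U ≠ 0 := (recip2_monic hφ hUm hU0).ne_zero
      have hmemU := hmem_nf U hU0
      have hUprod : (normalizedFactors U).prod = U :=
        eq_of_monic_of_associated
          (hmonic_prod _ (fun x hx => (hmemU x hx).1)) hUm (prod_normalizedFactors hUne)
      have hrU : recip2 q U = ((normalizedFactors U).map (recip2 q)).prod := by
        have := recip2_multiset_prod hφ hq0 (normalizedFactors U)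
          (fun x hx => (hmemU x hx).2.2)
        rwa [hUprod] at this
      have hnfrU : normalizedFactors (recip2 q U) = (normalizedFactors U).map (recip2 q) := by
        rw [hrU]
        apply hnf_prod
        intro x hx
        obtain ⟨y, hy, rfl⟩ := Multiset.mem_map.mp hx
        obtain ⟨hm', hi', _⟩ :=
          hrec_elt y (hmemU y hy).1 (hmemU y hy).2.1 (hmemU y hy).2.2
        exact ⟨hm', hi'⟩
      have hteq : normalizedFactors U + normalizedFactors (recip2 q U) = t := by
        rw [htdef, ← hUe]
        exact (normalizedFactors_mul hUne hrUne).symm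
      rw [← hteq, hnfrU]
    · -- s.prod is monic
      exact hmonic_prod s.1 (fun x hx => (hmem_t x
        (Multiset.mem_of_le ((Multiset.le_add_right _ _).trans (le_of_eq s.2)) hx)).1)
    · -- s.prod * recip2 (s.prod) = g
      obtain ⟨s, hs⟩ := s
      have hsle : s ≤ t := (Multiset.le_add_right _ _).trans (le_of_eq hs)
      have hmems : ∀ x ∈ s, x.Monic ∧ Irreducible x ∧ x.coeff 0 ≠ 0 :=
        fun x hx => hmem_t x (Multiset.mem_of_le hsle hx)
      have h1 : recip2 q s.prod = (s.map (recip2 q)).prod :=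
        recip2_multiset_prod hφ hq0 s (fun x hx => (hmems x hx).2.2)
      simp only
      rw [h1, ← Multiset.prod_add, hs, htprod]
    · -- left inverse
      rintro ⟨U, hUm, hUe⟩
      apply Subtype.ext
      simp only
      have hUne : U ≠ 0 := fun h => hgne (by rw [← hUe, h, zero_mul])
      have hU0 : U.coeff 0 ≠ 0 := fun h =>
        hg0 (by rw [← hUe, mul_coeff_zero, h, zero_mul])
      exact eq_of_monic_of_associated
        (hmonic_prod _ (fun x hx => (hmem_nf U hU0 x hx).1)) hUm
        (prod_normalizedFactors hUne)
    · -- right inverse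
      rintro ⟨s, hs⟩
      apply Subtype.ext
      simp only
      have hsle : s ≤ t := (Multiset.le_add_right _ _).trans (le_of_eq hs)
      exact hnf_prod s (fun x hx =>
        ⟨(hmem_t x (Multiset.mem_of_le hsle hx)).1,
         (hmem_t x (Multiset.mem_of_le hsle hx)).2.1⟩)
  have E2 : {s : Multiset (Polynomial F) // s + s.map (recip2 q) = t} ≃
      CSet (recip2 q) (fun x => t.count x) t.toFinset := by
    refine
      { toFun := fun s => ⟨fun x => s.1.count x, ?_, ?_⟩
        invFun := fun c => ⟨∑ x ∈ t.toFinset, c.1 x • ({x} : Multiset (Polynomial F)), ?_⟩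
        left_inv := ?_
        right_inv := ?_ }
    · intro x hx
      refine Multiset.count_eq_zero.mpr (fun hmem => hx ?_)
      exact Multiset.mem_toFinset.mpr (Multiset.mem_of_le
        ((Multiset.le_add_right _ _).trans (le_of_eq s.2)) hmem)
    · intro x hx
      obtain ⟨s, hs⟩ := s
      have hsle : s ≤ t := (Multiset.le_add_right _ _).trans (le_of_eq hs)
      have h1 : (s + s.map (recip2 q)).count x = t.count x := by rw [hs]
      rw [Multiset.count_add] at h1
      rw [count_map_of_invol (fun a ha => Multiset.mem_of_le hsle ha) hinv_t
        (Multiset.mem_toFinset.mp hx)] at h1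
      exact h1
    · -- invFun property
      obtain ⟨c, hc1, hc2⟩ := c
      simp only
      set sc := ∑ x ∈ t.toFinset, c x • ({x} : Multiset (Polynomial F)) with hscdef
      have hcnt : ∀ y, sc.count y = c y := by
        intro y
        rw [hscdef, count_finsetsum]
        by_cases hy : y ∈ t.toFinset
        · rw [if_pos hy]
        · rw [if_neg hy, hc1 y hy]
      have hsub : ∀ a ∈ sc, a ∈ t := by
        intro a ha
        have : c a ≠ 0 := by rw [← hcnt a]; exact Multiset.count_ne_zero.mpr ha
        by_contra hnot
        exact this (hc1 a (fun hmem => hnot (Multiset.mem_toFinset.mp hmem)))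
      refine Multiset.ext.mpr (fun y => ?_)
      rw [Multiset.count_add, hcnt]
      by_cases hy : y ∈ t
      · rw [count_map_of_invol hsub hinv_t hy, hcnt]
        exact hc2 y (Multiset.mem_toFinset.mpr hy)
      · rw [Multiset.count_eq_zero.mpr (fun hmem => ?_), hc1 y (fun hmem =>
          hy (Multiset.mem_toFinset.mp hmem)), Multiset.count_eq_zero.mpr hy]
        obtain ⟨a, ha, rfl⟩ := Multiset.mem_map.mp hmem
        exact hy (hmap_t a (hsub a ha))
    · -- left inverse
      rintro ⟨s, hs⟩
      apply Subtype.ext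
      simp only
      have hsle : s ≤ t := (Multiset.le_add_right _ _).trans (le_of_eq hs)
      refine Multiset.ext.mpr (fun y => ?_)
      rw [count_finsetsum]
      by_cases hy : y ∈ t.toFinset
      · rw [if_pos hy]
      · rw [if_neg hy]
        exact (Multiset.count_eq_zero.mpr (fun hmem =>
          hy (Multiset.mem_toFinset.mpr (Multiset.mem_of_le hsle hmem)))).symm
    · -- right inverse
      rintro ⟨c, hc1, hc2⟩
      apply Subtype.ext
      funext y
      simp only
      rw [count_finsetsum]
      by_cases hy : y ∈ t.toFinset
      · rw [if_pos hy]
      · rw [if_neg hy, hc1 y hy]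
  -- the divisor set is the filtered finset
  have hDset : {Q : Polynomial F |
        Q.Monic ∧ Irreducible Q ∧ Q.coeff 0 ≠ 0 ∧ Q ≠ recip2 q Q ∧ Q ∣ f} =
      ↑(t.toFinset.filter fun x => ¬(recip2 q x = x)) := by
    ext Q
    simp only [Set.mem_setOf_eq, Finset.coe_filter, Multiset.mem_toFinset]
    constructor
    · rintro ⟨hQm, hQi, hQ0', hQne', hQdvd⟩
      have hQQ0 : Q ≠ Q0 := fun h => hQne' (by rw [h, hQ0sr])
      have hQprime : Prime Q := hQi.prime
      have hQg : Q ∣ g := by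
        rcases hQprime.dvd_or_dvd (hgf ▸ hQdvd) with h | h
        · exact absurd (eq_of_monic_of_associated hQm hQ0monic
            (hQi.associated_of_dvd hQ0irr (hQprime.dvd_of_dvd_pow h))) hQQ0
        · exact h
      have hmemQ : Q ∈ t := by
        by_contra hnot
        have hcnt0 : Multiset.count Q t = 0 := Multiset.count_eq_zero.mpr hnot
        have he : emultiplicity Q g = ((0 : ℕ) : ℕ∞) := by
          rw [emultiplicity_eq_count_normalizedFactors hQi hgne, hQm.normalize_eq_self,
            ← htdef, hcnt0]
        rw [Nat.cast_zero, emultiplicity_eq_zero] at he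
        exact he hQg
      exact ⟨hmemQ, fun h => hQne' h.symm⟩
    · rintro ⟨hQt, hQfix⟩
      obtain ⟨hm', hi', hc'⟩ := hmem_t Q hQt
      refine ⟨hm', hi', hc', fun h => hQfix h.symm, ?_⟩
      exact (dvd_of_mem_normalizedFactors (htdef ▸ hQt)).trans ⟨Q0 ^ m, by rw [hgf]; ring⟩
  have hfinal : ∏ x ∈ t.toFinset, (if ¬(recip2 q x = x) then 1 + multiplicity x f else 1) =
      ∏ x ∈ t.toFinset, (if recip2 q x = x then 1 else 1 + t.count x) := by
    apply Finset.prod_congr rfl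
    intro x hxf
    have hx := Multiset.mem_toFinset.mp hxf
    obtain ⟨hm', hi', hc'⟩ := hmem_t x hx
    by_cases hfix : recip2 q x = x
    · rw [if_neg (not_not_intro hfix), if_pos hfix]
    · rw [if_pos hfix, if_neg hfix]
      have hxQ0 : x ≠ Q0 := fun h => hfix (by rw [h, hQ0sr])
      rw [hmultf x hm' hi', if_neg hxQ0, zero_add]
  -- assemble
  rw [hdivg, hDset, finprod_mem_coe_finset, Finset.prod_filter, hfinal,
    Nat.card_congr (E0.trans E2)]
  exact core_count (recip2 q) (fun x => t.count x) t.toFinset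
    (fun x hx => Multiset.mem_toFinset.mpr (hmap_t x (Multiset.mem_toFinset.mp hx)))
    (fun x hx => hinv_t x (Multiset.mem_toFinset.mp hx))
    (fun x hx => hw_t x (Multiset.mem_toFinset.mp hx))
    heven_t
end

section
/- Fix an odd prime power q. Let V be a finite-dimensional F_q-vector space with a nondegenerate symmetric bilinear form B, and let g be an isometry of (V, B) whose minimal polynomial equals its characteristic polynomial f_g ∈ F_q[λ]. Then for every d ≥ 0, the map W ↦ (characteristic polynomial of g restricted to W) is a bijection from the set of d-dimensional g-stable totally isotropic F_q-subspaces W ⊆ V onto the set of monic polynomials U ∈ F_q[λ] of degree d such that U·U* divides f_g in F_q[λ]; the inverse map sends U to ker U(g). -/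
open Polynomial

section OrdTheory
variable {F V : Type*} [Field F] [AddCommGroup V] [Module F V]

/-- `a` generates the annihilator ideal of `v` under the `F[X]`-action given by `g`. -/
def IsOrd (g : Module.End F V) (v : V) (a : F[X]) : Prop :=
  ∀ p : F[X], (aeval g p) v = 0 ↔ a ∣ p

lemma exists_isOrd (g : Module.End F V) (v : V) : ∃ a, IsOrd g v a := by
  let I : Ideal F[X] :=
    { carrier := {p | (aeval g p) v = 0}
      add_mem' := fun {p q} hp hq => by
        simp only [Set.mem_setOf_eq, map_add, LinearMap.add_apply] at *
        rw [hp, hq, add_zero]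
      zero_mem' := by simp
      smul_mem' := fun c p hp => by
        simp only [Set.mem_setOf_eq, smul_eq_mul, map_mul, Module.End.mul_apply] at *
        rw [hp, map_zero] }
  obtain ⟨a, ha⟩ := IsPrincipalIdealRing.principal I
  refine ⟨a, fun p => ?_⟩
  have : (aeval g p) v = 0 ↔ p ∈ I := Iff.rfl
  rw [this, ha, Ideal.submodule_span_eq, Ideal.mem_span_singleton]

lemma IsOrd.dvd_of_aeval {g : Module.End F V} {v : V} {a : F[X]} (h : IsOrd g v a)
    {p : F[X]} (hp : (aeval g p) v = 0) : a ∣ p := (h p).mp hp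

lemma IsOrd.aeval_eq_zero {g : Module.End F V} {v : V} {a : F[X]} (h : IsOrd g v a)
    {p : F[X]} (hp : a ∣ p) : (aeval g p) v = 0 := (h p).mpr hp

lemma IsOrd.ne_zero [FiniteDimensional F V] {g : Module.End F V} {v : V} {a : F[X]}
    (h : IsOrd g v a) : a ≠ 0 := by
  intro h0
  have h1 : (aeval g (minpoly F g)) v = 0 := by rw [minpoly.aeval]; rfl
  have h2 := h.dvd_of_aeval h1
  rw [h0, zero_dvd_iff] at h2
  exact minpoly.ne_zero (LinearMap.isIntegral g) h2

lemma IsOrd.dvd_minpoly [FiniteDimensional F V] {g : Module.End F V} {v : V} {a : F[X]}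
    (h : IsOrd g v a) : a ∣ minpoly F g :=
  h.dvd_of_aeval (by rw [minpoly.aeval]; rfl)

/-- shifting: if `v` has order `c * e` then `c(g) v` has order `e`. -/
lemma IsOrd.shift {g : Module.End F V} {v : V} {c e : F[X]} (hc : c ≠ 0)
    (h : IsOrd g v (c * e)) : IsOrd g ((aeval g c) v) e := by
  intro p
  have : (aeval g p) ((aeval g c) v) = (aeval g (p * c)) v := by
    rw [map_mul]; rfl
  rw [this, h (p * c)]
  constructor
  · intro hd
    have : c * e ∣ c * p := by rwa [mul_comm p c] at hd
    exact (mul_dvd_mul_iff_left hc).mp this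
  · intro hd
    rw [mul_comm c e]
    exact mul_dvd_mul hd dvd_rfl

/-- coprime orders add. -/
lemma IsOrd.add {g : Module.End F V} {x y : V} {a b : F[X]}
    (hx : IsOrd g x a) (hy : IsOrd g y b) (hab : IsCoprime a b) :
    IsOrd g (x + y) (a * b) := by
  have key : ∀ (q : F[X]) (w : V), (aeval g q) w = 0 → ∀ r, (aeval g (q * r)) w = 0 := by
    intro q w hw r
    rw [mul_comm, map_mul, Module.End.mul_apply, hw, map_zero]
  intro p
  constructor
  · intro hp
    have hxb : (aeval g (p * b)) x = 0 := by
      have h1 : (aeval g (p * b)) (x + y) = 0 := key p _ hp b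
      have h2 : (aeval g (p * b)) y = 0 := hy.aeval_eq_zero (dvd_mul_left b p)
      rw [map_add, h2, add_zero] at h1
      exact h1
    have hya : (aeval g (p * a)) y = 0 := by
      have h1 : (aeval g (p * a)) (x + y) = 0 := key p _ hp a
      have h2 : (aeval g (p * a)) x = 0 := hx.aeval_eq_zero (dvd_mul_left a p)
      rw [map_add, h2, zero_add] at h1
      exact h1
    have ha : a ∣ p := hab.dvd_of_dvd_mul_right (hx.dvd_of_aeval hxb)
    have hb : b ∣ p := hab.symm.dvd_of_dvd_mul_right (hy.dvd_of_aeval hya)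
    exact hab.mul_dvd ha hb
  · intro hp
    have h1 : (aeval g p) x = 0 := hx.aeval_eq_zero ((dvd_mul_right a b).trans hp)
    have h2 : (aeval g p) y = 0 := hy.aeval_eq_zero ((dvd_mul_left b a).trans hp)
    rw [map_add, h1, h2, add_zero]

end OrdTheory

section MaxOrd
variable {F V : Type*} [Field F] [AddCommGroup V] [Module F V] [FiniteDimensional F V]

open UniqueFactorizationMonoid in
lemma exists_isOrd_minpoly (g : Module.End F V) : ∃ v, IsOrd g v (minpoly F g) := by
  classical
  have hμ0 : minpoly F g ≠ 0 := minpoly.ne_zero (LinearMap.isIntegral g)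
  set s : Set ℕ := {k | ∃ (v : V) (a : F[X]), IsOrd g v a ∧ a.natDegree = k} with hs
  have hne : s.Nonempty := by
    obtain ⟨a, ha⟩ := exists_isOrd g (0 : V)
    exact ⟨a.natDegree, 0, a, ha, rfl⟩
  have hbdd : BddAbove s := by
    refine ⟨(minpoly F g).natDegree, fun k hk => ?_⟩
    obtain ⟨v, a, ha, rfl⟩ := hk
    exact Polynomial.natDegree_le_of_dvd ha.dvd_minpoly hμ0
  obtain ⟨v, a, hva, hdeg⟩ := Nat.sSup_mem hne hbdd
  have ha0 : a ≠ 0 := hva.ne_zero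
  have hall : ∀ (w : V) (b : F[X]), IsOrd g w b → b ∣ a := by
    by_contra hc
    push_neg at hc
    obtain ⟨w, b, hwb, hnd⟩ := hc
    have hb0 : b ≠ 0 := hwb.ne_zero
    have hnle : ¬ (normalizedFactors b ≤ normalizedFactors a) := fun hle =>
      hnd ((dvd_iff_normalizedFactors_le_normalizedFactors hb0 ha0).mpr hle)
    obtain ⟨p, hcount⟩ : ∃ p, (normalizedFactors a).count p < (normalizedFactors b).count p := by
      by_contra hc2
      push_neg at hc2
      exact hnle (Multiset.le_iff_count.mpr fun x => hc2 x)
    have hpmem : p ∈ normalizedFactors b :=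
      Multiset.count_pos.mp (lt_of_le_of_lt (Nat.zero_le _) hcount)
    have hpirr : Irreducible p := irreducible_of_normalized_factor p hpmem
    have hpnorm : normalize p = p := normalize_normalized_factor p hpmem
    set i := (normalizedFactors a).count p with hi
    set j := (normalizedFactors b).count p with hj
    have hea : emultiplicity p a = i := by
      rw [emultiplicity_eq_count_normalizedFactors hpirr ha0, hpnorm]
    have heb : emultiplicity p b = j := by
      rw [emultiplicity_eq_count_normalizedFactors hpirr hb0, hpnorm]
    have hpj : p ^ j ∣ b := pow_dvd_of_le_emultiplicity (le_of_eq heb.symm)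
    have hpi : p ^ i ∣ a := pow_dvd_of_le_emultiplicity (le_of_eq hea.symm)
    obtain ⟨b2, hb2⟩ := hpj
    obtain ⟨a2, ha2⟩ := hpi
    have ha20 : a2 ≠ 0 := fun h => ha0 (by rw [ha2, h, mul_zero])
    have hb20 : b2 ≠ 0 := fun h => hb0 (by rw [hb2, h, mul_zero])
    have hnotp : ¬ p ∣ a2 := by
      intro hdvd
      have : p ^ (i + 1) ∣ a := by
        obtain ⟨a3, ha3⟩ := hdvd
        exact ⟨a3, by rw [ha2, ha3, pow_succ, mul_assoc]⟩
      have := le_emultiplicity_of_pow_dvd this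
      rw [hea] at this
      exact absurd (by exact_mod_cast this) (by omega)
    -- construct an element of strictly larger order
    have hordx : IsOrd g ((aeval g (p ^ i)) v) a2 := by
      refine IsOrd.shift (pow_ne_zero _ hpirr.ne_zero) ?_
      rwa [← ha2]
    have hordy : IsOrd g ((aeval g b2) w) (p ^ j) := by
      refine IsOrd.shift hb20 ?_
      rwa [mul_comm, ← hb2]
    have hcop : IsCoprime a2 (p ^ j) :=
      (((hpirr.coprime_iff_not_dvd).mpr hnotp).symm).pow_right
    have hordz : IsOrd g _ (a2 * p ^ j) := hordx.add hordy hcop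
    have hmem : (a2 * p ^ j).natDegree ∈ s := ⟨_, _, hordz, rfl⟩
    have hle : (a2 * p ^ j).natDegree ≤ sSup s := le_csSup hbdd hmem
    have hdega : a.natDegree = i * p.natDegree + a2.natDegree := by
      rw [ha2, Polynomial.natDegree_mul (pow_ne_zero _ hpirr.ne_zero) ha20,
        Polynomial.natDegree_pow]
    have hdegz : (a2 * p ^ j).natDegree = a2.natDegree + j * p.natDegree := by
      rw [Polynomial.natDegree_mul ha20 (pow_ne_zero _ hpirr.ne_zero),
        Polynomial.natDegree_pow]
    have hppos : 0 < p.natDegree :=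
      Polynomial.natDegree_pos_iff_degree_pos.mpr (Polynomial.degree_pos_of_irreducible hpirr)
    rw [← hdeg] at hle
    have hij : i + 1 ≤ j := hcount
    have : i * p.natDegree + p.natDegree ≤ j * p.natDegree := by
      calc i * p.natDegree + p.natDegree = (i + 1) * p.natDegree := by ring
      _ ≤ j * p.natDegree := Nat.mul_le_mul_right _ hij
    omega
  -- a is associated to the minimal polynomial
  have haev : aeval g a = 0 := by
    ext w
    obtain ⟨c, hc⟩ := exists_isOrd g w
    exact hc.aeval_eq_zero (hall w c hc)
  have h1 : minpoly F g ∣ a := minpoly.dvd F g haev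
  have h2 : a ∣ minpoly F g := hva.dvd_minpoly
  have hassoc : Associated a (minpoly F g) := associated_of_dvd_dvd h2 h1
  exact ⟨v, fun p => by rw [hva p, (Associated.dvd_iff_dvd_left hassoc)]⟩

end MaxOrd

section Cyclic
variable {F V : Type*} [Field F] [AddCommGroup V] [Module F V] [FiniteDimensional F V]

open Module

/-- The evaluation-at-`v` linear map `p ↦ p(g) v`. -/
noncomputable def aevalAt (g : Module.End F V) (v : V) : F[X] →ₗ[F] V where
  toFun p := (aeval g p) v
  map_add' p q := by simp
  map_smul' c p := by simp

@[simp] lemma aevalAt_apply (g : Module.End F V) (v : V) (p : F[X]) :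
    aevalAt g v p = (aeval g p) v := rfl

lemma aevalAt_surjective {g : Module.End F V} {v : V}
    (hv : IsOrd g v (minpoly F g)) (hdeg : (minpoly F g).natDegree = finrank F V) :
    Function.Surjective (aevalAt g v) := by
  set n := finrank F V
  set L : Polynomial.degreeLT F n →ₗ[F] V := (aevalAt g v).comp (Polynomial.degreeLT F n).subtype
    with hL
  have hinj : Function.Injective L := by
    rw [← LinearMap.ker_eq_bot]
    rw [LinearMap.ker_eq_bot']
    rintro ⟨p, hp⟩ hp0
    have h1 : (aeval g p) v = 0 := hp0
    have h2 : minpoly F g ∣ p := hv.dvd_of_aeval h1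
    have hp' : p = 0 := by
      by_contra hpne
      have := Polynomial.natDegree_le_of_dvd h2 hpne
      have hlt : p.natDegree < n :=
        (Polynomial.natDegree_lt_iff_degree_lt hpne).mpr (Polynomial.mem_degreeLT.mp hp)
      omega
    exact Subtype.ext hp'
  have hrank : finrank F (LinearMap.range L) = n := by
    rw [LinearMap.finrank_range_of_inj hinj, (Polynomial.degreeLTEquiv F n).finrank_eq]
    simp
  have htop : LinearMap.range L = ⊤ := Submodule.eq_top_of_finrank_eq hrank
  intro x
  have : x ∈ LinearMap.range L := htop ▸ Submodule.mem_top
  obtain ⟨p, hp⟩ := this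
  exact ⟨(p : F[X]), hp⟩

lemma ker_aeval_eq_range_aeval {g : Module.End F V} {v : V}
    (hv : IsOrd g v (minpoly F g)) (hdeg : (minpoly F g).natDegree = finrank F V)
    {e h : F[X]} (he : e ≠ 0) (hmul : e * h = minpoly F g) :
    LinearMap.ker (aeval g e) = LinearMap.range ((aeval g h) : Module.End F V) := by
  apply le_antisymm
  · intro x hx
    rw [LinearMap.mem_ker] at hx
    obtain ⟨q, hq⟩ := aevalAt_surjective hv hdeg x
    rw [aevalAt_apply] at hq
    have h1 : (aeval g (e * q)) v = 0 := by
      rw [map_mul, Module.End.mul_apply, hq, hx]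
    have h2 : minpoly F g ∣ e * q := hv.dvd_of_aeval h1
    rw [← hmul] at h2
    have h3 : h ∣ q := (mul_dvd_mul_iff_left he).mp h2
    obtain ⟨s, hs⟩ := h3
    refine ⟨(aeval g s) v, ?_⟩
    rw [← hq, hs, map_mul, Module.End.mul_apply]
  · rintro x ⟨y, rfl⟩
    rw [LinearMap.mem_ker, ← Module.End.mul_apply, ← map_mul, hmul, minpoly.aeval]
    rfl

lemma finrank_ker_aeval_of_dvd {g : Module.End F V} {v : V}
    (hv : IsOrd g v (minpoly F g)) (hdeg : (minpoly F g).natDegree = finrank F V)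
    {e h : F[X]} (he : e ≠ 0) (hh : h ≠ 0) (hmul : e * h = minpoly F g) :
    finrank F (LinearMap.ker (aeval g e)) = e.natDegree := by
  set n := finrank F V
  -- lower bound construction
  have lower : ∀ (e' h' : F[X]), e' ≠ 0 → h' ≠ 0 → e' * h' = minpoly F g →
      e'.natDegree ≤ finrank F (LinearMap.ker (aeval g e')) := by
    intro e' h' he' hh' hmul'
    set Ψ : Polynomial.degreeLT F e'.natDegree →ₗ[F] V :=
      { toFun := fun p => (aeval g (h' * (p : F[X]))) v
        map_add' := fun p q => by
          simp [mul_add]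
        map_smul' := fun c p => by
          simp [Algebra.mul_smul_comm] } with hΨ
    have hinj : Function.Injective Ψ := by
      rw [← LinearMap.ker_eq_bot, LinearMap.ker_eq_bot']
      rintro ⟨p, hp⟩ hp0
      have h1 : (aeval g (h' * p)) v = 0 := hp0
      have h2 : minpoly F g ∣ h' * p := hv.dvd_of_aeval h1
      rw [← hmul', mul_comm e' h'] at h2
      have h3 : e' ∣ p := (mul_dvd_mul_iff_left hh').mp h2
      have hp' : p = 0 := by
        by_contra hpne
        have := Polynomial.natDegree_le_of_dvd h3 hpne
        have hlt : p.natDegree < e'.natDegree :=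
          (Polynomial.natDegree_lt_iff_degree_lt hpne).mpr (Polynomial.mem_degreeLT.mp hp)
        omega
      exact Subtype.ext hp'
    have hle : LinearMap.range Ψ ≤ LinearMap.ker (aeval g e') := by
      rintro x ⟨⟨p, hp⟩, rfl⟩
      rw [LinearMap.mem_ker]
      show (aeval g e') ((aeval g (h' * p)) v) = 0
      rw [← Module.End.mul_apply, ← map_mul, ← mul_assoc, hmul']
      exact hv.aeval_eq_zero (dvd_mul_right _ _)
    calc e'.natDegree = finrank F (LinearMap.range Ψ) := by
          rw [LinearMap.finrank_range_of_inj hinj, (Polynomial.degreeLTEquiv F _).finrank_eq]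
          simp
      _ ≤ finrank F (LinearMap.ker (aeval g e')) := Submodule.finrank_mono hle
  have h1 : finrank F (LinearMap.ker (aeval g e)) +
      finrank F (LinearMap.range ((aeval g e) : Module.End F V)) = n := by
    have := LinearMap.finrank_range_add_finrank_ker ((aeval g e : Module.End F V))
    omega
  have h2 : LinearMap.ker (aeval g h) = LinearMap.range ((aeval g e) : Module.End F V) :=
    ker_aeval_eq_range_aeval hv hdeg hh (by rwa [mul_comm])
  have h3 : e.natDegree + h.natDegree = n := by
    have := Polynomial.natDegree_mul he hh
    rw [hmul, hdeg] at this
    omega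
  have l1 := lower e h he hh hmul
  have l2 := lower h e hh he (by rwa [mul_comm])
  rw [← h2] at h1
  omega

lemma ker_aeval_eq_ker_gcd (g : Module.End F V) (p : F[X]) :
    letI := Classical.decEq F[X]
    LinearMap.ker (aeval g p) =
      LinearMap.ker (aeval g (EuclideanDomain.gcd p (minpoly F g))) := by
  letI := Classical.decEq F[X]
  apply le_antisymm
  · intro x hx
    rw [LinearMap.mem_ker] at hx ⊢
    rw [EuclideanDomain.gcd_eq_gcd_ab p (minpoly F g)]
    have h1 : (aeval g (p * EuclideanDomain.gcdA p (minpoly F g))) x = 0 := by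
      rw [mul_comm, map_mul, Module.End.mul_apply, hx, map_zero]
    have h2 : (aeval g ((minpoly F g) * EuclideanDomain.gcdB p (minpoly F g))) x = 0 := by
      rw [mul_comm, map_mul, Module.End.mul_apply]
      have : (aeval g (minpoly F g)) x = 0 := by rw [minpoly.aeval]; rfl
      rw [this, map_zero]
    rw [map_add, LinearMap.add_apply, h1, h2, add_zero]
  · intro x hx
    rw [LinearMap.mem_ker] at hx ⊢
    obtain ⟨t, ht⟩ := EuclideanDomain.gcd_dvd_left p (minpoly F g)
    rw [ht, mul_comm, map_mul, Module.End.mul_apply, hx, map_zero]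

lemma finrank_ker_aeval_eq_gcd {g : Module.End F V} {v : V}
    (hv : IsOrd g v (minpoly F g)) (hdeg : (minpoly F g).natDegree = finrank F V)
    (p : F[X]) (hp : p ≠ 0) :
    letI := Classical.decEq F[X]
    finrank F (LinearMap.ker (aeval g p)) =
      (EuclideanDomain.gcd p (minpoly F g)).natDegree := by
  letI := Classical.decEq F[X]
  have hμ0 : minpoly F g ≠ 0 := minpoly.ne_zero (LinearMap.isIntegral g)
  set e := EuclideanDomain.gcd p (minpoly F g) with he'
  have he : e ≠ 0 := fun h => hp ((EuclideanDomain.gcd_eq_zero_iff).mp h).1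
  have hd : e ∣ minpoly F g := EuclideanDomain.gcd_dvd_right p (minpoly F g)
  have hmul : e * (minpoly F g / e) = minpoly F g := EuclideanDomain.mul_div_cancel' he hd
  have hh : (minpoly F g / e) ≠ 0 := by
    intro h0
    rw [h0, mul_zero] at hmul
    exact hμ0 hmul.symm
  rw [ker_aeval_eq_ker_gcd g p]
  exact finrank_ker_aeval_of_dvd hv hdeg he hh hmul

/-- the kernel of `p(g)` has dimension at most `deg p`. -/
lemma finrank_ker_aeval_le {g : Module.End F V} {v : V}
    (hv : IsOrd g v (minpoly F g)) (hdeg : (minpoly F g).natDegree = finrank F V)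
    (p : F[X]) (hp : p ≠ 0) :
    finrank F (LinearMap.ker (aeval g p)) ≤ p.natDegree := by
  letI := Classical.decEq F[X]
  rw [finrank_ker_aeval_eq_gcd hv hdeg p hp]
  exact Polynomial.natDegree_le_of_dvd (EuclideanDomain.gcd_dvd_left _ _) hp

/-- if a subspace of `ker p(g)` already has dimension `deg p`, it is all of `ker p(g)`,
and `p` divides the minimal polynomial. -/
lemma ker_aeval_eq_of_le {g : Module.End F V} {v : V}
    (hv : IsOrd g v (minpoly F g)) (hdeg : (minpoly F g).natDegree = finrank F V)
    {p : F[X]} (hp : p ≠ 0) {W : Submodule F V} (hle : W ≤ LinearMap.ker (aeval g p))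
    (hrk : finrank F W = p.natDegree) :
    LinearMap.ker (aeval g p) = W ∧ p ∣ minpoly F g := by
  letI := Classical.decEq F[X]
  set e := EuclideanDomain.gcd p (minpoly F g) with he'
  have hbig : p.natDegree ≤ finrank F (LinearMap.ker (aeval g p)) := by
    rw [← hrk]
    exact Submodule.finrank_mono hle
  have heq : finrank F (LinearMap.ker (aeval g p)) = e.natDegree :=
    finrank_ker_aeval_eq_gcd hv hdeg p hp
  have hdvdp : e ∣ p := EuclideanDomain.gcd_dvd_left _ _
  have hled : e.natDegree ≤ p.natDegree :=
    Polynomial.natDegree_le_of_dvd hdvdp hp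
  have hrkeq : finrank F (LinearMap.ker (aeval g p)) = p.natDegree := by omega
  constructor
  · exact (Submodule.eq_of_le_of_finrank_le hle (by omega)).symm
  · -- p is associated to e, which divides the minimal polynomial
    obtain ⟨c, hc⟩ := hdvdp
    have he0 : e ≠ 0 := fun h => hp (by rw [hc, h, zero_mul])
    have hc0 : c ≠ 0 := fun h => hp (by rw [hc, h, mul_zero])
    have hcdeg : c.natDegree = 0 := by
      have := Polynomial.natDegree_mul he0 hc0
      rw [← hc] at this
      omega
    obtain ⟨u, hu⟩ : ∃ u : F, c = Polynomial.C u := ⟨c.coeff 0,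
      (Polynomial.eq_C_of_natDegree_eq_zero hcdeg)⟩
    have hu0 : u ≠ 0 := fun h => hc0 (by rw [hu, h, map_zero])
    have hpe : p ∣ e := by
      refine ⟨Polynomial.C u⁻¹, ?_⟩
      rw [hc, hu, mul_assoc, ← Polynomial.C_mul, mul_inv_cancel₀ hu0, Polynomial.C_1, mul_one]
    exact hpe.trans (EuclideanDomain.gcd_dvd_right _ _)

end Cyclic

section Adjoint
variable {F V : Type*} [Field F] [AddCommGroup V] [Module F V]

/-- adjointness propagates from an operator pair to polynomials in them. -/
lemma bilin_aeval_adjoint (B : LinearMap.BilinForm F V) {e e' : Module.End F V}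
    (h : ∀ x y, B (e x) y = B x (e' y)) (p : F[X]) (x y : V) :
    B ((aeval e p) x) y = B x ((aeval e' p) y) := by
  have hpow : ∀ (k : ℕ) (x y : V), B ((e ^ k) x) y = B x ((e' ^ k) y) := by
    intro k
    induction k with
    | zero => intro x y; simp
    | succ k ih =>
      intro x y
      rw [pow_succ, Module.End.mul_apply, ih (e x) y, h, pow_succ', Module.End.mul_apply]
  rw [aeval_eq_sum_range (R := F) (p := p) e, aeval_eq_sum_range (R := F) (p := p) e']
  simp only [LinearMap.sum_apply, LinearMap.smul_apply, map_sum, map_smul, smul_eq_mul]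
  exact Finset.sum_congr rfl fun i _ => by rw [hpow]

end Adjoint

section Reverse
variable {F V : Type*} [Field F] [AddCommGroup V] [Module F V]

lemma aeval_reflect_eq (g : V ≃ₗ[F] V) (N : ℕ) (f : F[X]) (hf : f.natDegree ≤ N) :
    aeval (g : Module.End F V) (Polynomial.reflect N f) =
      ((g : Module.End F V) ^ N) * aeval ((g.symm : Module.End F V)) f := by
  set G : Module.End F V := (g : Module.End F V)
  set Gi : Module.End F V := (g.symm : Module.End F V)
  have hGGi : G * Gi = 1 := by ext x; simp [G, Gi]
  have hGiG : Gi * G = 1 := by ext x; simp [G, Gi]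
  have hcomm : Commute G Gi := by unfold Commute SemiconjBy; rw [hGGi, hGiG]
  have hkey : ∀ n : ℕ, n ≤ N → G ^ N * Gi ^ n = G ^ (N - n) := by
    intro n hn
    have h1 : G ^ N = G ^ (N - n) * G ^ n := by rw [← pow_add, Nat.sub_add_cancel hn]
    rw [h1, mul_assoc, ← hcomm.mul_pow, hGGi, one_pow, mul_one]
  refine Polynomial.induction_with_natDegree_le
    (fun f => aeval G (Polynomial.reflect N f) = (G ^ N) * aeval Gi f) N ?_ ?_ ?_ f hf
  · simp
  · intro n r hr hn
    rw [Polynomial.reflect_C_mul_X_pow, Polynomial.revAt_le hn]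
    rw [map_mul, map_mul, aeval_X_pow, aeval_X_pow, aeval_C, aeval_C]
    rw [← mul_assoc, (Algebra.commutes r (G ^ N)).symm, mul_assoc, hkey n hn]
  · intro p q hpq hqN hp hq
    rw [Polynomial.reflect_add, map_add, map_add, hp, hq, mul_add]

end Reverse

section RecipLemmas
variable {F : Type*} [Field F]

lemma recip_def (U : Polynomial F) : recip U = Polynomial.C (U.coeff 0)⁻¹ * U.reverse := rfl

lemma recip_natDegree {U : Polynomial F} (h0 : U.coeff 0 ≠ 0) :
    (recip U).natDegree = U.natDegree := by
  have hU0 : U ≠ 0 := fun h => h0 (by rw [h, Polynomial.coeff_zero])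
  have htr : U.natTrailingDegree = 0 := Polynomial.natTrailingDegree_eq_zero.mpr (Or.inr h0)
  rw [recip_def, Polynomial.natDegree_C_mul (inv_ne_zero h0), Polynomial.reverse_natDegree, htr,
    Nat.sub_zero]

lemma recip_monic_s11 {U : Polynomial F} (hU : U.Monic) (h0 : U.coeff 0 ≠ 0) :
    (recip U).Monic := by
  have htr : U.natTrailingDegree = 0 := Polynomial.natTrailingDegree_eq_zero.mpr (Or.inr h0)
  unfold Polynomial.Monic
  rw [recip_def, Polynomial.leadingCoeff_mul, Polynomial.leadingCoeff_C,
    Polynomial.reverse_leadingCoeff, Polynomial.trailingCoeff, htr]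
  exact inv_mul_cancel₀ h0

lemma recip_coeff_zero_s11 {U : Polynomial F} (hU : U.Monic) :
    (recip U).coeff 0 = (U.coeff 0)⁻¹ := by
  rw [recip_def, Polynomial.mul_coeff_zero, Polynomial.coeff_C_zero,
    Polynomial.coeff_zero_reverse, hU.leadingCoeff, mul_one]

lemma recip_mul {U W : Polynomial F} (hU0 : U.coeff 0 ≠ 0) (hW0 : W.coeff 0 ≠ 0) :
    recip (U * W) = recip U * recip W := by
  rw [recip_def, recip_def, recip_def, Polynomial.mul_coeff_zero, mul_inv,
    Polynomial.reverse_mul_of_domain, Polynomial.C_mul]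
  ring

lemma reverse_reverse {U : Polynomial F} (h0 : U.coeff 0 ≠ 0) :
    U.reverse.reverse = U := by
  have htr : U.natTrailingDegree = 0 := Polynomial.natTrailingDegree_eq_zero.mpr (Or.inr h0)
  have hd : U.reverse.natDegree = U.natDegree := by
    rw [Polynomial.reverse_natDegree, htr, Nat.sub_zero]
  show Polynomial.reflect (U.reverse.natDegree) (Polynomial.reflect U.natDegree U) = U
  rw [hd]
  ext n
  rw [Polynomial.coeff_reflect, Polynomial.coeff_reflect, Polynomial.revAt_invol]

lemma recip_recip_s11 {U : Polynomial F} (hU : U.Monic) (h0 : U.coeff 0 ≠ 0) :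
    recip (recip U) = U := by
  rw [recip_def (recip U), recip_coeff_zero_s11 hU, inv_inv, recip_def,
    Polynomial.reverse_mul_of_domain, Polynomial.reverse_C, reverse_reverse h0,
    ← mul_assoc, ← Polynomial.C_mul, mul_inv_cancel₀ h0, Polynomial.C_1, one_mul]

end RecipLemmas

section Restrict
variable {F V : Type*} [Field F] [AddCommGroup V] [Module F V]
open Polynomial

lemma aeval_restrict_apply (g : Module.End F V) {W : Submodule F V}
    (hW : ∀ x ∈ W, g x ∈ W) (p : F[X]) (x : V) (hx : x ∈ W) :
    ((aeval (g.restrict hW) p) ⟨x, hx⟩ : V) = (aeval g p) x := by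
  induction p using Polynomial.induction_on' with
  | add p q hp hq =>
    rw [map_add, map_add, LinearMap.add_apply, LinearMap.add_apply, Submodule.coe_add, hp, hq]
  | monomial n a =>
    rw [aeval_monomial, aeval_monomial, Module.End.mul_apply, Module.End.mul_apply,
      Module.algebraMap_end_apply, Module.algebraMap_end_apply, Module.End.pow_restrict n hW,
      SetLike.val_smul, LinearMap.restrict_coe_apply]

end Restrict

section MoreHelpers
variable {F V : Type*} [Field F] [AddCommGroup V] [Module F V]

lemma monic_eq_of_dvd_of_natDegree_le {p q : Polynomial F} (hp : p.Monic) (hq : q.Monic)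
    (hdvd : p ∣ q) (hle : q.natDegree ≤ p.natDegree) : p = q := by
  obtain ⟨c, rfl⟩ := hdvd
  have hc0 : c ≠ 0 := fun h => hq.ne_zero (by rw [h, mul_zero])
  have hdeg := Polynomial.natDegree_mul hp.ne_zero hc0
  have hcdeg : c.natDegree = 0 := by omega
  have hc : c = Polynomial.C (c.coeff 0) := Polynomial.eq_C_of_natDegree_eq_zero hcdeg
  have hlc : p.leadingCoeff * c.leadingCoeff = 1 := by
    rw [← Polynomial.leadingCoeff_mul]; exact hq
  rw [hp.leadingCoeff, one_mul, hc, Polynomial.leadingCoeff_C] at hlc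
  rw [hc, hlc, Polynomial.C_1, mul_one]

lemma aeval_recip_eq (g : V ≃ₗ[F] V) (U : Polynomial F) :
    aeval (g : Module.End F V) (recip U) =
      (U.coeff 0)⁻¹ • (((g : Module.End F V) ^ U.natDegree) *
        aeval ((g.symm : Module.End F V)) U) := by
  rw [recip_def, map_mul, aeval_C, Algebra.algebraMap_eq_smul_one]
  have : (Polynomial.reverse U) = Polynomial.reflect U.natDegree U := rfl
  rw [this, aeval_reflect_eq g U.natDegree U le_rfl, smul_mul_assoc, one_mul]

/-- polynomials in `g` commute with powers of `g.symm`. -/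
lemma aeval_commute_symm_pow (g : V ≃ₗ[F] V) (p : Polynomial F) (k : ℕ) :
    Commute (aeval (g : Module.End F V) p) (((g.symm : Module.End F V)) ^ k) := by
  set G : Module.End F V := (g : Module.End F V)
  set Gi : Module.End F V := (g.symm : Module.End F V)
  have hGGi : G * Gi = 1 := by ext x; simp [G, Gi]
  have hGiG : Gi * G = 1 := by ext x; simp [G, Gi]
  have hAG : (aeval G p) * G = G * (aeval G p) := by
    have h1 : G * aeval G p = aeval G (Polynomial.X * p) := by rw [map_mul, aeval_X]
    have h2 : (aeval G p) * G = aeval G (p * Polynomial.X) := by rw [map_mul, aeval_X]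
    rw [h1, h2, mul_comm p Polynomial.X]
  have hA : Commute (aeval G p) Gi := by
    unfold Commute SemiconjBy
    set A := aeval G p
    calc A * Gi = 1 * (A * Gi) := (one_mul _).symm
      _ = (Gi * G) * (A * Gi) := by rw [hGiG]
      _ = Gi * (G * A * Gi) := by rw [mul_assoc Gi G (A * Gi), ← mul_assoc G A Gi]
      _ = Gi * (A * G * Gi) := by rw [← hAG]
      _ = Gi * (A * (G * Gi)) := by rw [mul_assoc A G Gi]
      _ = Gi * A := by rw [hGGi, mul_one]
  exact hA.pow_right k

end MoreHelpers


open Module in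
/-- Let `V` be a finite-dimensional space over `F_q` (`q` odd)
with a nondegenerate symmetric bilinear form `B`, and `g` an isometry whose
minimal polynomial equals its characteristic polynomial `f_g`.  Then for every
`d ≥ 0`, the map `W ↦ charpoly (g|_W)` is a bijection from the `d`-dimensional
`g`-stable totally isotropic subspaces of `V` onto the monic `U` of degree `d`
with `U·U* ∣ f_g`; its inverse sends `U` to `ker U(g)`. -/
theorem stmt11 {F V : Type*} [Field F] [Fintype F] (hodd : Odd (Fintype.card F))
    [AddCommGroup V] [Module F V] [FiniteDimensional F V]
    (B : LinearMap.BilinForm F V) (hsymm : ∀ x y : V, B x y = B y x)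
    (hnd : B.Nondegenerate)
    (g : V ≃ₗ[F] V) (hg : ∀ x y : V, B (g x) (g y) = B x y)
    (fg : Polynomial F) (hfg : fg = LinearMap.charpoly (g : Module.End F V))
    (hcyc : minpoly F (g : Module.End F V) = fg)
    (d : ℕ) :
    -- the map `W ↦ charpoly (g|_W)` lands in the target set, and
    -- `ker (charpoly (g|_W))(g) = W` (so the map is injective):
    (∀ (W : Submodule F V) (hW : ∀ x ∈ W, (g : Module.End F V) x ∈ W),
      (∀ x ∈ W, ∀ y ∈ W, B x y = 0) → Module.finrank F W = d →
      (LinearMap.charpoly (LinearMap.restrict (g : Module.End F V) hW)).Monic ∧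
      (LinearMap.charpoly (LinearMap.restrict (g : Module.End F V) hW)).natDegree = d ∧
      LinearMap.charpoly (LinearMap.restrict (g : Module.End F V) hW) *
          recip (LinearMap.charpoly (LinearMap.restrict (g : Module.End F V) hW)) ∣ fg ∧
      LinearMap.ker (Polynomial.aeval (g : Module.End F V)
          (LinearMap.charpoly (LinearMap.restrict (g : Module.End F V) hW))) = W) ∧
    -- conversely, for every monic `U` of degree `d` with `U·U* ∣ f_g`, the
    -- subspace `ker U(g)` is a `d`-dimensional `g`-stable totally isotropic
    -- subspace whose image under the above map is `U` (so the map is surjective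
    -- with inverse `U ↦ ker U(g)`):
    (∀ U : Polynomial F, U.Monic → U.natDegree = d → U * recip U ∣ fg →
      (∀ x ∈ LinearMap.ker (Polynomial.aeval (g : Module.End F V) U),
        (g : Module.End F V) x ∈ LinearMap.ker (Polynomial.aeval (g : Module.End F V) U)) ∧
      (∀ x ∈ LinearMap.ker (Polynomial.aeval (g : Module.End F V) U),
        ∀ y ∈ LinearMap.ker (Polynomial.aeval (g : Module.End F V) U), B x y = 0) ∧
      Module.finrank F (LinearMap.ker (Polynomial.aeval (g : Module.End F V) U)) = d ∧
      ∀ hK : ∀ x ∈ LinearMap.ker (Polynomial.aeval (g : Module.End F V) U),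
          (g : Module.End F V) x ∈ LinearMap.ker (Polynomial.aeval (g : Module.End F V) U),
        LinearMap.charpoly (LinearMap.restrict (g : Module.End F V) hK) = U) := by
  have hμ : minpoly F (g : Module.End F V) = fg := hcyc
  have hmonic : fg.Monic := by rw [hfg]; exact LinearMap.charpoly_monic _
  have hfgne : fg ≠ 0 := hmonic.ne_zero
  have hdegfg : fg.natDegree = finrank F V := by
    rw [hfg]; exact LinearMap.charpoly_natDegree (f := (g : Module.End F V))
  have hdeg : (minpoly F (g : Module.End F V)).natDegree = finrank F V := by rw [hμ, hdegfg]
  obtain ⟨v, hv⟩ := exists_isOrd_minpoly (g : Module.End F V)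
  -- the constant coefficient of `fg` is nonzero
  have hfg0 : fg.coeff 0 ≠ 0 := by
    intro h0
    obtain ⟨s, hs⟩ := Polynomial.X_dvd_iff.mpr h0
    have hsne : s ≠ 0 := fun h => hfgne (by rw [hs, h, mul_zero])
    have hz : aeval (g : Module.End F V) fg = 0 := by rw [← hμ]; exact minpoly.aeval F _
    rw [hs, map_mul, aeval_X] at hz
    have hz2 : aeval (g : Module.End F V) s = 0 := by
      ext x
      have h1 : (g : Module.End F V) ((aeval (g : Module.End F V) s) x) = 0 := by
        rw [← Module.End.mul_apply, hz]; rfl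
      simp only [LinearEquiv.coe_coe] at h1
      have := g.injective (a₁ := (aeval (g : Module.End F V) s) x) (a₂ := 0)
        (by rw [h1, map_zero])
      rw [this]; rfl
    have hdvd : fg ∣ s := by rw [← hμ]; exact minpoly.dvd F _ hz2
    have h1 := Polynomial.natDegree_le_of_dvd hdvd hsne
    have h2 : fg.natDegree = 1 + s.natDegree := by
      rw [hs, Polynomial.natDegree_mul Polynomial.X_ne_zero hsne, Polynomial.natDegree_X]
    omega
  -- adjointness
  have hGadj : ∀ x y, B ((g : Module.End F V) x) y = B x ((g.symm : Module.End F V) y) := by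
    intro x y
    have h1 := hg x (g.symm y)
    rwa [g.apply_symm_apply] at h1
  have hGiadj : ∀ x y, B ((g.symm : Module.End F V) x) y = B x ((g : Module.End F V) y) := by
    intro x y
    have h1 := hg (g.symm x) y
    rw [g.apply_symm_apply] at h1
    exact h1.symm
  have adjp := bilin_aeval_adjoint B hGadj
  have adjpi := bilin_aeval_adjoint B hGiadj
  -- stability of kernels of polynomials in g
  have stab : ∀ (p : Polynomial F) (x : V), x ∈ LinearMap.ker (aeval (g : Module.End F V) p) →
      (g : Module.End F V) x ∈ LinearMap.ker (aeval (g : Module.End F V) p) := by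
    intro p x hx
    rw [LinearMap.mem_ker] at hx ⊢
    have h1 : (aeval (g : Module.End F V) p) * (g : Module.End F V) =
        (g : Module.End F V) * (aeval (g : Module.End F V) p) := by
      have e1 : (g : Module.End F V) * aeval (g : Module.End F V) p =
          aeval (g : Module.End F V) (Polynomial.X * p) := by rw [map_mul, aeval_X]
      have e2 : aeval (g : Module.End F V) p * (g : Module.End F V) =
          aeval (g : Module.End F V) (p * Polynomial.X) := by rw [map_mul, aeval_X]
      rw [e1, e2, mul_comm p Polynomial.X]
    calc (aeval (g : Module.End F V) p) ((g : Module.End F V) x)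
        = ((aeval (g : Module.End F V) p) * (g : Module.End F V)) x := rfl
      _ = ((g : Module.End F V) * (aeval (g : Module.End F V) p)) x := by rw [h1]
      _ = (g : Module.End F V) ((aeval (g : Module.End F V) p) x) := rfl
      _ = 0 := by rw [hx, map_zero]
  -- charpoly of the restriction to a full kernel
  have charpoly_ker : ∀ (U : Polynomial F), U ≠ 0 → U.Monic →
      finrank F (LinearMap.ker (aeval (g : Module.End F V) U)) = U.natDegree →
      ∀ (hK : ∀ x ∈ LinearMap.ker (aeval (g : Module.End F V) U),
          (g : Module.End F V) x ∈ LinearMap.ker (aeval (g : Module.End F V) U)),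
        LinearMap.charpoly (LinearMap.restrict (g : Module.End F V) hK) = U := by
    intro U hUne hUm hfr hK
    set r := LinearMap.restrict (g : Module.End F V) hK with hr
    have step1 : aeval r U = 0 := by
      ext x
      have h1 := aeval_restrict_apply (g : Module.End F V) hK U x.1 x.2
      simp only [Subtype.coe_eta] at h1
      have h2 : (aeval (g : Module.End F V) U) x.1 = 0 := x.2
      show (((aeval r) U) x : V) = ((0 : Module.End F _) x : V)
      rw [h1, h2]
      rfl
    have step2 : minpoly F r ∣ U := minpoly.dvd F r step1
    have mne : minpoly F r ≠ 0 := fun h => hUne (zero_dvd_iff.mp (h ▸ step2))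
    have mmon : (minpoly F r).Monic := minpoly.monic (LinearMap.isIntegral r)
    have step3 : LinearMap.ker (aeval (g : Module.End F V) U) ≤
        LinearMap.ker (aeval (g : Module.End F V) (minpoly F r)) := by
      intro x hx
      rw [LinearMap.mem_ker]
      have h1 := aeval_restrict_apply (g : Module.End F V) hK (minpoly F r) x hx
      rw [minpoly.aeval] at h1
      rw [← h1]
      rfl
    have step4 : U.natDegree ≤ (minpoly F r).natDegree := by
      have h1 := Submodule.finrank_mono step3
      have h2 := finrank_ker_aeval_le hv hdeg (minpoly F r) mne
      omega
    have step5 : minpoly F r = U := monic_eq_of_dvd_of_natDegree_le mmon hUm step2 step4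
    have c1 : (LinearMap.charpoly r).Monic := LinearMap.charpoly_monic r
    have c2 : (LinearMap.charpoly r).natDegree = U.natDegree := by
      rw [LinearMap.charpoly_natDegree, ← hfr]
    have c3 : minpoly F r ∣ LinearMap.charpoly r :=
      minpoly.dvd F r (LinearMap.aeval_self_charpoly r)
    rw [step5] at c3
    exact (monic_eq_of_dvd_of_natDegree_le hUm c1 c3 (le_of_eq c2)).symm
  constructor
  · -- part 1
    intro W hW hiso hrank
    set r := LinearMap.restrict (g : Module.End F V) hW with hr
    set U := LinearMap.charpoly r with hU
    have hUm : U.Monic := LinearMap.charpoly_monic r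
    have hUd : U.natDegree = d := by rw [hU, LinearMap.charpoly_natDegree]; exact hrank
    have hUne : U ≠ 0 := hUm.ne_zero
    have hle : W ≤ LinearMap.ker (aeval (g : Module.End F V) U) := by
      intro x hx
      rw [LinearMap.mem_ker]
      have h1 := aeval_restrict_apply (g : Module.End F V) hW U x hx
      rw [LinearMap.aeval_self_charpoly] at h1
      rw [← h1]
      rfl
    obtain ⟨hker, hUdvdμ⟩ := ker_aeval_eq_of_le hv hdeg hUne hle (by rw [hUd, hrank])
    have hUdvdfg : U ∣ fg := by rw [← hμ]; exact hUdvdμ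
    refine ⟨hUm, hUd, ?_, hker⟩
    obtain ⟨h, hh⟩ := hUdvdfg
    have hhne : h ≠ 0 := fun h0 => hfgne (by rw [hh, h0, mul_zero])
    have hU0 : U.coeff 0 ≠ 0 := fun h0 => hfg0 (by
      rw [hh, Polynomial.mul_coeff_zero, h0, zero_mul])
    have hh0 : h.coeff 0 ≠ 0 := fun h0 => hfg0 (by
      rw [hh, Polynomial.mul_coeff_zero, h0, mul_zero])
    have hmulμ : U * h = minpoly F (g : Module.End F V) := by rw [hμ]; exact hh.symm
    have hrange : LinearMap.ker (aeval (g : Module.End F V) U) =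
        LinearMap.range ((aeval (g : Module.End F V) h) : Module.End F V) :=
      ker_aeval_eq_range_aeval hv hdeg hUne hmulμ
    have hisok : ∀ z w : V,
        B ((aeval (g : Module.End F V) h) z) ((aeval (g : Module.End F V) h) w) = 0 := by
      intro z w
      have hm1 : (aeval (g : Module.End F V) h) z ∈ W := by
        rw [← hker, hrange]; exact ⟨z, rfl⟩
      have hm2 : (aeval (g : Module.End F V) h) w ∈ W := by
        rw [← hker, hrange]; exact ⟨w, rfl⟩
      exact hiso _ hm1 _ hm2
    have hzero : ∀ w : V,
        (aeval ((g.symm : Module.End F V)) h) ((aeval (g : Module.End F V) h) w) = 0 := by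
      intro w
      apply hnd.1
      intro z
      rw [hsymm]
      rw [← adjp h z]
      exact hisok z w
    have hGGi1 : ((g : Module.End F V) ^ h.natDegree) *
        ((g.symm : Module.End F V) ^ h.natDegree) = 1 := by
      have hGGi : (g : Module.End F V) * (g.symm : Module.End F V) = 1 := by
        ext x; simp
      have hGiG : (g.symm : Module.End F V) * (g : Module.End F V) = 1 := by
        ext x; simp
      have hcomm : Commute ((g : Module.End F V)) ((g.symm : Module.End F V)) := by
        unfold Commute SemiconjBy; rw [hGGi, hGiG]
      rw [← hcomm.mul_pow, hGGi, one_pow]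
    have hrhh : aeval (g : Module.End F V) (h.reverse * h) = 0 := by
      ext w
      have e1 : (aeval (g : Module.End F V) (h.reverse * h)) w =
          (aeval (g : Module.End F V) h.reverse) ((aeval (g : Module.End F V) h) w) := by
        rw [map_mul]; rfl
      have e2 : aeval (g : Module.End F V) h.reverse =
          ((g : Module.End F V) ^ h.natDegree) * aeval ((g.symm : Module.End F V)) h :=
        aeval_reflect_eq g h.natDegree h le_rfl
      rw [e1, e2, Module.End.mul_apply, hzero w, map_zero]
      rfl
    have hdvd2 : fg ∣ h.reverse * h := by rw [← hμ]; exact minpoly.dvd F _ hrhh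
    obtain ⟨s, hs⟩ := hdvd2
    have hrevrecip : h.reverse = Polynomial.C (h.coeff 0) * recip h := by
      rw [recip_def, ← mul_assoc, ← Polynomial.C_mul, mul_inv_cancel₀ hh0, Polynomial.C_1,
        one_mul]
    rw [hrevrecip, hh] at hs
    have h2 : Polynomial.C (h.coeff 0) * recip h = U * s := by
      have h3 : (Polynomial.C (h.coeff 0) * recip h) * h = (U * s) * h := by
        rw [hs]; ring
      exact mul_right_cancel₀ hhne h3
    have hUdvdrecip : U ∣ recip h := by
      refine ⟨Polynomial.C (h.coeff 0)⁻¹ * s, ?_⟩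
      calc recip h = Polynomial.C (h.coeff 0)⁻¹ * (Polynomial.C (h.coeff 0) * recip h) := by
            rw [← mul_assoc, ← Polynomial.C_mul, inv_mul_cancel₀ hh0, Polynomial.C_1, one_mul]
        _ = Polynomial.C (h.coeff 0)⁻¹ * (U * s) := by rw [h2]
        _ = U * (Polynomial.C (h.coeff 0)⁻¹ * s) := by ring
    obtain ⟨t, ht⟩ := hUdvdrecip
    have hmonich : h.Monic := hUm.of_mul_monic_left (by rw [← hh]; exact hmonic)
    have hrh0 : (recip h).coeff 0 ≠ 0 := by
      rw [recip_coeff_zero_s11 hmonich]; exact inv_ne_zero hh0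
    have ht0 : t.coeff 0 ≠ 0 := fun h0 => hrh0 (by
      rw [ht, Polynomial.mul_coeff_zero, h0, mul_zero])
    have hfinal : h = recip U * recip t := by
      rw [← recip_recip_s11 hmonich hh0, ht, recip_mul hU0 ht0]
    rw [hh]
    exact mul_dvd_mul_left U ⟨recip t, hfinal⟩
  · -- part 2
    intro U hUm hUd hUdvd
    have hUdvdfg : U ∣ fg := dvd_trans (dvd_mul_right U (recip U)) hUdvd
    obtain ⟨h, hh⟩ := hUdvdfg
    have hUne : U ≠ 0 := hUm.ne_zero
    have hhne : h ≠ 0 := fun h0 => hfgne (by rw [hh, h0, mul_zero])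
    have hU0 : U.coeff 0 ≠ 0 := fun h0 => hfg0 (by
      rw [hh, Polynomial.mul_coeff_zero, h0, zero_mul])
    have hmulμ : U * h = minpoly F (g : Module.End F V) := by rw [hμ]; exact hh.symm
    have hfr : finrank F (LinearMap.ker (aeval (g : Module.End F V) U)) = U.natDegree :=
      finrank_ker_aeval_of_dvd hv hdeg hUne hhne hmulμ
    refine ⟨fun x hx => stab U x hx, ?_, by rw [hfr, hUd], fun hK => charpoly_ker U hUne hUm hfr hK⟩
    -- isotropy
    intro x hx y hy
    have hrange : LinearMap.ker (aeval (g : Module.End F V) U) =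
        LinearMap.range ((aeval (g : Module.End F V) h) : Module.End F V) :=
      ker_aeval_eq_range_aeval hv hdeg hUne hmulμ
    have hrecipdvdh : recip U ∣ h := by
      rw [hh] at hUdvd
      exact (mul_dvd_mul_iff_left hUne).mp hUdvd
    obtain ⟨s, hs⟩ := hrecipdvdh
    have hxr : x ∈ LinearMap.range ((aeval (g : Module.End F V) h) : Module.End F V) :=
      hrange ▸ hx
    obtain ⟨z, hz⟩ := hxr
    have hxw : x = (aeval (g : Module.End F V) (recip U)) ((aeval (g : Module.End F V) s) z) := by
      rw [← hz, hs, map_mul]; rfl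
    set w := (aeval (g : Module.End F V) s) z with hw
    rw [hxw, aeval_recip_eq g U]
    show (B (((U.coeff 0)⁻¹ • (((g : Module.End F V) ^ U.natDegree) *
        aeval ((g.symm : Module.End F V)) U)) w)) y = 0
    rw [LinearMap.smul_apply, LinearMap.map_smul₂, smul_eq_mul]
    have e2 : ∀ u : V, B (((g : Module.End F V) ^ U.natDegree) u) y =
        B u (((g.symm : Module.End F V) ^ U.natDegree) y) := by
      intro u
      have h3 := adjp (Polynomial.X ^ U.natDegree) u y
      rwa [aeval_X_pow, aeval_X_pow] at h3
    rw [Module.End.mul_apply, e2]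
    rw [adjpi U w]
    have e3 : (aeval (g : Module.End F V) U) (((g.symm : Module.End F V) ^ U.natDegree) y) =
        ((g.symm : Module.End F V) ^ U.natDegree) ((aeval (g : Module.End F V) U) y) := by
      have h4 := (aeval_commute_symm_pow g U U.natDegree).eq
      calc (aeval (g : Module.End F V) U) (((g.symm : Module.End F V) ^ U.natDegree) y)
          = ((aeval (g : Module.End F V) U) * ((g.symm : Module.End F V) ^ U.natDegree)) y := rfl
        _ = (((g.symm : Module.End F V) ^ U.natDegree) * (aeval (g : Module.End F V) U)) y := by
            rw [h4]
        _ = ((g.symm : Module.End F V) ^ U.natDegree) ((aeval (g : Module.End F V) U) y) := rfl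
    rw [e3]
    have hy0 : (aeval (g : Module.End F V) U) y = 0 := hy
    rw [hy0, map_zero, map_zero, mul_zero]
end
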